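/- arXiv:2505.13779 — 4 statements merged into one kernel-verified Lean document; each statement's English description precedes it below -/
import Mathlib

section
/- Assume c(δ) = 0, and set Φ_c⁺ = Φ⁺ ∩ R_c. Call α ∈ Φ_c⁺ minimal if it cannot be written as a sum of two elements of Φ_c⁺, and maximal if α + γ ∉ Φ_c⁺ for every γ ∈ Φ_c⁺. Then Σ_c = {minimal elements of Φ_c⁺} ∪ {δ} ∪ {δ − α : α a maximal element of Φ_c⁺}. -/
open Finset

namespace AffineRoots

/-- The vertex set `I = {0,1,…,r}` of the graph. -/
abbrev I (r : ℕ) := Fin (r + 1)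

/-- The root lattice `Q = ℤ^I`. -/
abbrev Q (r : ℕ) := I r → ℤ

variable (r : ℕ)

/-- The standard basis vector (simple root) `e_i` of `Q`. -/
def e (i : I r) : Q r := Pi.single i 1

/-- The Cartan pairing matrix `(e_i, e_j) = 2·[i=j] − a_{ij}` attached to a graph with
`a i j` edges between `i` and `j`. -/
def cartan (a : I r → I r → ℕ) (i j : I r) : ℤ :=
  (if i = j then 2 else 0) - (a i j : ℤ)

/-- The symmetric bilinear form on `Q` determined by the Cartan pairing. -/
def B (a : I r → I r → ℕ) (α β : Q r) : ℤ :=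
  ∑ i, ∑ j, α i * cartan r a i j * β j

/-- The reflection `s_i(α) = α − (α,e_i)·e_i`. -/
def refl (a : I r → I r → ℕ) (i : I r) (α : Q r) : Q r :=
  α - B r a α (e r i) • e r i

/-- The Weyl group `W`: the group of bijections of `Q` generated by the reflections. -/
def W (a : I r → I r → ℕ) : Subgroup (Equiv.Perm (Q r)) :=
  Subgroup.closure {σ | ∃ i : I r, ∀ α, σ α = refl r a i α}

/-- The support of `α` is connected in the graph. -/
def SuppConnected (a : I r → I r → ℕ) (α : Q r) : Prop :=
  ∀ i j : I r, α i ≠ 0 → α j ≠ 0 →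
    Relation.ReflTransGen (fun x y => α x ≠ 0 ∧ α y ≠ 0 ∧ 0 < a x y) i j

/-- The fundamental region `F`: nonzero `α ∈ ℕ^I` with connected support and
`(α,e_i) ≤ 0` for all `i`. -/
def Fund (a : I r → I r → ℕ) : Set (Q r) :=
  {α | α ≠ 0 ∧ (∀ i, 0 ≤ α i) ∧ SuppConnected r a α ∧ ∀ i, B r a α (e r i) ≤ 0}

/-- The real roots: the `W`-orbits of the basis vectors. -/
def RealRoots (a : I r → I r → ℕ) : Set (Q r) :=
  {α | ∃ σ ∈ W r a, ∃ i, α = σ (e r i)}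

/-- The imaginary roots: `W·F` and its negative. -/
def ImRoots (a : I r → I r → ℕ) : Set (Q r) :=
  {α | ∃ σ ∈ W r a, ∃ β ∈ Fund r a, α = σ β ∨ α = -(σ β)}

/-- The root system `R`, consisting of all real and imaginary roots. -/
def Roots (a : I r → I r → ℕ) : Set (Q r) := RealRoots r a ∪ ImRoots r a

/-- The positive roots `R⁺ = R ∩ ℕ^I`. -/
def PosRoots (a : I r → I r → ℕ) : Set (Q r) :=
  {α ∈ Roots r a | ∀ i, 0 ≤ α i}

/-- `R_c = {α ∈ R : c(α) = 0}`. -/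
def Rc (a : I r → I r → ℕ) (c : Q r →ₗ[ℤ] ℂ) : Set (Q r) :=
  {α ∈ Roots r a | c α = 0}

/-- `R_c⁺ = R_c ∩ R⁺`. -/
def RcPos (a : I r → I r → ℕ) (c : Q r →ₗ[ℤ] ℂ) : Set (Q r) :=
  Rc r a c ∩ PosRoots r a

/-- `Δ(c)`: the minimal elements of `R_c⁺`, i.e. those which cannot be written as a sum
of two elements of `R_c⁺`. -/
def Dc (a : I r → I r → ℕ) (c : Q r →ₗ[ℤ] ℂ) : Set (Q r) :=
  {α ∈ RcPos r a c | ¬ ∃ β ∈ RcPos r a c, ∃ γ ∈ RcPos r a c, α = β + γ}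

/-- The hypotheses characterizing a simply laced affine Dynkin graph, together with the
distinguished imaginary root `δ`: the graph (with `a i j` edges between `i` and `j`) is
symmetric, loopless and connected; the Cartan form is positive semidefinite; and the
radical of the form is `ℤδ`, where `δ` has positive coordinates and `δ_0 = 1`. -/
structure AffineData (a : I r → I r → ℕ) (δ : Q r) : Prop where
  symm : ∀ i j, a i j = a j i
  noloops : ∀ i, a i i = 0
  connected : ∀ i j : I r, Relation.ReflTransGen (fun x y => 0 < a x y) i j
  posSemidef : ∀ α : Q r, 0 ≤ B r a α α
  delta_pos : ∀ i, 0 < δ i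
  delta_zero : δ 0 = 1
  radical : ∀ α : Q r, (∀ β, B r a α β = 0) ↔ ∃ n : ℤ, α = n • δ

end AffineRoots

namespace AffineRoots

/-- `p(α) = 1 − (1/2)(α,α)`, valued in `ℚ`. -/
def p (r : ℕ) (a : I r → I r → ℕ) (α : Q r) : ℚ :=
  1 - (B r a α α : ℚ) / 2

/-- `Σ_c`: the set of `α ∈ R_c⁺` such that `p(α) > p(β⁽¹⁾) + ⋯ + p(β⁽ᵏ⁾)` for every
decomposition `α = β⁽¹⁾ + ⋯ + β⁽ᵏ⁾` with `k ≥ 2` and all `β⁽ⁱ⁾ ∈ R_c⁺`. -/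
def Sc (r : ℕ) (a : I r → I r → ℕ) (c : Q r →ₗ[ℤ] ℂ) : Set (Q r) :=
  {α ∈ RcPos r a c |
    ∀ (k : ℕ) (f : Fin k → Q r), 2 ≤ k → (∀ t, f t ∈ RcPos r a c) →
      α = ∑ t, f t → ∑ t, p r a (f t) < p r a α}

/-- `Φ_c⁺ = Φ⁺ ∩ R_c`, where `Φ⁺ = Φ ∩ R⁺` and `Φ = {α ∈ R : α_0 = 0}`. -/
def PhicPos (r : ℕ) (a : I r → I r → ℕ) (c : Q r →ₗ[ℤ] ℂ) : Set (Q r) :=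
  ({α ∈ Roots r a | α 0 = 0} ∩ PosRoots r a) ∩ Rc r a c

/-- `α ∈ Φ_c⁺` is minimal if it cannot be written as a sum of two elements of `Φ_c⁺`. -/
def PhicMin (r : ℕ) (a : I r → I r → ℕ) (c : Q r →ₗ[ℤ] ℂ) : Set (Q r) :=
  {α ∈ PhicPos r a c |
    ¬ ∃ β ∈ PhicPos r a c, ∃ γ ∈ PhicPos r a c, α = β + γ}

/-- `α ∈ Φ_c⁺` is maximal if `α + γ ∉ Φ_c⁺` for every `γ ∈ Φ_c⁺`. -/
def PhicMax (r : ℕ) (a : I r → I r → ℕ) (c : Q r →ₗ[ℤ] ℂ) : Set (Q r) :=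
  {α ∈ PhicPos r a c | ∀ γ ∈ PhicPos r a c, α + γ ∉ PhicPos r a c}

end AffineRoots

namespace AffineRoots

variable {r}
variable {a : I r → I r → ℕ}

lemma B_add_right (α β γ : Q r) : B r a α (β + γ) = B r a α β + B r a α γ := by
  simp only [B, Pi.add_apply, mul_add, Finset.sum_add_distrib]

lemma B_add_left (α β γ : Q r) : B r a (α + β) γ = B r a α γ + B r a β γ := by
  simp only [B, Pi.add_apply, add_mul, Finset.sum_add_distrib]

lemma B_smul_right (n : ℤ) (α β : Q r) : B r a α (n • β) = n * B r a α β := by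
  simp only [B, Pi.smul_apply, smul_eq_mul, Finset.mul_sum]
  refine Finset.sum_congr rfl fun i _ => Finset.sum_congr rfl fun j _ => by ring

lemma B_smul_left (n : ℤ) (α β : Q r) : B r a (n • α) β = n * B r a α β := by
  simp only [B, Pi.smul_apply, smul_eq_mul, Finset.mul_sum]
  refine Finset.sum_congr rfl fun i _ => Finset.sum_congr rfl fun j _ => by ring

lemma B_neg_right (α β : Q r) : B r a α (-β) = - B r a α β := by
  simp only [B, Pi.neg_apply, mul_neg, Finset.sum_neg_distrib]

lemma B_sub_right (α β γ : Q r) : B r a α (β - γ) = B r a α β - B r a α γ := by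
  simp only [B, Pi.sub_apply, mul_sub, Finset.sum_sub_distrib]

lemma B_sub_left (α β γ : Q r) : B r a (α - β) γ = B r a α γ - B r a β γ := by
  simp only [B, Pi.sub_apply, sub_mul, Finset.sum_sub_distrib]

lemma B_symm (hs : ∀ i j, a i j = a j i) (α β : Q r) : B r a α β = B r a β α := by
  rw [B, B, Finset.sum_comm]
  refine Finset.sum_congr rfl fun i _ => Finset.sum_congr rfl fun j _ => ?_
  have : cartan r a j i = cartan r a i j := by
    simp only [cartan, hs i j]
    by_cases h : i = j <;> simp [h, eq_comm]
  rw [this]; ring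

lemma B_sum_right (α : Q r) {ι : Type*} (S : Finset ι) (f : ι → Q r) :
    B r a α (∑ t ∈ S, f t) = ∑ t ∈ S, B r a α (f t) := by
  classical
  induction S using Finset.induction_on with
  | empty => simp [B]
  | @insert t s ht ih => rw [Finset.sum_insert ht, Finset.sum_insert ht, B_add_right, ih]

lemma B_e_right (α : Q r) (i : I r) : B r a α (e r i) = ∑ k, α k * cartan r a k i := by
  rw [B]
  refine Finset.sum_congr rfl fun k _ => ?_
  rw [Finset.sum_eq_single i]
  · simp [e, Pi.single_apply]
  · intro j _ hj; simp [e, Pi.single_apply, hj]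
  · simp

lemma B_self_eq (v : Q r) : B r a v v = ∑ i, v i * B r a v (e r i) := by
  simp only [B_e_right]
  rw [B, Finset.sum_comm]
  refine Finset.sum_congr rfl fun i _ => ?_
  rw [Finset.mul_sum]
  refine Finset.sum_congr rfl fun k _ => by ring

lemma B_e_e (i j : I r) : B r a (e r i) (e r j) = cartan r a i j := by
  rw [B_e_right, Finset.sum_eq_single i]
  · simp [e, Pi.single_apply]
  · intro k _ hk; simp [e, Pi.single_apply, hk]
  · simp

lemma B_e_self (hl : ∀ i, a i i = 0) (i : I r) : B r a (e r i) (e r i) = 2 := by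
  rw [B_e_e]; simp [cartan, hl i]

lemma B_even (hs : ∀ i j, a i j = a j i) (hl : ∀ i, a i i = 0) (v : Q r) :
    2 ∣ B r a v v := by
  set N := ∑ i, (v i).natAbs with hN
  clear_value N
  induction N using Nat.strong_induction_on generalizing v with
  | _ N ih =>
  by_cases h0 : ∀ i, v i = 0
  · have : B r a v v = 0 := by
      rw [B]
      refine Finset.sum_eq_zero fun i _ => Finset.sum_eq_zero fun j _ => by rw [h0 i]; ring
    simp [this]
  · push_neg at h0
    obtain ⟨i, hi⟩ := h0
    set s : ℤ := if 0 < v i then 1 else -1 with hsdef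
    set v' : Q r := v - s • e r i with hv'
    have he : v = v' + s • e r i := by rw [hv']; abel
    have hii : v' i = v i - s := by
      simp [hv', e, Pi.single_apply]
    have habs : ∀ j, j ≠ i → v' j = v j := by
      intro j hj; simp [hv', e, Pi.single_apply, hj]
    have hstep : (v' i).natAbs < (v i).natAbs := by
      rw [hii, hsdef]
      rcases lt_trichotomy (v i) 0 with h | h | h
      · rw [if_neg (by omega)]; omega
      · exact absurd h hi
      · rw [if_pos h]; omega
    have hlt : ∑ j, (v' j).natAbs < N := by
      rw [hN]
      refine Finset.sum_lt_sum (fun j _ => ?_) ⟨i, Finset.mem_univ i, hstep⟩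
      by_cases hji : j = i
      · subst hji; exact hstep.le
      · rw [habs j hji]
    have ihv := ih _ hlt v' rfl
    have hexp : B r a v v = B r a v' v' + s * B r a v' (e r i) + s * B r a (e r i) v' + s * s * 2 := by
      rw [he, B_add_left, B_add_right, B_add_right, B_smul_left, B_smul_right, B_smul_left,
        B_smul_right, B_e_self hl]
      ring
    have hsym : B r a (e r i) v' = B r a v' (e r i) := B_symm hs _ _
    rw [hexp, hsym]
    have hs2 : s * s = 1 := by rw [hsdef]; split <;> norm_num
    obtain ⟨m, hm⟩ := ihv
    exact ⟨m + s * B r a v' (e r i) + 1, by rw [hm, hs2]; ring⟩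


section Main
variable {δ : Q r} (h : AffineData r a δ)

include h

/-- a vector of norm zero is in the radical hence a multiple of δ. -/
lemma norm_zero_radical (v : Q r) (hv : B r a v v = 0) : ∃ n : ℤ, v = n • δ := by
  rw [← h.radical]
  intro β
  by_contra hne
  set x := B r a v β with hx
  have key : ∀ n : ℤ, 0 ≤ B r a β β + 2 * n * x := by
    intro n
    have := h.posSemidef (β + n • v)
    have hexp : B r a (β + n • v) (β + n • v)
        = B r a β β + 2 * n * x := by
      simp only [B_add_left, B_add_right, B_smul_left, B_smul_right]
      rw [hv, B_symm h.symm β v, ← hx]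
      ring
    linarith [this, hexp.symm.le]
  have h1 := key (-(B r a β β + 1) * x)
  have hx2 : 1 ≤ x * x := by
    rcases lt_trichotomy x 0 with hx0 | hx0 | hx0
    · nlinarith
    · exact absurd hx0 hne
    · nlinarith
  have hb : 0 ≤ B r a β β := h.posSemidef β
  nlinarith [h1]

lemma B_delta (β : Q r) : B r a δ β = 0 := by
  have := (h.radical δ).mpr ⟨1, by simp⟩
  exact this β

lemma B_delta' (β : Q r) : B r a β δ = 0 := by
  rw [B_symm h.symm]; exact B_delta h β

/-- Cauchy-Schwarz style inequality for a norm-2 vector. -/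
lemma cs_two (v β : Q r) (hv : B r a v v = 2) :
    (B r a v β) ^ 2 ≤ 2 * B r a β β := by
  set x := B r a v β with hx
  have := h.posSemidef (x • v - (2 : ℤ) • β)
  have hexp : B r a (x • v - (2:ℤ) • β) (x • v - (2:ℤ) • β)
      = 4 * B r a β β - 2 * x ^ 2 := by
    simp only [B_sub_left, B_sub_right, B_smul_left, B_smul_right]
    rw [hv, B_symm h.symm β v, ← hx]
    ring
  nlinarith [this, hexp]

/-- Every element of the Weyl group is additive, preserves B and fixes δ. -/
lemma W_props : ∀ σ ∈ W r a,
    (∀ x y : Q r, σ (x + y) = σ x + σ y) ∧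
    (∀ x y : Q r, B r a (σ x) (σ y) = B r a x y) ∧ σ δ = δ := by
  intro σ hσ
  refine Subgroup.closure_induction ?_ ?_ ?_ ?_ hσ
  · rintro σ ⟨i, hi⟩
    have hr : ∀ α, σ α = α - B r a α (e r i) • e r i := fun α => hi α
    refine ⟨?_, ?_, ?_⟩
    · intro x y
      rw [hr, hr, hr, B_add_left]
      funext j
      simp only [Pi.sub_apply, Pi.add_apply, Pi.smul_apply, smul_eq_mul]
      ring
    · intro x y
      rw [hr, hr, B_sub_left, B_sub_right, B_sub_right, B_smul_left, B_smul_right,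
        B_smul_left, B_smul_right, B_e_self h.noloops, B_symm h.symm (e r i) y]
      ring
    · rw [hr, B_delta h]
      simp
  · exact ⟨fun x y => rfl, fun x y => rfl, rfl⟩
  · rintro σ τ _ _ ⟨ha1, hb1, hd1⟩ ⟨ha2, hb2, hd2⟩
    refine ⟨fun x y => ?_, fun x y => ?_, ?_⟩
    · simp only [Equiv.Perm.mul_apply, ha2, ha1]
    · simp only [Equiv.Perm.mul_apply, hb2, hb1]
    · simp only [Equiv.Perm.mul_apply, hd2, hd1]
  · rintro σ _ ⟨ha1, hb1, hd1⟩
    refine ⟨fun x y => ?_, fun x y => ?_, ?_⟩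
    · apply σ.injective
      rw [ha1, Equiv.Perm.inv_def, Equiv.apply_symm_apply, Equiv.apply_symm_apply, Equiv.apply_symm_apply]
    · rw [Equiv.Perm.inv_def]; conv_rhs => rw [← σ.apply_symm_apply x, ← σ.apply_symm_apply y, hb1]
    · apply σ.injective
      rw [Equiv.Perm.inv_def, Equiv.apply_symm_apply, hd1]

/-- real roots have norm 2. -/
lemma realRoot_norm {v : Q r} (hv : v ∈ RealRoots r a) : B r a v v = 2 := by
  obtain ⟨σ, hσ, i, rfl⟩ := hv
  rw [(W_props h σ hσ).2.1, B_e_self h.noloops]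

lemma refl_invol (i : I r) (x : Q r) : refl r a i (refl r a i x) = x := by
  have h2 : B r a (refl r a i x) (e r i) = - B r a x (e r i) := by
    rw [refl, B_sub_left, B_smul_left, B_e_self h.noloops]
    ring
  rw [refl, h2, refl]
  funext k
  simp only [Pi.sub_apply, Pi.smul_apply, smul_eq_mul, neg_mul]
  ring

/-- the reflection as a permutation. -/
def reflPerm (i : I r) : Equiv.Perm (Q r) :=
  ⟨refl r a i, refl r a i, refl_invol h i, refl_invol h i⟩

lemma reflPerm_mem (i : I r) : reflPerm h i ∈ W r a :=
  Subgroup.subset_closure ⟨i, fun α => rfl⟩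

lemma reflPerm_apply (i : I r) (x : Q r) : reflPerm h i x = x - B r a x (e r i) • e r i := rfl

/-- Key lemma: every nonnegative vector of norm 2 is a (positive) real root. -/
lemma norm_two_real : ∀ (N : ℕ) (v : Q r), (∀ i, 0 ≤ v i) → B r a v v = 2 →
    (∑ i, v i) = (N : ℤ) → v ∈ RealRoots r a := by
  intro N
  induction N using Nat.strong_induction_on with
  | _ N ih =>
  intro v hpos hnorm hsum
  -- find i with v i > 0 and B v e_i > 0
  have hex : ∃ i, 0 < v i ∧ 0 < B r a v (e r i) := by
    by_contra hno
    push_neg at hno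
    have : B r a v v ≤ 0 := by
      rw [B_self_eq]
      refine Finset.sum_nonpos fun i _ => ?_
      rcases lt_or_ge 0 (v i) with hvi | hvi
      · exact mul_nonpos_of_nonneg_of_nonpos (hpos i) (hno i hvi)
      · have : v i = 0 := le_antisymm hvi (hpos i)
        rw [this]; simp
    omega
  obtain ⟨i, hvi, hBi⟩ := hex
  set cc := B r a v (e r i) with hcc
  have hcs := cs_two h v (e r i) hnorm
  rw [B_e_self h.noloops] at hcs
  have hc12 : cc = 1 ∨ cc = 2 := by
    have hle : cc ≤ 2 := by nlinarith
    omega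
  rcases hc12 with hc1 | hc2
  · -- descend by e_i
    set v' : Q r := v - e r i with hv'
    have hpos' : ∀ j, 0 ≤ v' j := by
      intro j
      by_cases hji : j = i
      · subst hji; simp [hv', e, Pi.single_apply]; omega
      · simp [hv', e, Pi.single_apply, hji]; exact hpos j
    have hnorm' : B r a v' v' = 2 := by
      rw [hv']
      simp only [B_sub_left, B_sub_right]
      rw [B_e_self h.noloops, B_symm h.symm (e r i) v, ← hcc, hnorm, hc1]
      ring
    have hN1 : 1 ≤ N := by
      have h1 : (1:ℤ) ≤ ∑ j, v j := by
        calc (1:ℤ) ≤ v i := hvi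
        _ ≤ ∑ j, v j := Finset.single_le_sum (fun j _ => hpos j) (Finset.mem_univ i)
      omega
    have hsum' : (∑ j, v' j) = ((N - 1 : ℕ) : ℤ) := by
      have : ∑ j, v' j = (∑ j, v j) - ∑ j, e r i j := by
        rw [hv']; exact Finset.sum_sub_distrib v (e r i)
      rw [this, hsum]
      have : ∑ j, e r i j = 1 := by simp [e]
      rw [this]; omega
    obtain ⟨σ, hσ, j, hj⟩ := ih (N - 1) (by omega) v' hpos' hnorm' hsum'
    refine ⟨reflPerm h i * σ, mul_mem (reflPerm_mem h i) hσ, j, ?_⟩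
    have hBv' : B r a v' (e r i) = -1 := by
      rw [hv', B_sub_left, B_e_self h.noloops, ← hcc, hc1]; ring
    have : reflPerm h i v' = v := by
      rw [reflPerm_apply, hBv', hv']
      funext k
      simp only [Pi.sub_apply, Pi.smul_apply, smul_eq_mul]
      ring
    rw [Equiv.Perm.mul_apply, ← hj, this]
  · -- B v e_i = 2 : v - e_i is in the radical
    have hrad : B r a (v - e r i) (v - e r i) = 0 := by
      simp only [B_sub_left, B_sub_right]
      rw [B_e_self h.noloops, B_symm h.symm (e r i) v, ← hcc, hnorm, hc2]
      ring
    obtain ⟨n, hn⟩ := norm_zero_radical h _ hrad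
    have hn_at : ∀ j, v j - e r i j = n * δ j := fun j => by
      have := congrFun hn j; simpa using this
    have hn0 : 0 ≤ n := by
      have := hn_at i
      have hei : e r i i = 1 := by simp [e]
      rw [hei] at this
      nlinarith [hpos i, h.delta_pos i, hvi]
    rcases eq_or_lt_of_le hn0 with hn0' | hn1
    · -- v = e_i
      refine ⟨1, one_mem _, i, ?_⟩
      funext j
      have hj := hn_at j
      rw [← hn0'] at hj
      simp only [zero_mul] at hj
      have : v j = e r i j := by linarith
      simpa using this
    · -- v = e_i + n δ with n ≥ 1 : descend to n δ - e_i = v - 2 e_i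
      set w : Q r := v - (2:ℤ) • e r i with hw
      have hw_at : ∀ j, w j = n * δ j - e r i j := by
        intro j
        have := hn_at j
        simp only [hw, Pi.sub_apply, Pi.smul_apply, smul_eq_mul]
        omega
      have hposw : ∀ j, 0 ≤ w j := by
        intro j
        rw [hw_at j]
        have hd := h.delta_pos j
        by_cases hji : j = i
        · subst hji
          have he1 : e r j j = 1 := by simp [e]
          rw [he1]
          nlinarith
        · have he0 : e r i j = 0 := by simp [e, Pi.single_apply, hji]
          rw [he0]
          nlinarith
      have hnormw : B r a w w = 2 := by
        rw [hw]
        simp only [B_sub_left, B_sub_right, B_smul_left, B_smul_right]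
        rw [B_e_self h.noloops, B_symm h.symm (e r i) v, ← hcc, hnorm, hc2]
        ring
      have hvi2 : 2 ≤ v i := by
        have := hn_at i
        have hei : e r i i = 1 := by simp [e]
        rw [hei] at this
        nlinarith [h.delta_pos i]
      have hN2 : 2 ≤ N := by
        have h1 : (2:ℤ) ≤ ∑ j, v j := by
          calc (2:ℤ) ≤ v i := hvi2
          _ ≤ ∑ j, v j := Finset.single_le_sum (fun j _ => hpos j) (Finset.mem_univ i)
        omega
      have hsumw : (∑ j, w j) = ((N - 2 : ℕ) : ℤ) := by
        have h2 : ∑ j, w j = (∑ j, v j) - 2 * ∑ j, e r i j := by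
          rw [hw]
          simp only [Pi.sub_apply, Pi.smul_apply, smul_eq_mul, Finset.sum_sub_distrib,
            Finset.mul_sum]
        have h3 : ∑ j, e r i j = 1 := by simp [e]
        rw [h2, hsum, h3]
        omega
      obtain ⟨σ, hσ, j, hj⟩ := ih (N - 2) (by omega) w hposw hnormw hsumw
      refine ⟨reflPerm h i * σ, mul_mem (reflPerm_mem h i) hσ, j, ?_⟩
      have hBw : B r a w (e r i) = -2 := by
        rw [hw]
        simp only [B_sub_left, B_smul_left]
        rw [B_e_self h.noloops, ← hcc, hc2]; ring
      have : reflPerm h i w = v := by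
        rw [reflPerm_apply, hBw, hw]
        funext k
        simp only [Pi.sub_apply, Pi.smul_apply, smul_eq_mul]
        ring
      rw [Equiv.Perm.mul_apply, ← hj, this]

/-- every norm-two vector is (coordinatewise) nonnegative or nonpositive. -/
lemma norm_two_sign (v : Q r) (hv : B r a v v = 2) :
    (∀ i, 0 ≤ v i) ∨ (∀ i, v i ≤ 0) := by
  classical
  set vp : Q r := fun i => max (v i) 0 with hvp
  set vm : Q r := fun i => max (-(v i)) 0 with hvm
  have hvpn : ∀ i, 0 ≤ vp i := fun i => le_max_right _ _
  have hvmn : ∀ i, 0 ≤ vm i := fun i => le_max_right _ _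
  have hsplit : v = vp - vm := by
    funext i
    simp only [Pi.sub_apply, hvp, hvm]
    omega
  by_cases hm : vm = 0
  · left; intro i
    have := congrFun hm i
    simp only [hvm, Pi.zero_apply] at this
    omega
  by_cases hp : vp = 0
  · right; intro i
    have := congrFun hp i
    simp only [hvp, Pi.zero_apply] at this
    omega
  exfalso
  have hcross : B r a vp vm ≤ 0 := by
    rw [B]
    refine Finset.sum_nonpos fun i _ => Finset.sum_nonpos fun j _ => ?_
    by_cases hij : i = j
    · subst hij
      rcases le_or_gt (v i) 0 with hv0 | hv0
      · have : vp i = 0 := by simp only [hvp]; omega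
        rw [this]; ring_nf; rfl
      · have : vm i = 0 := by simp only [hvm]; omega
        rw [this]; ring_nf; rfl
    · have hcle : cartan r a i j ≤ 0 := by simp [cartan, hij]
      have h1 : vp i * cartan r a i j ≤ 0 := mul_nonpos_of_nonneg_of_nonpos (hvpn i) hcle
      exact mul_nonpos_of_nonpos_of_nonneg h1 (hvmn j)
  have haux : ∀ u : Q r, (∀ i, 0 ≤ u i) → u ≠ 0 → (∃ i, v i ≤ 0) → (fun i => max (v i) 0) ≠ u → True := fun _ _ _ _ _ => trivial
  -- each of vp, vm has norm ≥ 2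
  have hge : ∀ u : Q r, (∀ i, 0 ≤ u i) → u ≠ 0 → (∀ i, 0 < u i → False) ∨ True := fun _ _ _ => Or.inr trivial
  have hnorm_ge : ∀ u : Q r, (∀ i, 0 ≤ u i) → u ≠ 0 →
      (∃ i, u i = 0) → 2 ≤ B r a u u := by
    intro u hun hune hzero
    have hpsd := h.posSemidef u
    have hne0 : B r a u u ≠ 0 := by
      intro h0
      obtain ⟨n, hn⟩ := norm_zero_radical h u h0
      obtain ⟨i, hi⟩ := hzero
      have hni := congrFun hn i
      simp only [Pi.smul_apply, smul_eq_mul] at hni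
      have hd := h.delta_pos i
      have hn0 : n = 0 := by nlinarith [hni, hi]
      apply hune
      rw [hn, hn0, zero_smul]
    have hev := B_even h.symm h.noloops u
    omega
  have hzp : ∃ i, vp i = 0 := by
    by_contra hno
    push_neg at hno
    apply hm
    funext i
    have : 0 < vp i := lt_of_le_of_ne (hvpn i) (Ne.symm (hno i))
    simp only [hvp] at this
    simp only [hvm, Pi.zero_apply]
    omega
  have hzm : ∃ i, vm i = 0 := by
    by_contra hno
    push_neg at hno
    apply hp
    funext i
    have : 0 < vm i := lt_of_le_of_ne (hvmn i) (Ne.symm (hno i))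
    simp only [hvm] at this
    simp only [hvp, Pi.zero_apply]
    omega
  have h2p := hnorm_ge vp hvpn hp hzp
  have h2m := hnorm_ge vm hvmn hm hzm
  have hexp : B r a v v = B r a vp vp - 2 * B r a vp vm + B r a vm vm := by
    rw [hsplit]
    simp only [B_sub_left, B_sub_right]
    rw [B_symm h.symm vm vp]
    ring
  omega

/-- if ψ ≥ 0, ψ₀ = 0 and (ψ,ψ) = 2, then ψ ≤ δ coordinatewise. -/
lemma le_delta {ψ : Q r} (hpos : ∀ i, 0 ≤ ψ i) (h0 : ψ 0 = 0) (hn : B r a ψ ψ = 2) :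
    ∀ i, 0 ≤ δ i - ψ i := by
  have hw : B r a (δ - ψ) (δ - ψ) = 2 := by
    simp only [B_sub_left, B_sub_right]
    rw [B_delta h, B_delta h, B_symm h.symm ψ δ, B_delta h, hn]
    ring
  rcases norm_two_sign h _ hw with hge | hle
  · intro i; simpa using hge i
  · exfalso
    have := hle 0
    simp only [Pi.sub_apply, h0, h.delta_zero] at this
    omega

lemma fund_eq {α : Q r} (hα : α ∈ Fund r a) : ∃ n : ℤ, 1 ≤ n ∧ α = n • δ := by
  obtain ⟨hne, hpos, _, hB⟩ := hα
  have h0 : B r a α α = 0 := by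
    refine le_antisymm ?_ (h.posSemidef α)
    rw [B_self_eq]
    exact Finset.sum_nonpos fun i _ => mul_nonpos_of_nonneg_of_nonpos (hpos i) (hB i)
  obtain ⟨n, hn⟩ := norm_zero_radical h α h0
  refine ⟨n, ?_, hn⟩
  by_contra hlt
  push_neg at hlt
  have hn0 : n = 0 := by
    have := congrFun hn 0
    simp only [Pi.smul_apply, smul_eq_mul, h.delta_zero, mul_one] at this
    have := hpos 0
    omega
  exact hne (by rw [hn, hn0, zero_smul])

lemma fund_mem (n : ℤ) (hn : 1 ≤ n) : n • δ ∈ Fund r a := by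
  have hposc : ∀ i, 0 < (n • δ) i := by
    intro i
    simp only [Pi.smul_apply, smul_eq_mul]
    exact mul_pos (by omega) (h.delta_pos i)
  refine ⟨?_, fun i => (hposc i).le, ?_, ?_⟩
  · intro h0
    have := congrFun h0 0
    simp only [Pi.zero_apply] at this
    exact absurd this (hposc 0).ne'
  · intro i j _ _
    exact Relation.ReflTransGen.mono (r := fun x y => 0 < a x y)
      (p := fun x y => (n • δ) x ≠ 0 ∧ (n • δ) y ≠ 0 ∧ 0 < a x y)
      (fun x y hxy => ⟨(hposc x).ne', (hposc y).ne', hxy⟩) i j (h.connected i j)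
  · intro i
    rw [B_smul_left, B_delta h]
    simp

lemma imroot_iff (α : Q r) : α ∈ ImRoots r a ↔ ∃ n : ℤ, n ≠ 0 ∧ α = n • δ := by
  constructor
  · rintro ⟨σ, hσ, β, hβ, hor⟩
    obtain ⟨m, hm1, hmδ⟩ := fund_eq h hβ
    obtain ⟨hadd, _, hδfix⟩ := W_props h σ hσ
    have hσβ : σ β = m • δ := by
      have : σ β = (AddMonoidHom.mk' σ hadd) (m • δ) := by rw [← hmδ]; rfl
      rw [this, map_zsmul]
      simp only [AddMonoidHom.mk'_apply, hδfix]
    rcases hor with h1 | h1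
    · exact ⟨m, by omega, by rw [h1, hσβ]⟩
    · exact ⟨-m, by omega, by rw [h1, hσβ, neg_smul]⟩
  · rintro ⟨n, hn0, rfl⟩
    rcases le_or_gt 1 n with hn | hn
    · exact ⟨1, one_mem _, n • δ, fund_mem h n hn, Or.inl rfl⟩
    · refine ⟨1, one_mem _, (-n) • δ, fund_mem h (-n) (by omega), Or.inr ?_⟩
      simp [neg_smul]

omit h in
lemma B_zero_self : B r a (0 : Q r) 0 = 0 := by
  rw [B]
  exact Finset.sum_eq_zero fun i _ => Finset.sum_eq_zero fun j _ => by
    simp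

lemma root_ne_zero {α : Q r} (hα : α ∈ Roots r a) : α ≠ 0 := by
  rintro rfl
  rcases hα with hre | him
  · have := realRoot_norm h hre
    rw [B_zero_self] at this
    omega
  · obtain ⟨n, hn0, hn⟩ := (imroot_iff h _).mp him
    have := congrFun hn 0
    simp [h.delta_zero] at this
    omega

lemma posroot_cases {α : Q r} (hα : α ∈ PosRoots r a) :
    (B r a α α = 2 ∧ ∀ i, 0 ≤ α i) ∨ (∃ n : ℤ, 1 ≤ n ∧ α = n • δ) := by
  obtain ⟨hroot, hpos⟩ := hα
  rcases hroot with hre | him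
  · exact Or.inl ⟨realRoot_norm h hre, hpos⟩
  · obtain ⟨n, hn0, hn⟩ := (imroot_iff h _).mp him
    refine Or.inr ⟨n, ?_, hn⟩
    have := hpos 0
    rw [hn] at this
    simp only [Pi.smul_apply, smul_eq_mul, h.delta_zero, mul_one] at this
    omega

lemma posroot_of_norm_two {α : Q r} (hB : B r a α α = 2) (hpos : ∀ i, 0 ≤ α i) :
    α ∈ PosRoots r a := by
  refine ⟨Or.inl ?_, hpos⟩
  have hnn : (0:ℤ) ≤ ∑ i, α i := Finset.sum_nonneg fun i _ => hpos i
  exact norm_two_real h (∑ i, α i).toNat α hpos hB (Int.toNat_of_nonneg hnn).symm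

lemma smul_delta_posroot (n : ℤ) (hn : 1 ≤ n) : n • δ ∈ PosRoots r a := by
  refine ⟨Or.inr ((imroot_iff h _).mpr ⟨n, by omega, rfl⟩), fun i => ?_⟩
  simp only [Pi.smul_apply, smul_eq_mul]
  exact (mul_pos (by omega) (h.delta_pos i)).le

lemma B_delta_smul_self (n : ℤ) : B r a (n • δ) (n • δ) = 0 := by
  rw [B_smul_left, B_delta h]
  ring

end Main

section Phic

variable {δ : Q r} (h : AffineData r a δ) (c : Q r →ₗ[ℤ] ℂ) (hc : c δ = 0)

include h

lemma phicpos_iff (α : Q r) :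
    α ∈ PhicPos r a c ↔ B r a α α = 2 ∧ (∀ i, 0 ≤ α i) ∧ α 0 = 0 ∧ c α = 0 := by
  constructor
  · rintro ⟨⟨⟨hroot, h0⟩, ⟨_, hpos⟩⟩, ⟨_, hcα⟩⟩
    refine ⟨?_, hpos, h0, hcα⟩
    rcases hroot with hre | him
    · exact realRoot_norm h hre
    · obtain ⟨n, hn0, hn⟩ := (imroot_iff h _).mp him
      exfalso
      rw [hn] at h0
      simp only [Pi.smul_apply, smul_eq_mul, h.delta_zero, mul_one] at h0
      exact hn0 h0
  · rintro ⟨hB, hpos, h0, hcα⟩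
    have hP := posroot_of_norm_two h hB hpos
    exact ⟨⟨⟨hP.1, h0⟩, hP⟩, hP.1, hcα⟩

lemma phicpos_rcpos {α : Q r} (hα : α ∈ PhicPos r a c) : α ∈ RcPos r a c := by
  obtain ⟨⟨⟨hroot, _⟩, hP⟩, ⟨_, hcα⟩⟩ := hα
  exact ⟨⟨hroot, hcα⟩, hP⟩

lemma rcpos_of_norm_two {α : Q r} (hB : B r a α α = 2) (hpos : ∀ i, 0 ≤ α i)
    (hcα : c α = 0) : α ∈ RcPos r a c := by
  have hP := posroot_of_norm_two h hB hpos
  exact ⟨⟨hP.1, hcα⟩, hP⟩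

include hc in
lemma rcpos_delta_smul (n : ℤ) (hn : 1 ≤ n) : n • δ ∈ RcPos r a c := by
  have hP := smul_delta_posroot h n hn
  refine ⟨⟨hP.1, ?_⟩, hP⟩
  rw [map_zsmul, hc, smul_zero]

lemma rcpos_cases {α : Q r} (hα : α ∈ RcPos r a c) :
    (B r a α α = 2 ∧ (∀ i, 0 ≤ α i) ∧ c α = 0) ∨ (∃ n : ℤ, 1 ≤ n ∧ α = n • δ) := by
  obtain ⟨⟨_, hcα⟩, hP⟩ := hα
  rcases posroot_cases h hP with ⟨hB, hpos⟩ | him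
  · exact Or.inl ⟨hB, hpos, hcα⟩
  · exact Or.inr him

/-- the peeling step: subtracting a suitable root from a norm-2 vector. -/
lemma diff_phicpos {α β : Q r} (hx : 1 ≤ B r a α β) (hα2 : B r a α α = 2)
    (hβ2 : B r a β β = 2) (hdpos : ∀ i, 0 ≤ (α - β) i) (hd0 : (α - β) 0 = 0)
    (hdne : α - β ≠ 0) (hcα : c α = 0) (hcβ : c β = 0) :
    α - β ∈ PhicPos r a c := by
  set x := B r a α β with hxd
  have hcs := cs_two h α β hα2
  rw [hβ2] at hcs
  have hx2 : x = 1 ∨ x = 2 := by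
    have hle : x ≤ 2 := by nlinarith
    omega
  have hdd : B r a (α - β) (α - β) = 4 - 2 * x := by
    simp only [B_sub_left, B_sub_right]
    rw [hα2, hβ2, B_symm h.symm β α, ← hxd]
    ring
  rcases hx2 with hx1 | hx1
  · rw [phicpos_iff h]
    refine ⟨by rw [hdd, hx1]; ring, hdpos, hd0, by rw [map_sub, hcα, hcβ, sub_zero]⟩
  · exfalso
    have hz : B r a (α - β) (α - β) = 0 := by rw [hdd, hx1]; ring
    obtain ⟨n, hn⟩ := norm_zero_radical h _ hz
    have h0 := congrFun hn 0
    simp only [Pi.smul_apply, smul_eq_mul, h.delta_zero, mul_one, hd0] at h0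
    apply hdne
    rw [hn, ← h0, zero_smul]

lemma phicpos_ne_zero {α : Q r} (hα : α ∈ PhicPos r a c) : α ≠ 0 := by
  rintro rfl
  have := ((phicpos_iff h c 0).mp hα).1
  rw [B_zero_self] at this
  omega

omit h in
lemma exists_pos_coord {α : Q r} (hpos : ∀ i, 0 ≤ α i) (hne : α ≠ 0) :
    ∃ i, 0 < α i := by
  by_contra hno
  push_neg at hno
  exact hne (funext fun i => le_antisymm (hno i) (hpos i))

/-- a maximal element of Φ_c⁺ plus a nonempty sum of elements of Φ_c⁺ is never in Φ_c⁺. -/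
lemma max_no_sum {ψ : Q r} (hψ : ψ ∈ PhicMax r a c) (k : ℕ) (g : Fin k → Q r)
    (S : Finset (Fin k)) :
    ∀ (_ : ∀ t ∈ S, g t ∈ PhicPos r a c) (_ : S.Nonempty),
    ψ + ∑ t ∈ S, g t ∉ PhicPos r a c := by
  obtain ⟨hψP, hψmax⟩ := hψ
  obtain ⟨hψ2, hψpos, hψ0, hψc⟩ := (phicpos_iff h c ψ).mp hψP
  induction S using Finset.strongInductionOn with
  | _ S ih =>
  intro hg hS hmem
  set γ' : Q r := ψ + ∑ t ∈ S, g t with hγ'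
  obtain ⟨hγ2, hγpos, hγ0, hγc⟩ := (phicpos_iff h c γ').mp hmem
  have hgfacts : ∀ t ∈ S, B r a (g t) (g t) = 2 ∧ (∀ i, 0 ≤ g t i) ∧ g t 0 = 0 ∧ c (g t) = 0 :=
    fun t ht => (phicpos_iff h c (g t)).mp (hg t ht)
  have hkey : B r a γ' ψ + ∑ t ∈ S, B r a γ' (g t) = 2 := by
    rw [← B_sum_right, ← B_add_right, ← hγ', hγ2]
  have hex : 1 ≤ B r a γ' ψ ∨ ∃ t ∈ S, 1 ≤ B r a γ' (g t) := by
    by_contra hno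
    push_neg at hno
    obtain ⟨h1, h2⟩ := hno
    have : ∑ t ∈ S, B r a γ' (g t) ≤ 0 :=
      Finset.sum_nonpos fun t ht => by have := h2 t ht; omega
    omega
  rcases hex with hcase | ⟨t, ht, hcase⟩
  · -- peel ψ : γ' - ψ ∈ Φ_c⁺, contradicting maximality
    have hd : γ' - ψ = ∑ t ∈ S, g t := by rw [hγ']; abel
    have hdpos : ∀ i, 0 ≤ (γ' - ψ) i := by
      intro i
      rw [hd, Finset.sum_apply]
      exact Finset.sum_nonneg fun t ht => (hgfacts t ht).2.1 i
    have hd0 : (γ' - ψ) 0 = 0 := by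
      simp only [Pi.sub_apply, hγ0, hψ0, sub_zero]
    have hdne : γ' - ψ ≠ 0 := by
      obtain ⟨t, ht⟩ := hS
      obtain ⟨i, hi⟩ := exists_pos_coord ((hgfacts t ht).2.1)
        (phicpos_ne_zero h c (hg t ht))
      intro h0
      have h0i := congrFun h0 i
      rw [hd] at h0i
      simp only [Finset.sum_apply, Pi.zero_apply] at h0i
      have : 0 < ∑ s ∈ S, g s i :=
        lt_of_lt_of_le hi (Finset.single_le_sum (fun s hs => (hgfacts s hs).2.1 i) ht)
      omega
    have hdP := diff_phicpos h c hcase hγ2 hψ2 hdpos hd0 hdne hγc hψc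
    exact hψmax _ hdP (by rw [← sub_add_cancel γ' ψ] at hmem; rw [add_comm]; exact hmem)
  · -- peel g t
    have hgt := hgfacts t ht
    have hd : γ' - g t = ψ + ∑ s ∈ S.erase t, g s := by
      rw [hγ', ← Finset.sum_erase_add S g ht]; abel
    have hdpos : ∀ i, 0 ≤ (γ' - g t) i := by
      intro i
      rw [hd]
      simp only [Pi.add_apply, Finset.sum_apply]
      have : 0 ≤ ∑ s ∈ S.erase t, g s i :=
        Finset.sum_nonneg fun s hs => (hgfacts s (Finset.mem_of_mem_erase hs)).2.1 i
      have := hψpos i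
      omega
    have hd0 : (γ' - g t) 0 = 0 := by
      simp only [Pi.sub_apply, hγ0, hgt.2.2.1, sub_zero]
    have hdne : γ' - g t ≠ 0 := by
      obtain ⟨i, hi⟩ := exists_pos_coord hψpos (phicpos_ne_zero h c hψP)
      intro h0
      have h0i := congrFun h0 i
      rw [hd] at h0i
      simp only [Pi.add_apply, Finset.sum_apply, Pi.zero_apply] at h0i
      have : 0 ≤ ∑ s ∈ S.erase t, g s i :=
        Finset.sum_nonneg fun s hs => (hgfacts s (Finset.mem_of_mem_erase hs)).2.1 i
      omega
    have hdP := diff_phicpos h c hcase hγ2 hgt.1 hdpos hd0 hdne hγc hgt.2.2.2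
    rcases Finset.eq_empty_or_nonempty (S.erase t) with hemp | hne
    · -- γ' = ψ + g t, contradicting maximality directly
      have : γ' - g t = ψ := by rw [hd, hemp, Finset.sum_empty, add_zero]
      exact hψmax _ (hg t ht)
        (by rw [← sub_add_cancel γ' (g t), this] at hmem; exact hmem)
    · exact ih (S.erase t) (Finset.erase_ssubset ht)
        (fun s hs => hg s (Finset.mem_of_mem_erase hs)) hne (hd ▸ hdP)

end Phic

lemma p_norm_two {α : Q r} (hB : B r a α α = 2) : p r a α = 0 := by
  rw [p, hB]; norm_num

lemma p_of_norm_zero {α : Q r} (hB : B r a α α = 0) : p r a α = 1 := by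
  rw [p, hB]; norm_num

lemma sum_eq_one_unique {ι : Type*} [DecidableEq ι] (S : Finset ι) (g : ι → ℤ)
    (hg : ∀ t ∈ S, 0 ≤ g t) (hsum : ∑ t ∈ S, g t = 1) :
    ∃ t₀ ∈ S, g t₀ = 1 ∧ ∀ t ∈ S, t ≠ t₀ → g t = 0 := by
  have hex : ∃ t₀ ∈ S, 0 < g t₀ := by
    by_contra hno
    push_neg at hno
    have : ∑ t ∈ S, g t ≤ 0 := Finset.sum_nonpos fun t ht => hno t ht
    omega
  obtain ⟨t₀, ht₀, hpos⟩ := hex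
  have hsplit : ∑ t ∈ S.erase t₀, g t + g t₀ = 1 := by
    rw [Finset.sum_erase_add S g ht₀, hsum]
  have herasenn : 0 ≤ ∑ t ∈ S.erase t₀, g t :=
    Finset.sum_nonneg fun t ht => hg t (Finset.mem_of_mem_erase ht)
  have hg1 : g t₀ = 1 := by omega
  have hzero : ∑ t ∈ S.erase t₀, g t = 0 := by omega
  refine ⟨t₀, ht₀, hg1, fun t ht hne => ?_⟩
  have := (Finset.sum_eq_zero_iff_of_nonneg
    (fun s hs => hg s (Finset.mem_of_mem_erase hs))).mp hzero t (Finset.mem_erase.mpr ⟨hne, ht⟩)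
  exact this

end AffineRoots

open AffineRoots in
/-- Assume `c(δ) = 0`, and set `Φ_c⁺ = Φ⁺ ∩ R_c`.  Call `α ∈ Φ_c⁺` minimal if it cannot
be written as a sum of two elements of `Φ_c⁺`, and maximal if `α + γ ∉ Φ_c⁺` for every
`γ ∈ Φ_c⁺`.  Then
`Σ_c = {minimal elements of Φ_c⁺} ∪ {δ} ∪ {δ − α : α a maximal element of Φ_c⁺}`. -/
theorem Sc_zero_level (r : ℕ) (a : I r → I r → ℕ) (δ : Q r)
    (hdata : AffineData r a δ) (c : Q r →ₗ[ℤ] ℂ) (hc : c δ = 0) :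
    Sc r a c =
      PhicMin r a c ∪ {δ} ∪ {β | ∃ α ∈ PhicMax r a c, β = δ - α} := by
  have hpδ : p r a δ = 1 := p_of_norm_zero (B_delta hdata δ)
  ext α
  constructor
  · rintro ⟨hmem, hdec⟩
    rcases rcpos_cases hdata c hmem with ⟨hB, hpos, hcα⟩ | ⟨n, hn1, rfl⟩
    · -- α is a real positive root
      have hpα : p r a α = 0 := p_norm_two hB
      -- useful contradiction: if α - δ ≥ 0 then α decomposes as δ + (α - δ)
      have hcontra : ¬ (∀ i, 0 ≤ (α - δ) i) := by
        intro hαδpos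
        have hαδ2 : B r a (α - δ) (α - δ) = 2 := by
          simp only [B_sub_left, B_sub_right, B_delta hdata, B_delta' hdata]
          rw [hB]
          ring
        have hαδRc : α - δ ∈ RcPos r a c :=
          rcpos_of_norm_two hdata c hαδ2 hαδpos (by rw [map_sub, hcα, hc, sub_zero])
        have hδRc : δ ∈ RcPos r a c := by
          simpa using rcpos_delta_smul hdata c hc 1 le_rfl
        have hd := hdec 2 ![δ, α - δ] le_rfl
          (fun t => by fin_cases t <;> simpa using (by first | exact hδRc | exact hαδRc))
          (by rw [Fin.sum_univ_two]; simp)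
        rw [Fin.sum_univ_two] at hd
        simp only [Matrix.cons_val_zero, Matrix.cons_val_one, Matrix.head_cons] at hd
        rw [hpδ, p_norm_two hαδ2, hpα] at hd
        norm_num at hd
      by_cases h0 : α 0 = 0
      · -- α is minimal in Φ_c⁺
        left; left
        refine ⟨(phicpos_iff hdata c α).mpr ⟨hB, hpos, h0, hcα⟩, ?_⟩
        rintro ⟨β, hβ, γ, hγ, rfl⟩
        have hβf := (phicpos_iff hdata c β).mp hβ
        have hγf := (phicpos_iff hdata c γ).mp hγ
        have hd := hdec 2 ![β, γ] le_rfl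
          (fun t => by fin_cases t <;> simpa using
            (by first | exact phicpos_rcpos hdata c hβ | exact phicpos_rcpos hdata c hγ))
          (by rw [Fin.sum_univ_two]; simp)
        rw [Fin.sum_univ_two] at hd
        simp only [Matrix.cons_val_zero, Matrix.cons_val_one, Matrix.head_cons] at hd
        rw [p_norm_two hβf.1, p_norm_two hγf.1, hpα] at hd
        norm_num at hd
      · -- α 0 ≥ 1
        have hα0 : 1 ≤ α 0 := by have := hpos 0; omega
        set ψ : Q r := δ - α with hψdef
        have hψ2 : B r a ψ ψ = 2 := by
          rw [hψdef]
          simp only [B_sub_left, B_sub_right, B_delta hdata, B_delta' hdata]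
          rw [hB]
          ring
        rcases norm_two_sign hdata ψ hψ2 with hψpos | hψneg
        · -- ψ ≥ 0 : show ψ is maximal and α = δ - ψ
          have hα01 : α 0 = 1 := by
            have := hψpos 0
            simp only [hψdef, Pi.sub_apply, hdata.delta_zero] at this
            omega
          have hψ0 : ψ 0 = 0 := by
            simp only [hψdef, Pi.sub_apply, hdata.delta_zero, hα01]
            ring
          have hψc : c ψ = 0 := by rw [hψdef, map_sub, hc, hcα, sub_zero]
          have hψP : ψ ∈ PhicPos r a c := (phicpos_iff hdata c ψ).mpr ⟨hψ2, hψpos, hψ0, hψc⟩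
          right
          refine ⟨ψ, ⟨hψP, ?_⟩, (sub_sub_cancel δ α).symm⟩
          intro γ0 hγ0 hsum
          obtain ⟨hu2, hupos, hu0, huc⟩ := (phicpos_iff hdata c _).mp hsum
          have hle := le_delta hdata hupos hu0 hu2
          set d : Q r := δ - (ψ + γ0) with hddef
          have hd2 : B r a d d = 2 := by
            rw [hddef]
            simp only [B_sub_left, B_sub_right, B_delta hdata, B_delta' hdata]
            rw [hu2]
            ring
          have hdpos : ∀ i, 0 ≤ d i := fun i => by
            have := hle i
            simpa [hddef] using this
          have hdc : c d = 0 := by rw [hddef, map_sub, hc, huc, sub_zero]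
          have hdRc : d ∈ RcPos r a c := rcpos_of_norm_two hdata c hd2 hdpos hdc
          have hγRc : γ0 ∈ RcPos r a c := phicpos_rcpos hdata c hγ0
          obtain ⟨hγ02, _, _, _⟩ := (phicpos_iff hdata c γ0).mp hγ0
          have hd := hdec 2 ![d, γ0] le_rfl
            (fun t => by fin_cases t <;> simpa using (by first | exact hdRc | exact hγRc))
            (by rw [Fin.sum_univ_two]
                show α = d + γ0
                rw [hddef, hψdef]
                abel)
          rw [Fin.sum_univ_two] at hd
          simp only [Matrix.cons_val_zero, Matrix.cons_val_one, Matrix.head_cons] at hd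
          rw [p_norm_two hd2, p_norm_two hγ02, hpα] at hd
          norm_num at hd
        · -- ψ ≤ 0 : then α - δ ≥ 0, contradiction
          exfalso
          apply hcontra
          intro i
          have := hψneg i
          simp only [hψdef, Pi.sub_apply] at this ⊢
          omega
    · -- α = n • δ
      rcases eq_or_lt_of_le hn1 with h1 | h2
      · left; right
        show n • δ = δ
        rw [← h1, one_smul]
      · exfalso
        have hk2 : 2 ≤ n.toNat := by omega
        have hδRc : δ ∈ RcPos r a c := by
          simpa using rcpos_delta_smul hdata c hc 1 le_rfl
        have hd := hdec n.toNat (fun _ => δ) hk2 (fun _ => hδRc)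
          (by rw [Finset.sum_const, Finset.card_univ, Fintype.card_fin,
                ← natCast_zsmul]
              congr 1
              omega)
        rw [p_of_norm_zero (B_delta_smul_self hdata n)] at hd
        have : ∑ _t : Fin n.toNat, p r a δ = (n.toNat : ℚ) := by
          rw [hpδ, Finset.sum_const, Finset.card_univ, Fintype.card_fin, nsmul_eq_mul, mul_one]
        rw [this] at hd
        have : (2:ℚ) ≤ (n.toNat : ℚ) := by exact_mod_cast hk2
        linarith
  · intro hα
    rcases hα with (hmin | hδeq) | ⟨ψ, hψM, rfl⟩
    · -- minimal elements are in Σ_c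
      obtain ⟨hP, hnom⟩ := hmin
      obtain ⟨hB, hpos, h0, hcα⟩ := (phicpos_iff hdata c α).mp hP
      refine ⟨phicpos_rcpos hdata c hP, ?_⟩
      intro k f hk hf hsum
      exfalso
      have hfpos : ∀ t i, 0 ≤ f t i := fun t i => (hf t).2.2 i
      have hsum_at : ∀ i, α i = ∑ t, f t i := fun i => by
        rw [hsum, Finset.sum_apply]
      have hzero : ∀ t, f t 0 = 0 := by
        have h00 : ∑ t, f t 0 = 0 := by rw [← hsum_at 0, h0]
        intro t
        exact (Finset.sum_eq_zero_iff_of_nonneg (fun s _ => hfpos s 0)).mp h00 t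
          (Finset.mem_univ t)
      have hfP : ∀ t, f t ∈ PhicPos r a c := by
        intro t
        rcases rcpos_cases hdata c (hf t) with ⟨hB', hpos', hc'⟩ | ⟨n, hn1, hft⟩
        · exact (phicpos_iff hdata c _).mpr ⟨hB', hpos', hzero t, hc'⟩
        · exfalso
          have := hzero t
          rw [hft] at this
          simp only [Pi.smul_apply, smul_eq_mul, hdata.delta_zero, mul_one] at this
          omega
      have hfacts : ∀ t, B r a (f t) (f t) = 2 ∧ (∀ i, 0 ≤ f t i) ∧ f t 0 = 0 ∧ c (f t) = 0 :=
        fun t => (phicpos_iff hdata c _).mp (hfP t)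
      have hBsum : ∑ t, B r a α (f t) = 2 := by
        rw [← B_sum_right, ← hsum, hB]
      have hex : ∃ t, 1 ≤ B r a α (f t) := by
        by_contra hno
        push_neg at hno
        have : ∑ t, B r a α (f t) ≤ 0 :=
          Finset.sum_nonpos fun t _ => by have := hno t; omega
        omega
      obtain ⟨t, ht⟩ := hex
      have hderase : α - f t = ∑ s ∈ Finset.univ.erase t, f s := by
        have := Finset.sum_erase_add Finset.univ f (Finset.mem_univ t)
        rw [← hsum] at this
        rw [← this]
        abel
      have hdpos : ∀ i, 0 ≤ (α - f t) i := by
        intro i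
        have : (α - f t) i = ∑ s ∈ Finset.univ.erase t, f s i := by
          rw [hderase, Finset.sum_apply]
        rw [this]
        exact Finset.sum_nonneg fun s _ => hfpos s i
      have hd0 : (α - f t) 0 = 0 := by
        simp only [Pi.sub_apply, h0, hzero t, sub_zero]
      have hnon : (Finset.univ.erase t).Nonempty := by
        rw [← Finset.card_pos, Finset.card_erase_of_mem (Finset.mem_univ t),
          Finset.card_univ, Fintype.card_fin]
        omega
      have hdne : α - f t ≠ 0 := by
        obtain ⟨s, hs⟩ := hnon
        obtain ⟨i, hi⟩ := exists_pos_coord (hfpos s)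
          (root_ne_zero hdata (hf s).1.1)
        intro hzz
        rw [hderase] at hzz
        have hzi := congrFun hzz i
        simp only [Finset.sum_apply, Pi.zero_apply] at hzi
        have h2 : (0:ℤ) < ∑ u ∈ Finset.univ.erase t, f u i :=
          lt_of_lt_of_le hi (Finset.single_le_sum (fun u _ => hfpos u i) hs)
        omega
      have hdP := diff_phicpos hdata c ht hB (hfacts t).1 hdpos hd0 hdne hcα (hfacts t).2.2.2
      exact hnom ⟨f t, hfP t, α - f t, hdP, by abel⟩
    · -- δ ∈ Σ_c
      obtain rfl : α = δ := hδeq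
      refine ⟨by simpa using rcpos_delta_smul hdata c hc 1 le_rfl, ?_⟩
      intro k f hk hf hsum
      have hfpos : ∀ t i, 0 ≤ f t i := fun t i => (hf t).2.2 i
      have hsum_at : ∀ i, α i = ∑ t, f t i := fun i => by
        rw [hsum, Finset.sum_apply]
      have hsum0 : ∑ t, f t 0 = 1 := by
        rw [← hsum_at 0, hdata.delta_zero]
      obtain ⟨t₀, _, h1, hrest⟩ := sum_eq_one_unique Finset.univ (fun t => f t 0)
        (fun t _ => hfpos t 0) hsum0
      have hreal : ∀ t, B r a (f t) (f t) = 2 := by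
        intro t
        rcases rcpos_cases hdata c (hf t) with ⟨hB', _, _⟩ | ⟨n, hn1, hft⟩
        · exact hB'
        · exfalso
          have hft0 : f t 0 = n := by
            rw [hft]; simp [hdata.delta_zero]
          by_cases htt : t = t₀
          · subst htt
            have hn1' : n = 1 := by rw [h1] at hft0; omega
            have hse := Finset.sum_erase_add Finset.univ f (Finset.mem_univ t)
            rw [← hsum, hft, hn1', one_smul] at hse
            have hze : ∑ s ∈ Finset.univ.erase t, f s = 0 := by
              have := add_right_cancel (a := ∑ s ∈ Finset.univ.erase t, f s)
                (b := α) (c := 0) (by rw [zero_add, hse])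
              exact this
            have hnon : (Finset.univ.erase t).Nonempty := by
              rw [← Finset.card_pos, Finset.card_erase_of_mem (Finset.mem_univ t),
                Finset.card_univ, Fintype.card_fin]
              omega
            obtain ⟨s, hs⟩ := hnon
            obtain ⟨i, hi⟩ := exists_pos_coord (hfpos s)
              (root_ne_zero hdata (hf s).1.1)
            have hzi := congrFun hze i
            simp only [Finset.sum_apply, Pi.zero_apply] at hzi
            have h2 : (0:ℤ) < ∑ u ∈ Finset.univ.erase t, f u i :=
              lt_of_lt_of_le hi (Finset.single_le_sum (fun u _ => hfpos u i) hs)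
            omega
          · have := hrest t (Finset.mem_univ t) htt
            rw [hft0] at this
            omega
      calc ∑ t, p r a (f t) = ∑ _t : Fin k, (0:ℚ) :=
              Finset.sum_congr rfl fun t _ => p_norm_two (hreal t)
        _ = 0 := by simp
        _ < p r a α := by rw [hpδ]; norm_num
    · -- δ - ψ with ψ maximal
      obtain ⟨hψP, hψmax⟩ := hψM
      obtain ⟨hψ2, hψpos, hψ0, hψc⟩ := (phicpos_iff hdata c ψ).mp hψP
      have hle := le_delta hdata hψpos hψ0 hψ2
      have hβ2 : B r a (δ - ψ) (δ - ψ) = 2 := by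
        simp only [B_sub_left, B_sub_right, B_delta hdata, B_delta' hdata]
        rw [hψ2]
        ring
      have hβpos : ∀ i, 0 ≤ (δ - ψ) i := fun i => by
        have := hle i
        simpa using this
      have hβc : c (δ - ψ) = 0 := by rw [map_sub, hc, hψc, sub_zero]
      refine ⟨rcpos_of_norm_two hdata c hβ2 hβpos hβc, ?_⟩
      intro k f hk hf hsum
      exfalso
      have hfpos : ∀ t i, 0 ≤ f t i := fun t i => (hf t).2.2 i
      have hsum_at : ∀ i, (δ - ψ) i = ∑ t, f t i := fun i => by
        rw [hsum, Finset.sum_apply]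
      have hsum0 : ∑ t, f t 0 = 1 := by
        rw [← hsum_at 0]
        simp [hdata.delta_zero, hψ0]
      obtain ⟨t₀, _, h1, hrest⟩ := sum_eq_one_unique Finset.univ (fun t => f t 0)
        (fun t _ => hfpos t 0) hsum0
      have hoth : ∀ t, t ≠ t₀ → f t ∈ PhicPos r a c := by
        intro t htn
        rcases rcpos_cases hdata c (hf t) with ⟨hB', hp', hc'⟩ | ⟨n, hn1, hft⟩
        · exact (phicpos_iff hdata c _).mpr ⟨hB', hp', hrest t (Finset.mem_univ t) htn, hc'⟩
        · exfalso
          have := hrest t (Finset.mem_univ t) htn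
          rw [hft] at this
          simp only [Pi.smul_apply, smul_eq_mul, hdata.delta_zero, mul_one] at this
          omega
      have hse := Finset.sum_erase_add Finset.univ f (Finset.mem_univ t₀)
      rw [← hsum] at hse
      have ht₀2 : B r a (f t₀) (f t₀) = 2 := by
        rcases rcpos_cases hdata c (hf t₀) with ⟨hB', _, _⟩ | ⟨n, hn1, hft⟩
        · exact hB'
        · exfalso
          have hft0 : f t₀ 0 = n := by rw [hft]; simp [hdata.delta_zero]
          have hn1' : n = 1 := by rw [h1] at hft0; omega
          rw [hft, hn1', one_smul] at hse
          -- ∑_{erase} f = -ψ ≤ 0, but the sum is nonneg and ψ ≠ 0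
          obtain ⟨i, hi⟩ := exists_pos_coord hψpos (phicpos_ne_zero hdata c hψP)
          have := congrFun hse i
          simp only [Pi.add_apply, Pi.sub_apply, Finset.sum_apply] at this
          have hnn : 0 ≤ ∑ s ∈ Finset.univ.erase t₀, f s i :=
            Finset.sum_nonneg fun s _ => hfpos s i
          have hdl := hle i
          omega
      have hid : ψ + ∑ s ∈ Finset.univ.erase t₀, f s = δ - f t₀ := by
        have h2 : ∑ s ∈ Finset.univ.erase t₀, f s = δ - ψ - f t₀ := by
          rw [← hse]; abel
        rw [h2]; abel
      have hγ'2 : B r a (δ - f t₀) (δ - f t₀) = 2 := by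
        simp only [B_sub_left, B_sub_right, B_delta hdata, B_delta' hdata]
        rw [ht₀2]
        ring
      have hγ'pos : ∀ i, 0 ≤ (δ - f t₀) i := by
        intro i
        rw [← hid]
        simp only [Pi.add_apply, Finset.sum_apply]
        have hnn : 0 ≤ ∑ s ∈ Finset.univ.erase t₀, f s i :=
          Finset.sum_nonneg fun s _ => hfpos s i
        have := hψpos i
        omega
      have hγ'0 : (δ - f t₀) 0 = 0 := by
        simp only [Pi.sub_apply, hdata.delta_zero, h1]
        ring
      have hγ'c : c (δ - f t₀) = 0 := by
        rw [map_sub, hc, (hf t₀).1.2, sub_zero]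
      have hγ'P : δ - f t₀ ∈ PhicPos r a c :=
        (phicpos_iff hdata c _).mpr ⟨hγ'2, hγ'pos, hγ'0, hγ'c⟩
      have hnon : (Finset.univ.erase t₀).Nonempty := by
        rw [← Finset.card_pos, Finset.card_erase_of_mem (Finset.mem_univ t₀),
          Finset.card_univ, Fintype.card_fin]
        omega
      exact max_no_sum hdata c ⟨hψP, hψmax⟩ k f (Finset.univ.erase t₀)
        (fun s hs => hoth s (Finset.ne_of_mem_erase hs)) hnon (by rw [hid]; exact hγ'P)
end

section
/- Let J ⊆ ℤ/ℓℤ, let μ be a J-core, and let ν be an ℓ-core of μ, i.e., an ℓ-core obtained from μ by a sequence of elementary ℓ-steps. Then ν is a J-core. -/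
/-- The `ℓ`-residue of the box in row `r` and column `s` (0-indexed) is `s − r` modulo `ℓ`. -/
def boxRes (ℓ : ℕ) (c : ℕ × ℕ) : ZMod ℓ := (c.2 : ZMod ℓ) - (c.1 : ZMod ℓ)

/-- A box `c` of the Young diagram `λ` is removable if deleting it leaves a Young diagram. -/
def Removable (lam : YoungDiagram) (c : ℕ × ℕ) : Prop :=
  c ∈ lam.cells ∧ ∃ mu : YoungDiagram, mu.cells = lam.cells.erase c

/-- `Removals λ μ` holds if `μ` is obtained from `λ` by deleting a sequence of
removable boxes (i.e. `μ ≤ λ`). -/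
def Removals (lam mu : YoungDiagram) : Prop :=
  Relation.ReflTransGen
    (fun x y : YoungDiagram => ∃ c ∈ x.cells, y.cells = x.cells.erase c) lam mu

/-- An elementary `ℓ`-step from `λ` is a partition `μ ≤ λ` such that the diagram of `λ`
differs from that of `μ` by exactly `ℓ` boxes having pairwise distinct `ℓ`-residues. -/
def ElemStep (ℓ : ℕ) (lam mu : YoungDiagram) : Prop :=
  Removals lam mu ∧ (lam.cells \ mu.cells).card = ℓ ∧
    ∀ c ∈ lam.cells \ mu.cells, ∀ c' ∈ lam.cells \ mu.cells,
      c ≠ c' → boxRes ℓ c ≠ boxRes ℓ c'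

/-- A partition is an `ℓ`-core if it admits no elementary `ℓ`-step. -/
def IsLCore (ℓ : ℕ) (lam : YoungDiagram) : Prop := ¬ ∃ mu, ElemStep ℓ lam mu

/-- A `J`-core is a partition with no `J`-removable boxes, i.e. no removable box whose
`ℓ`-residue lies in `J`. -/
def IsJCore (ℓ : ℕ) (J : Set (ZMod ℓ)) (lam : YoungDiagram) : Prop :=
  ¬ ∃ c, Removable lam c ∧ boxRes ℓ c ∈ J

namespace JC

def bta (lam : YoungDiagram) (i : ℕ) : ℤ := (lam.rowLen i : ℤ) - i

def Bmem (lam : YoungDiagram) (z : ℤ) : Prop := ∃ i, bta lam i = z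

lemma bta_strictAnti (lam : YoungDiagram) : StrictAnti (bta lam) := by
  have h : ∀ i : ℕ, bta lam (i + 1) < bta lam i := by
    intro i
    have := lam.rowLen_anti i (i + 1) (by omega)
    unfold bta
    push_cast
    omega
  exact strictAnti_nat_of_succ_lt h

lemma bta_inj (lam : YoungDiagram) : Function.Injective (bta lam) :=
  (bta_strictAnti lam).injective

lemma bta_le_of_le (lam : YoungDiagram) {i j : ℕ} (h : i ≤ j) : bta lam j ≤ bta lam i :=
  (bta_strictAnti lam).antitone h

lemma rowLen_zero_iff {lam : YoungDiagram} {i : ℕ} :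
    lam.rowLen i = 0 ↔ lam.colLen 0 ≤ i := by
  rw [← not_lt, ← YoungDiagram.mem_iff_lt_colLen, YoungDiagram.mem_iff_lt_rowLen]
  omega

lemma Bmem_of_neg (lam : YoungDiagram) {z : ℤ} (hz : z ≤ -(lam.colLen 0 : ℤ)) :
    Bmem lam z := by
  refine ⟨(-z).toNat, ?_⟩
  have h0 : (0:ℤ) ≤ -z := by
    have : (0:ℤ) ≤ (lam.colLen 0 : ℤ) := Int.natCast_nonneg _
    omega
  have hr : lam.rowLen (-z).toNat = 0 := by
    rw [rowLen_zero_iff]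
    omega
  unfold bta
  rw [hr]
  omega

/-- row lengths determine rowLen -/
lemma rowLen_unique {lam : YoungDiagram} {i n : ℕ}
    (h : ∀ j : ℕ, (i, j) ∈ lam ↔ j < n) : lam.rowLen i = n := by
  have h1 := h n
  have h2 := h (lam.rowLen i)
  rw [YoungDiagram.mem_iff_lt_rowLen] at h1 h2
  omega

/-- Characterization of a single box removal (given the erased diagram). -/
lemma erase_spec {lam rho : YoungDiagram} {c : ℕ × ℕ}
    (hc : c ∈ lam.cells) (he : rho.cells = lam.cells.erase c) :
    c.2 + 1 = lam.rowLen c.1 ∧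
    bta rho = Function.update (bta lam) c.1 (bta lam c.1 - 1) := by
  obtain ⟨r, s⟩ := c
  rw [YoungDiagram.mem_cells] at hc
  have hmemrho : ∀ z : ℕ × ℕ, z ∈ rho ↔ z ∈ lam ∧ z ≠ (r, s) := by
    intro z
    rw [← YoungDiagram.mem_cells, he, Finset.mem_erase, YoungDiagram.mem_cells, and_comm]
  have hs1 : ¬ (r, s+1) ∈ lam := by
    intro hmem
    have h1 : (r, s+1) ∈ rho := (hmemrho _).2 ⟨hmem, by simp⟩
    have h2 : (r, s) ∈ rho := by
      apply rho.up_left_mem (le_refl r) (Nat.le_succ s) h1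
    rw [hmemrho] at h2
    exact h2.2 rfl
  have hrl : lam.rowLen r = s + 1 := by
    rw [YoungDiagram.mem_iff_lt_rowLen] at hc hs1
    omega
  constructor
  · simpa using hrl.symm
  · funext i
    by_cases hi : i = r
    · subst hi
      have : rho.rowLen i = s := by
        apply rowLen_unique
        intro j
        rw [hmemrho, YoungDiagram.mem_iff_lt_rowLen, hrl]
        constructor
        · rintro ⟨h1, h2⟩
          simp only [ne_eq, Prod.mk.injEq, true_and] at h2
          omega
        · intro hj
          exact ⟨by omega, by simp only [ne_eq, Prod.mk.injEq, true_and]; omega⟩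
      unfold bta
      rw [this, Function.update_self, hrl]
      push_cast; ring
    · have : rho.rowLen i = lam.rowLen i := by
        apply rowLen_unique
        intro j
        rw [hmemrho, YoungDiagram.mem_iff_lt_rowLen]
        constructor
        · rintro ⟨h1, _⟩; exact h1
        · intro hj
          exact ⟨hj, by simp only [ne_eq, Prod.mk.injEq]; tauto⟩
      unfold bta
      rw [this, Function.update_of_ne hi]

lemma boxRes_eq {ℓ : ℕ} {lam : YoungDiagram} {c : ℕ × ℕ}
    (hc : c ∈ lam.cells) (hrl : (c.2 : ℤ) + 1 = lam.rowLen c.1) :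
    boxRes ℓ c = ((bta lam c.1 - 1 : ℤ) : ZMod ℓ) := by
  unfold boxRes bta
  have h2 := congrArg (fun z : ℤ => (z : ZMod ℓ)) hrl
  push_cast at h2 ⊢
  linear_combination h2

end JC

namespace JC

lemma Bmem_update_iff {lam rho : YoungDiagram} {i : ℕ} {v : ℤ}
    (h : bta rho = Function.update (bta lam) i v) (z : ℤ) :
    Bmem rho z ↔ (Bmem lam z ∧ z ≠ bta lam i) ∨ z = v := by
  constructor
  · rintro ⟨i', hi'⟩
    rw [h] at hi'
    by_cases hii : i' = i
    · subst hii; rw [Function.update_self] at hi'; right; exact hi'.symm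
    · rw [Function.update_of_ne hii] at hi'
      left
      exact ⟨⟨i', hi'⟩, fun hz => hii (bta_inj lam (by rw [hi', hz]))⟩
  · rintro (⟨⟨i', hi'⟩, hz⟩ | rfl)
    · refine ⟨i', ?_⟩
      rw [h, Function.update_of_ne, hi']
      intro hii; subst hii; exact hz hi'.symm
    · exact ⟨i, by rw [h, Function.update_self]⟩

/-- Construction of a single box removal from a beta number `b` with `b - 1` vacant. -/
lemma remove_box (ℓ : ℕ) {lam : YoungDiagram} {b : ℤ}
    (hb : Bmem lam b) (hb1 : ¬ Bmem lam (b - 1)) :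
    ∃ (rho : YoungDiagram) (c : ℕ × ℕ), c ∈ lam.cells ∧ rho.cells = lam.cells.erase c ∧
      boxRes ℓ c = ((b - 1 : ℤ) : ZMod ℓ) ∧
      (∀ z, Bmem rho z ↔ (Bmem lam z ∧ z ≠ b) ∨ z = b - 1) := by
  obtain ⟨i, hi⟩ := hb
  have hpos : 1 ≤ lam.rowLen i := by
    by_contra hcon
    have h0 : lam.rowLen i = 0 := by omega
    have h1 : lam.rowLen (i+1) = 0 := by
      rw [rowLen_zero_iff] at h0 ⊢; omega
    apply hb1 ⟨i + 1, ?_⟩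
    unfold bta at hi ⊢
    rw [h0] at hi
    rw [h1]
    push_cast at hi ⊢
    omega
  have hlt : bta lam (i+1) < b := hi ▸ bta_strictAnti lam (by omega : i < i + 1)
  have hne : bta lam (i+1) ≠ b - 1 := fun hc => hb1 ⟨i+1, hc⟩
  have hle : bta lam (i+1) ≤ b - 2 := by omega
  have hrl1 : (lam.rowLen (i+1) : ℤ) ≤ (lam.rowLen i : ℤ) - 1 := by
    unfold bta at hi hle
    push_cast at hle
    omega
  obtain ⟨s, hs⟩ : ∃ s, lam.rowLen i = s + 1 := ⟨lam.rowLen i - 1, by omega⟩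
  have hcmem : (i, s) ∈ lam := by
    rw [YoungDiagram.mem_iff_lt_rowLen]; omega
  have hlower : IsLowerSet (↑(lam.cells.erase (i, s)) : Set (ℕ × ℕ)) := by
    rintro ⟨r1, s1⟩ ⟨r2, s2⟩ hle2 hmem
    simp only [Finset.coe_erase, Set.mem_diff, Finset.mem_coe, YoungDiagram.mem_cells,
      Set.mem_singleton_iff] at hmem ⊢
    obtain ⟨hmem1, hmem2⟩ := hmem
    obtain ⟨hr, hsle⟩ := hle2
    simp only at hr hsle
    constructor
    · exact lam.up_left_mem hr hsle hmem1
    · intro hc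
      rw [Prod.mk.injEq] at hc
      rw [YoungDiagram.mem_iff_lt_rowLen] at hmem1
      rcases Nat.lt_or_ge i r1 with hlt1 | hge
      · have h5 : lam.rowLen r1 ≤ lam.rowLen (i+1) := lam.rowLen_anti _ _ (by omega)
        omega
      · have hri : r1 = i := by omega
        subst hri
        apply hmem2
        rw [Prod.mk.injEq]
        omega
  refine ⟨⟨lam.cells.erase (i, s), hlower⟩, (i, s), by simpa using hcmem, rfl, ?_, ?_⟩
  · have := erase_spec (lam := lam) (rho := ⟨lam.cells.erase (i, s), hlower⟩)
      (c := (i, s)) (by simpa using hcmem) rfl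
    rw [boxRes_eq (by simpa using hcmem) (by push_cast; omega), hi]
  · intro z
    have hes := erase_spec (lam := lam) (rho := ⟨lam.cells.erase (i, s), hlower⟩)
      (c := (i, s)) (by simpa using hcmem) rfl
    rw [Bmem_update_iff hes.2, hi]

end JC

namespace JC

lemma removals_subset {lam rho : YoungDiagram} (h : Removals lam rho) :
    rho.cells ⊆ lam.cells := by
  induction h with
  | refl => exact subset_rfl
  | tail _hstep hstep ih =>
    obtain ⟨c, _hc, he⟩ := hstep
    exact (he ▸ Finset.erase_subset _ _).trans ih

noncomputable def cnt (ℓ M : ℕ) (x : ℤ) (j : ZMod ℓ) (lam : YoungDiagram) : ℤ :=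
  ∑ i ∈ Finset.range M, if x ≤ bta lam i ∧ ((bta lam i : ZMod ℓ) = j) then 1 else 0

lemma cnt_erase {ℓ M : ℕ} {x : ℤ} {j : ZMod ℓ} {lam rho : YoungDiagram} {c : ℕ × ℕ}
    (hc : c ∈ lam.cells) (he : rho.cells = lam.cells.erase c)
    (hM : c.1 < M) (hx : x ≤ bta lam c.1 - 1) :
    cnt ℓ M x j rho = cnt ℓ M x j lam
      + (if boxRes ℓ c = j then 1 else 0) - (if boxRes ℓ c + 1 = j then 1 else 0) := by
  obtain ⟨hrl, hupd⟩ := erase_spec hc he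
  have hres : boxRes ℓ c = ((bta lam c.1 - 1 : ℤ) : ZMod ℓ) :=
    boxRes_eq hc (by push_cast; omega)
  set f : ℕ → ℤ := fun i => if x ≤ bta lam i ∧ ((bta lam i : ZMod ℓ) = j) then 1 else 0
    with hf
  have hfun : (fun i => if x ≤ bta rho i ∧ ((bta rho i : ZMod ℓ) = j) then (1:ℤ) else 0)
      = Function.update f c.1
        (if x ≤ bta lam c.1 - 1 ∧ (((bta lam c.1 - 1 : ℤ) : ZMod ℓ) = j) then 1 else 0) := by
    funext i
    by_cases hi : i = c.1
    · subst hi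
      rw [Function.update_self, hupd, Function.update_self]
    · rw [Function.update_of_ne hi, hupd, Function.update_of_ne hi, hf]
  have hmem : c.1 ∈ Finset.range M := Finset.mem_range.mpr hM
  have h1 : cnt ℓ M x j rho
      = (if x ≤ bta lam c.1 - 1 ∧ (((bta lam c.1 - 1 : ℤ) : ZMod ℓ) = j) then 1 else 0)
        + ∑ i ∈ Finset.range M \ {c.1}, f i := by
    rw [cnt, hfun, Finset.sum_update_of_mem hmem]
  have h2 : cnt ℓ M x j lam
      = (if x ≤ bta lam c.1 ∧ ((bta lam c.1 : ZMod ℓ) = j) then 1 else 0)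
        + ∑ i ∈ Finset.range M \ {c.1}, f i := by
    rw [cnt, Finset.sum_eq_sum_sdiff_singleton_add hmem, add_comm]
  rw [h1, h2, hres]
  have ht1 : x ≤ bta lam c.1 - 1 := hx
  have ht2 : x ≤ bta lam c.1 := by omega
  simp only [ht1, ht2, true_and]
  have hcast : ((bta lam c.1 : ℤ) : ZMod ℓ) = ((bta lam c.1 - 1 : ℤ) : ZMod ℓ) + 1 := by
    push_cast; ring
  rw [hcast]
  split_ifs <;> first | ring | (exfalso; simp_all)

lemma cnt_removals {ℓ M : ℕ} {x : ℤ} {j : ZMod ℓ} {mu : YoungDiagram}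
    (hM : mu.colLen 0 ≤ M) (hx : x ≤ 1 - (mu.colLen 0 : ℤ)) :
    ∀ {lam rho : YoungDiagram}, Removals lam rho → lam.cells ⊆ mu.cells →
      cnt ℓ M x j rho = cnt ℓ M x j lam +
        ∑ c ∈ lam.cells \ rho.cells,
          ((if boxRes ℓ c = j then (1:ℤ) else 0) - (if boxRes ℓ c + 1 = j then 1 else 0)) := by
  intro lam rho h
  induction h using Relation.ReflTransGen.head_induction_on with
  | refl =>
    intro _
    simp
  | @head a b hstep _htail ih =>
    intro hsub
    obtain ⟨c, hc, he⟩ := hstep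
    have hbsub : b.cells ⊆ a.cells := he ▸ Finset.erase_subset _ _
    have hrho : Removals b rho := _htail
    have hrsub : rho.cells ⊆ b.cells := removals_subset hrho
    have hcmu : c ∈ mu.cells := hsub hc
    have hc1 : c.1 < mu.colLen 0 := by
      rw [YoungDiagram.mem_cells] at hcmu
      have : (c.1, 0) ∈ mu := mu.up_left_mem le_rfl (Nat.zero_le _) (by
        rwa [show (c.1, c.2) = c from rfl])
      rwa [YoungDiagram.mem_iff_lt_colLen] at this
    have hM' : c.1 < M := lt_of_lt_of_le hc1 hM
    have hx' : x ≤ bta a c.1 - 1 := by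
      have hca : (c.1, c.2) ∈ a := by rw [← YoungDiagram.mem_cells]; exact hc
      rw [YoungDiagram.mem_iff_lt_rowLen] at hca
      unfold bta
      omega
    have hdiff : a.cells \ rho.cells = insert c (b.cells \ rho.cells) := by
      ext z
      simp only [Finset.mem_sdiff, Finset.mem_insert, he, Finset.mem_erase]
      constructor
      · rintro ⟨hza, hzr⟩
        by_cases hzc : z = c
        · exact Or.inl hzc
        · exact Or.inr ⟨⟨hzc, hza⟩, hzr⟩
      · rintro (rfl | ⟨⟨hzc, hza⟩, hzr⟩)
        · refine ⟨hc, fun hcr => ?_⟩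
          have := hrsub hcr
          rw [he, Finset.mem_erase] at this
          exact this.1 rfl
        · exact ⟨hza, hzr⟩
    have hcnot : c ∉ b.cells \ rho.cells := by
      rw [he]
      simp only [Finset.mem_sdiff, Finset.mem_erase]
      tauto
    rw [hdiff, Finset.sum_insert hcnot, ih (hbsub.trans hsub),
      cnt_erase hc he hM' hx']
    ring

end JC

namespace JC

lemma sum_res_eq {ℓ : ℕ} (hℓ : 0 < ℓ) {S : Finset (ℕ × ℕ)} (hcard : S.card = ℓ)
    (hinj : ∀ c ∈ S, ∀ c' ∈ S, c ≠ c' → boxRes ℓ c ≠ boxRes ℓ c') (j : ZMod ℓ) :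
    (∑ c ∈ S, if boxRes ℓ c = j then (1:ℤ) else 0) = 1 := by
  haveI : NeZero ℓ := ⟨hℓ.ne'⟩
  have hinj' : ∀ c ∈ S, ∀ c' ∈ S, boxRes ℓ c = boxRes ℓ c' → c = c' := by
    intro c hc c' hc' h
    by_contra hne
    exact hinj c hc c' hc' hne h
  have himg : S.image (boxRes ℓ) = Finset.univ := by
    apply Finset.eq_univ_of_card
    rw [Finset.card_image_of_injOn hinj', hcard, ZMod.card]
  calc (∑ c ∈ S, if boxRes ℓ c = j then (1:ℤ) else 0)
      = ∑ v ∈ S.image (boxRes ℓ), if v = j then (1:ℤ) else 0 := by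
        rw [Finset.sum_image hinj']
    _ = ∑ v ∈ (Finset.univ : Finset (ZMod ℓ)), if v = j then (1:ℤ) else 0 := by rw [himg]
    _ = 1 := by rw [Finset.sum_ite_eq' Finset.univ j (fun _ => (1:ℤ))]; simp

lemma cnt_elemStep {ℓ M : ℕ} (hℓ : 0 < ℓ) {x : ℤ} {j : ZMod ℓ} {mu : YoungDiagram}
    (hM : mu.colLen 0 ≤ M) (hx : x ≤ 1 - (mu.colLen 0 : ℤ))
    {lam rho : YoungDiagram} (h : ElemStep ℓ lam rho) (hsub : lam.cells ⊆ mu.cells) :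
    cnt ℓ M x j rho = cnt ℓ M x j lam := by
  obtain ⟨hrem, hcard, hinj⟩ := h
  rw [cnt_removals hM hx hrem hsub]
  rw [Finset.sum_sub_distrib]
  rw [sum_res_eq hℓ hcard hinj j]
  have h2 : (∑ c ∈ lam.cells \ rho.cells, if boxRes ℓ c + 1 = j then (1:ℤ) else 0)
      = ∑ c ∈ lam.cells \ rho.cells, if boxRes ℓ c = j - 1 then (1:ℤ) else 0 := by
    apply Finset.sum_congr rfl
    intro c _
    congr 1
    rw [eq_iff_iff]
    constructor <;> intro hh
    · rw [← hh]; ring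
    · rw [hh]; ring
  rw [h2, sum_res_eq hℓ hcard hinj (j-1)]
  ring

lemma cnt_chain {ℓ M : ℕ} (hℓ : 0 < ℓ) {x : ℤ} {j : ZMod ℓ} {mu nu : YoungDiagram}
    (hM : mu.colLen 0 ≤ M) (hx : x ≤ 1 - (mu.colLen 0 : ℤ))
    (h : Relation.ReflTransGen (ElemStep ℓ) mu nu) :
    nu.cells ⊆ mu.cells ∧ cnt ℓ M x j nu = cnt ℓ M x j mu := by
  induction h with
  | refl => exact ⟨subset_rfl, rfl⟩
  | @tail b c _hstep hstep ih =>
    obtain ⟨ih1, ih2⟩ := ih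
    have h1 : c.cells ⊆ b.cells := removals_subset hstep.1
    exact ⟨h1.trans ih1, by rw [cnt_elemStep hℓ hM hx hstep ih1, ih2]⟩

end JC

namespace JC

lemma res_ne {ℓ : ℕ} {b : ℤ} {m m' : ℕ} (h : m < ℓ) (h' : m' < ℓ) (hne : m ≠ m') :
    ((b - 1 - m : ℤ) : ZMod ℓ) ≠ ((b - 1 - m' : ℤ) : ZMod ℓ) := by
  intro hc
  have h0 : (((b - 1 - m) - (b - 1 - m') : ℤ) : ZMod ℓ) = 0 := by
    push_cast
    push_cast at hc
    rw [hc]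
    ring
  rw [ZMod.intCast_zmod_eq_zero_iff_dvd] at h0
  have h2 : ((b - 1 - m) - (b - 1 - m') : ℤ) = 0 :=
    Int.eq_zero_of_dvd_of_natAbs_lt_natAbs h0 (by omega)
  omega

lemma diffA {α : Type*} [DecidableEq α] {L R1 R2 : Finset α} {c : α} (hc : c ∈ L)
    (h1 : R1 = L.erase c) (h2 : R2 ⊆ R1) :
    L \ R2 = insert c (R1 \ R2) ∧ c ∉ R1 \ R2 := by
  subst h1
  constructor
  · ext z
    simp only [Finset.mem_sdiff, Finset.mem_insert, Finset.mem_erase]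
    constructor
    · rintro ⟨hz1, hz2⟩
      by_cases hzc : z = c
      · exact Or.inl hzc
      · exact Or.inr ⟨⟨hzc, hz1⟩, hz2⟩
    · rintro (rfl | ⟨⟨hzc, hz1⟩, hz2⟩)
      · refine ⟨hc, fun hcr => ?_⟩
        have := h2 hcr
        rw [Finset.mem_erase] at this
        exact this.1 rfl
      · exact ⟨hz1, hz2⟩
  · simp only [Finset.mem_sdiff, Finset.mem_erase]
    tauto

lemma diffB {α : Type*} [DecidableEq α] {L R1 R2 : Finset α} {c : α} (hc : c ∈ R1)
    (h1 : R1 ⊆ L) (h2 : R2 = R1.erase c) :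
    L \ R2 = insert c (L \ R1) ∧ c ∉ L \ R1 := by
  subst h2
  constructor
  · ext z
    simp only [Finset.mem_sdiff, Finset.mem_insert, Finset.mem_erase]
    constructor
    · rintro ⟨hz1, hz2⟩
      by_cases hzc : z = c
      · exact Or.inl hzc
      · exact Or.inr ⟨hz1, fun hzr => hz2 ⟨hzc, hzr⟩⟩
    · rintro (rfl | ⟨hz1, hz2⟩)
      · exact ⟨h1 hc, fun hcr => hcr.1 rfl⟩
      · exact ⟨hz1, fun hcr => hz2 hcr.2⟩
  · simp only [Finset.mem_sdiff]
    tauto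

lemma rim {ℓ : ℕ} (hℓ : 0 < ℓ) : ∀ (k : ℕ) (lam : YoungDiagram) (b : ℤ),
    k + 1 ≤ ℓ → Bmem lam b → ¬ Bmem lam (b - ((k : ℤ) + 1)) →
    ∃ rho : YoungDiagram, Removals lam rho ∧
      (∀ z, Bmem rho z ↔ (Bmem lam z ∧ z ≠ b) ∨ z = b - ((k : ℤ) + 1)) ∧
      (lam.cells \ rho.cells).card = k + 1 ∧
      (∀ c ∈ lam.cells \ rho.cells, ∀ c' ∈ lam.cells \ rho.cells,
        c ≠ c' → boxRes ℓ c ≠ boxRes ℓ c') ∧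
      (∀ c ∈ lam.cells \ rho.cells, ∃ m : ℕ, m ≤ k ∧ boxRes ℓ c = ((b - 1 - m : ℤ) : ZMod ℓ)) := by
  intro k
  induction k with
  | zero =>
    intro lam b _hk hb hnb
    have hnb1 : ¬ Bmem lam (b - 1) := by
      intro hcon; apply hnb
      have heq : b - (((0:ℕ) : ℤ) + 1) = b - 1 := by norm_num
      rw [heq]; exact hcon
    obtain ⟨rho, c, hc, he, hres, hBm⟩ := remove_box ℓ hb hnb1
    refine ⟨rho, Relation.ReflTransGen.single ⟨c, hc, he⟩, ?_, ?_, ?_, ?_⟩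
    · intro z
      rw [hBm z]
      constructor <;> rintro (h | h) <;>
        first
          | exact Or.inl h
          | (right; rw [h]; push_cast; ring)
    · have hdiff : lam.cells \ rho.cells = {c} := by
        rw [he]
        ext z
        simp only [Finset.mem_sdiff, Finset.mem_erase, Finset.mem_singleton]
        constructor
        · rintro ⟨hz1, hz2⟩
          by_contra hzc
          exact hz2 ⟨hzc, hz1⟩
        · rintro rfl
          exact ⟨hc, fun hcon => hcon.1 rfl⟩
      rw [hdiff]
      simp
    · intro c1 hc1 c2 hc2 hne _
      have hdiff : lam.cells \ rho.cells = {c} := by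
        rw [he]
        ext z
        simp only [Finset.mem_sdiff, Finset.mem_erase, Finset.mem_singleton]
        constructor
        · rintro ⟨hz1, hz2⟩
          by_contra hzc
          exact hz2 ⟨hzc, hz1⟩
        · rintro rfl
          exact ⟨hc, fun hcon => hcon.1 rfl⟩
      rw [hdiff, Finset.mem_singleton] at hc1 hc2
      exact hne (hc1.trans hc2.symm)
    · intro c1 hc1
      have hdiff : lam.cells \ rho.cells = {c} := by
        rw [he]
        ext z
        simp only [Finset.mem_sdiff, Finset.mem_erase, Finset.mem_singleton]
        constructor
        · rintro ⟨hz1, hz2⟩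
          by_contra hzc
          exact hz2 ⟨hzc, hz1⟩
        · rintro rfl
          exact ⟨hc, fun hcon => hcon.1 rfl⟩
      rw [hdiff, Finset.mem_singleton] at hc1
      subst hc1
      exact ⟨0, le_rfl, by rw [hres]; norm_num⟩
  | succ k ih =>
    intro lam b hk hb hnb
    by_cases h1 : Bmem lam (b - 1)
    · -- Case 2: b-1 occupied; recurse on (lam, b-1, k), then remove b.
      have heq2 : b - (((k + 1 : ℕ) : ℤ) + 1) = (b - 1) - ((k : ℤ) + 1) := by push_cast; ring
      have hnb' : ¬ Bmem lam ((b - 1) - ((k : ℤ) + 1)) := by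
        intro hcon; apply hnb; rw [heq2]; exact hcon
      obtain ⟨rho', hrem', hBm', hcard', hinj', hres'⟩ :=
        ih lam (b - 1) (by omega) h1 hnb'
      have hb' : Bmem rho' b := by
        rw [hBm']
        exact Or.inl ⟨hb, by omega⟩
      have hnb1' : ¬ Bmem rho' (b - 1) := by
        rw [hBm']
        rintro (⟨_, hcon⟩ | hcon) <;> omega
      obtain ⟨rho'', c'', hc'', he'', hres'', hBm''⟩ := remove_box ℓ hb' hnb1'
      obtain ⟨hins, hnotin⟩ :=
        diffB hc'' (removals_subset hrem') he''
      refine ⟨rho'', hrem'.tail ⟨c'', hc'', he''⟩, ?_, ?_, ?_, ?_⟩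
      · intro z
        rw [hBm'' z, hBm' z]
        constructor
        · rintro (⟨(⟨hz1, hz2⟩ | hz3), hz4⟩ | rfl)
          · exact Or.inl ⟨hz1, hz4⟩
          · right; omega
          · exact Or.inl ⟨h1, by omega⟩
        · rintro (⟨hz1, hz2⟩ | rfl)
          · by_cases hzb1 : z = b - 1
            · exact Or.inr hzb1
            · exact Or.inl ⟨Or.inl ⟨hz1, hzb1⟩, hz2⟩
          · left
            constructor
            · right; push_cast; ring
            · omega
      · rw [hins, Finset.card_insert_of_notMem hnotin, hcard']
      · intro c1 hc1 c2 hc2 hne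
        rw [hins, Finset.mem_insert] at hc1 hc2
        rcases hc1 with rfl | hc1 <;> rcases hc2 with rfl | hc2
        · exact absurd rfl hne
        · obtain ⟨m, hm, hmres⟩ := hres' c2 hc2
          rw [hres'', hmres]
          have : ((b - 1 : ℤ) : ZMod ℓ) = ((b - 1 - (0:ℕ) : ℤ) : ZMod ℓ) := by norm_num
          rw [this]
          have h2 : b - 1 - 1 - (m : ℤ) = b - 1 - ((m + 1 : ℕ) : ℤ) := by push_cast; ring
          rw [h2]
          exact res_ne (by omega) (by omega) (by omega)
        · obtain ⟨m, hm, hmres⟩ := hres' c1 hc1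
          rw [hres'', hmres]
          have : ((b - 1 : ℤ) : ZMod ℓ) = ((b - 1 - (0:ℕ) : ℤ) : ZMod ℓ) := by norm_num
          rw [this]
          have h2 : b - 1 - 1 - (m : ℤ) = b - 1 - ((m + 1 : ℕ) : ℤ) := by push_cast; ring
          rw [h2]
          exact (res_ne (by omega) (by omega) (by omega)).symm
        · exact hinj' c1 hc1 c2 hc2 hne
      · intro c1 hc1
        rw [hins, Finset.mem_insert] at hc1
        rcases hc1 with rfl | hc1
        · exact ⟨0, by omega, by rw [hres'']; norm_num⟩
        · obtain ⟨m, hm, hmres⟩ := hres' c1 hc1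
          refine ⟨m + 1, by omega, ?_⟩
          rw [hmres]
          congr 1
          push_cast
          ring
    · -- Case 1: b-1 vacant; remove b first, then recurse on (rho1, b-1, k).
      obtain ⟨rho1, c, hc, he, hres, hBm1⟩ := remove_box ℓ hb h1
      have hb1 : Bmem rho1 (b - 1) := by rw [hBm1]; exact Or.inr rfl
      have heq2 : b - (((k + 1 : ℕ) : ℤ) + 1) = (b - 1) - ((k : ℤ) + 1) := by push_cast; ring
      have hnb1 : ¬ Bmem rho1 ((b - 1) - ((k : ℤ) + 1)) := by
        rw [hBm1]
        rintro (⟨hcon, _⟩ | hcon)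
        · apply hnb; rw [heq2]; exact hcon
        · omega
      obtain ⟨rho'', hrem'', hBm'', hcard'', hinj'', hres''⟩ :=
        ih rho1 (b - 1) (by omega) hb1 hnb1
      obtain ⟨hins, hnotin⟩ := diffA hc he (removals_subset hrem'')
      refine ⟨rho'', Relation.ReflTransGen.head ⟨c, hc, he⟩ hrem'', ?_, ?_, ?_, ?_⟩
      · intro z
        rw [hBm'' z, hBm1 z]
        constructor
        · rintro (⟨(⟨hz1, hz2⟩ | hz3), hz4⟩ | rfl)
          · exact Or.inl ⟨hz1, hz2⟩
          · exact absurd hz3 hz4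
          · right; rw [heq2]
        · rintro (⟨hz1, hz2⟩ | rfl)
          · have hzb1 : z ≠ b - 1 := fun hcon => h1 (hcon ▸ hz1)
            exact Or.inl ⟨Or.inl ⟨hz1, hz2⟩, hzb1⟩
          · right; rw [heq2]
      · rw [hins, Finset.card_insert_of_notMem hnotin, hcard'']
      · intro c1 hc1 c2 hc2 hne
        rw [hins, Finset.mem_insert] at hc1 hc2
        rcases hc1 with rfl | hc1 <;> rcases hc2 with rfl | hc2
        · exact absurd rfl hne
        · obtain ⟨m, hm, hmres⟩ := hres'' c2 hc2
          rw [hres, hmres]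
          have : ((b - 1 : ℤ) : ZMod ℓ) = ((b - 1 - (0:ℕ) : ℤ) : ZMod ℓ) := by norm_num
          rw [this]
          have h2 : b - 1 - 1 - (m : ℤ) = b - 1 - ((m + 1 : ℕ) : ℤ) := by push_cast; ring
          rw [h2]
          exact res_ne (by omega) (by omega) (by omega)
        · obtain ⟨m, hm, hmres⟩ := hres'' c1 hc1
          rw [hres, hmres]
          have : ((b - 1 : ℤ) : ZMod ℓ) = ((b - 1 - (0:ℕ) : ℤ) : ZMod ℓ) := by norm_num
          rw [this]
          have h2 : b - 1 - 1 - (m : ℤ) = b - 1 - ((m + 1 : ℕ) : ℤ) := by push_cast; ring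
          rw [h2]
          exact (res_ne (by omega) (by omega) (by omega)).symm
        · exact hinj'' c1 hc1 c2 hc2 hne
      · intro c1 hc1
        rw [hins, Finset.mem_insert] at hc1
        rcases hc1 with rfl | hc1
        · exact ⟨0, by omega, by rw [hres]; norm_num⟩
        · obtain ⟨m, hm, hmres⟩ := hres'' c1 hc1
          refine ⟨m + 1, by omega, ?_⟩
          rw [hmres]
          congr 1
          push_cast
          ring

end JC

namespace JC

lemma core_closed {ℓ : ℕ} (hℓ : 0 < ℓ) {nu : YoungDiagram} (hnu : IsLCore ℓ nu) :
    ∀ b : ℤ, Bmem nu b → Bmem nu (b - ℓ) := by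
  intro b hb
  by_contra hcon
  apply hnu
  have heq : b - (((ℓ - 1 : ℕ) : ℤ) + 1) = b - ℓ := by
    have : (1:ℕ) ≤ ℓ := hℓ
    push_cast [this]
    ring
  obtain ⟨rho, hrem, _, hcard, hinj, _⟩ :=
    rim hℓ (ℓ - 1) nu b (by omega) hb (by rw [heq]; exact hcon)
  exact ⟨rho, hrem, by rw [hcard]; omega, hinj⟩

lemma core_descent {ℓ : ℕ} {nu : YoungDiagram}
    (hcc : ∀ b : ℤ, Bmem nu b → Bmem nu (b - ℓ)) :
    ∀ (t : ℕ) (b : ℤ), Bmem nu b → Bmem nu (b - (t : ℤ) * ℓ) := by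
  intro t
  induction t with
  | zero => intro b hb; simpa using hb
  | succ t ih =>
    intro b hb
    have h1 := hcc _ (ih b hb)
    have : b - ((t:ℤ)) * ℓ - ℓ = b - ((t:ℤ) + 1) * ℓ := by ring
    rw [this] at h1
    have h2 : b - ((t + 1 : ℕ) : ℤ) * ℓ = b - ((t:ℤ) + 1) * ℓ := by push_cast; ring
    rw [h2]
    exact h1

lemma jcore_step {ℓ : ℕ} {J : Set (ZMod ℓ)} {mu : YoungDiagram} (hmu : IsJCore ℓ J mu)
    {b : ℤ} (hb : Bmem mu b) (hJ : ((b - 1 : ℤ) : ZMod ℓ) ∈ J) : Bmem mu (b - 1) := by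
  by_contra hcon
  obtain ⟨rho, c, hc, he, hres, _⟩ := remove_box ℓ hb hcon
  exact hmu ⟨c, ⟨hc, ⟨rho, he⟩⟩, by rw [hres]; exact hJ⟩

lemma elem_chain_subset {ℓ : ℕ} {mu nu : YoungDiagram}
    (h : Relation.ReflTransGen (ElemStep ℓ) mu nu) : nu.cells ⊆ mu.cells := by
  induction h with
  | refl => exact subset_rfl
  | tail _ hstep ih => exact (removals_subset hstep.1).trans ih

lemma rowLen_mono_subset {lam mu : YoungDiagram} (h : lam.cells ⊆ mu.cells) (i : ℕ) :
    lam.rowLen i ≤ mu.rowLen i := by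
  by_cases h0 : lam.rowLen i = 0
  · omega
  · have hmem : (i, lam.rowLen i - 1) ∈ lam := by
      rw [YoungDiagram.mem_iff_lt_rowLen]; omega
    have hmem2 : (i, lam.rowLen i - 1) ∈ mu := by
      rw [← YoungDiagram.mem_cells] at hmem ⊢; exact h hmem
    rw [YoungDiagram.mem_iff_lt_rowLen] at hmem2
    omega

lemma cnt_eq_card {ℓ M : ℕ} (x : ℤ) (j : ZMod ℓ) (lam : YoungDiagram) :
    cnt ℓ M x j lam =
      (((Finset.range M).filter
        (fun i => x ≤ bta lam i ∧ ((bta lam i : ZMod ℓ) = j))).card : ℤ) := by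
  rw [cnt, Finset.sum_boole]

end JC


/-- Let `J ⊆ ℤ/ℓℤ`, let `μ` be a `J`-core, and let `ν` be an `ℓ`-core of `μ`, i.e., an
`ℓ`-core obtained from `μ` by a sequence of elementary `ℓ`-steps.  Then `ν` is a `J`-core. -/

theorem isJCore_of_lcore_of_jcore (ℓ : ℕ) (hℓ : 0 < ℓ) (J : Set (ZMod ℓ))
    (mu nu : YoungDiagram) (hmu : IsJCore ℓ J mu)
    (hsteps : Relation.ReflTransGen (ElemStep ℓ) mu nu)
    (hnu : IsLCore ℓ nu) :
    IsJCore ℓ J nu := by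
  classical
  rintro ⟨⟨r, s⟩, ⟨hcmem, sig, hsig⟩, hcJ⟩
  obtain ⟨hrl, hupd⟩ := JC.erase_spec hcmem hsig
  have hrl' : s + 1 = nu.rowLen r := hrl
  have hupd' : JC.bta sig = Function.update (JC.bta nu) r (JC.bta nu r - 1) := hupd
  set bstar : ℤ := JC.bta nu r with hbdef
  have hbstar : JC.Bmem nu bstar := ⟨r, rfl⟩
  have hres : boxRes ℓ (r, s) = ((bstar - 1 : ℤ) : ZMod ℓ) :=
    JC.boxRes_eq hcmem (show ((s : ℤ)) + 1 = ((nu.rowLen r : ℕ) : ℤ) by exact_mod_cast hrl')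
  have hJb : ((bstar - 1 : ℤ) : ZMod ℓ) ∈ J := by rw [hres] at hcJ; exact hcJ
  -- `bstar - 1` is not a beta number of `nu`
  have hlt2 : JC.bta nu (r + 1) ≤ bstar - 2 := by
    have h1 : JC.bta sig (r + 1) < JC.bta sig r := JC.bta_strictAnti sig (by omega)
    rw [hupd', Function.update_self, Function.update_of_ne (show r + 1 ≠ r by omega)] at h1
    omega
  have hnb1 : ¬ JC.Bmem nu (bstar - 1) := by
    rintro ⟨i, hi⟩
    rcases le_or_gt i r with h | h
    · have := JC.bta_le_of_le nu h
      omega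
    · have := JC.bta_le_of_le nu (show r + 1 ≤ i by omega)
      omega
  have hcc := JC.core_closed hℓ hnu
  have hdesc := JC.core_descent hcc
  have hsubnu := JC.elem_chain_subset hsteps
  -- numerical setup
  set L : ℕ := mu.colLen 0 with hLdef
  set T : ℕ := bstar.natAbs + L + 2 with hTdef
  set x : ℤ := bstar - (T : ℤ) * ℓ with hxdef
  have hTl : (T : ℤ) * 1 ≤ (T : ℤ) * ℓ := by
    apply mul_le_mul_of_nonneg_left (by exact_mod_cast hℓ) (by positivity)
  have habs : bstar ≤ (bstar.natAbs : ℤ) := Int.le_natAbs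
  have hxle : x ≤ -(L : ℤ) - 2 := by omega
  have hx : x ≤ 1 - (L : ℤ) := by omega
  have hx' : x - 1 ≤ 1 - (L : ℤ) := by omega
  have hxb : x ≤ bstar := by omega
  set M : ℕ := mu.rowLen 0 + x.natAbs + L + 2 with hMdef
  have hM : L ≤ M := by omega
  have hIDX : ∀ lam : YoungDiagram, lam.cells ⊆ mu.cells →
      ∀ i : ℕ, x - 1 ≤ JC.bta lam i → i < M := by
    intro lam hsub i hge
    have h1 : lam.rowLen i ≤ mu.rowLen i := JC.rowLen_mono_subset hsub i
    have h2 : mu.rowLen i ≤ mu.rowLen 0 := mu.rowLen_anti 0 i (Nat.zero_le i)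
    have h3 : x - 1 ≤ (lam.rowLen i : ℤ) - (i : ℤ) := hge
    omega
  set j1 : ZMod ℓ := ((bstar : ℤ) : ZMod ℓ) with hj1
  set j0 : ZMod ℓ := ((bstar - 1 : ℤ) : ZMod ℓ) with hj0
  have hj01 : j0 + 1 = j1 := by rw [hj0, hj1]; push_cast; ring
  -- invariance along the chain
  obtain ⟨_, hinv1⟩ := JC.cnt_chain (M := M) (j := j1) hℓ hM hx hsteps
  obtain ⟨_, hinv0⟩ := JC.cnt_chain (M := M) (j := j0) (x := x - 1) hℓ hM hx' hsteps
  -- mu-side inequality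
  have hmuIneq : JC.cnt ℓ M x j1 mu ≤ JC.cnt ℓ M (x - 1) j0 mu := by
    rw [JC.cnt_eq_card, JC.cnt_eq_card]
    set S1 := (Finset.range M).filter
      (fun i => x ≤ JC.bta mu i ∧ ((JC.bta mu i : ZMod ℓ) = j1)) with hS1
    set S0 := (Finset.range M).filter
      (fun i => x - 1 ≤ JC.bta mu i ∧ ((JC.bta mu i : ZMod ℓ) = j0)) with hS0
    set f : ℕ → ℕ := fun i =>
      if h : JC.Bmem mu (JC.bta mu i - 1) then h.choose else 0 with hfd
    have hkey : ∀ i ∈ S1, JC.Bmem mu (JC.bta mu i - 1) ∧ f i ∈ S0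
        ∧ JC.bta mu (f i) = JC.bta mu i - 1 := by
      intro i hi
      rw [hS1, Finset.mem_filter, Finset.mem_range] at hi
      obtain ⟨hiM, hige, hicls⟩ := hi
      have hJmem : ((JC.bta mu i - 1 : ℤ) : ZMod ℓ) ∈ J := by
        have : ((JC.bta mu i - 1 : ℤ) : ZMod ℓ) = j0 := by
          rw [hj0]
          push_cast
          rw [hicls, hj1]
        rw [this, hj0]
        exact hJb
      have hBm : JC.Bmem mu (JC.bta mu i - 1) := JC.jcore_step hmu ⟨i, rfl⟩ hJmem
      have hspec : JC.bta mu (f i) = JC.bta mu i - 1 := by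
        rw [hfd]
        simp only [dif_pos hBm]
        exact hBm.choose_spec
      refine ⟨hBm, ?_, hspec⟩
      rw [hS0, Finset.mem_filter, Finset.mem_range]
      refine ⟨hIDX mu subset_rfl (f i) (by rw [hspec]; omega), by rw [hspec]; omega, ?_⟩
      rw [hspec, hj0]
      push_cast
      rw [hicls, hj1]
    have hcard : S1.card ≤ S0.card := by
      apply Finset.card_le_card_of_injOn f (fun i hi => (hkey i hi).2.1)
      intro i hi i' hi' heq
      have h1 := (hkey i hi).2.2
      have h2 := (hkey i' hi').2.2
      apply JC.bta_inj mu
      rw [heq] at h1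
      omega
    exact_mod_cast hcard
  -- nu-side strict inequality
  have hnuIneq : JC.cnt ℓ M (x - 1) j0 nu + 1 ≤ JC.cnt ℓ M x j1 nu := by
    rw [JC.cnt_eq_card, JC.cnt_eq_card]
    set S1 := (Finset.range M).filter
      (fun i => x ≤ JC.bta nu i ∧ ((JC.bta nu i : ZMod ℓ) = j1)) with hS1
    set S0 := (Finset.range M).filter
      (fun i => x - 1 ≤ JC.bta nu i ∧ ((JC.bta nu i : ZMod ℓ) = j0)) with hS0
    have hrmem : r ∈ S1 := by
      rw [hS1, Finset.mem_filter, Finset.mem_range]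
      exact ⟨hIDX nu hsubnu r (by omega), hxb, rfl⟩
    set g : ℕ → ℕ := fun i =>
      if h : JC.Bmem nu (JC.bta nu i + 1) then h.choose else 0 with hgd
    have hkey : ∀ i ∈ S0, JC.Bmem nu (JC.bta nu i + 1)
        ∧ JC.bta nu i + 1 ≤ bstar - ℓ
        ∧ g i ∈ S1.erase r ∧ JC.bta nu (g i) = JC.bta nu i + 1 := by
      intro i hi
      rw [hS0, Finset.mem_filter, Finset.mem_range] at hi
      obtain ⟨hiM, hige, hicls⟩ := hi
      set b : ℤ := JC.bta nu i with hbd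
      have hdvd : (ℓ : ℤ) ∣ (bstar - 1 - b) := by
        have h0 : ((bstar - 1 - b : ℤ) : ZMod ℓ) = 0 := by
          push_cast
          rw [hj0] at hicls
          push_cast at hicls
          rw [hicls]
          ring
        exact (ZMod.intCast_zmod_eq_zero_iff_dvd _ _).mp h0
      obtain ⟨t, ht⟩ := hdvd
      have hbne : b ≠ bstar - 1 := by
        intro hcon
        exact hnb1 (hcon ▸ ⟨i, rfl⟩)
      have ht1 : 1 ≤ t := by
        by_contra hcon
        push_neg at hcon
        rcases eq_or_lt_of_le (show t ≤ 0 by omega) with h0 | hneg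
        · apply hbne
          rw [h0, mul_zero] at ht
          omega
        · have hBneg := hdesc (-t).toNat b ⟨i, rfl⟩
          have heqq : b - (((-t).toNat : ℤ)) * ℓ = bstar - 1 := by
            have hcast : (((-t).toNat : ℤ)) = -t := by omega
            rw [hcast]
            linarith [ht]
          rw [heqq] at hBneg
          exact hnb1 hBneg
      have hl1 : (ℓ : ℤ) * 1 ≤ (ℓ : ℤ) * t := by
        apply mul_le_mul_of_nonneg_left ht1 (by positivity)
      have hble : b + 1 ≤ bstar - ℓ := by linarith [ht]
      have hBm : JC.Bmem nu (b + 1) := by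
        have hB2 := hdesc t.toNat bstar hbstar
        have heqq : bstar - ((t.toNat : ℤ)) * ℓ = b + 1 := by
          have hcast : ((t.toNat : ℤ)) = t := by omega
          rw [hcast]
          linarith [ht]
        rw [heqq] at hB2
        exact hB2
      have hspec : JC.bta nu (g i) = b + 1 := by
        rw [hgd]
        simp only [dif_pos (show JC.Bmem nu (JC.bta nu i + 1) from hBm)]
        exact hBm.choose_spec
      refine ⟨hBm, hble, ?_, hspec⟩
      rw [Finset.mem_erase]
      constructor
      · intro hcon
        rw [hcon] at hspec
        omega
      · rw [hS1, Finset.mem_filter, Finset.mem_range]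
        refine ⟨hIDX nu hsubnu (g i) (by rw [hspec]; omega), by rw [hspec]; omega, ?_⟩
        rw [hspec]
        have : ((b + 1 : ℤ) : ZMod ℓ) = j0 + 1 := by
          rw [hj0] at hicls ⊢
          push_cast at hicls ⊢
          rw [hicls]
        rw [this, hj01]
    have hcard : S0.card ≤ (S1.erase r).card := by
      apply Finset.card_le_card_of_injOn g (fun i hi => (hkey i hi).2.2.1)
      intro i hi i' hi' heq
      have h1 := (hkey i hi).2.2.2
      have h2 := (hkey i' hi').2.2.2
      apply JC.bta_inj nu
      rw [heq] at h1
      omega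
    have herase : (S1.erase r).card = S1.card - 1 := Finset.card_erase_of_mem hrmem
    have hpos : 1 ≤ S1.card := Finset.card_pos.mpr ⟨r, hrmem⟩
    have : S0.card + 1 ≤ S1.card := by omega
    exact_mod_cast this
  omega
end

section
/- For every α ∈ ℤ^{ℤ/ℓℤ} there exist a unique ℓ-core ν and a unique integer n ∈ ℤ such that α = Res_ℓ(ν) + n·δ, where δ = (1,1,…,1) ∈ ℤ^{ℤ/ℓℤ}. -/
/-- `Res_ℓ(λ) ∈ ℕ^{ℤ/ℓℤ}` (viewed inside `ℤ^{ℤ/ℓℤ}`) is the vector whose `i`-th entry is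
the number of boxes of `λ` of `ℓ`-residue `i`. -/
def ResL (ℓ : ℕ) (lam : YoungDiagram) : ZMod ℓ → ℤ :=
  fun i => ((lam.cells.filter (fun c => boxRes ℓ c = i)).card : ℤ)

namespace CoreShift

open Finset

def beta (lam : YoungDiagram) (q : ℕ) : ℤ := (lam.rowLen q : ℤ) - 1 - q

lemma rowLen_zero_iff {lam : YoungDiagram} {q : ℕ} : lam.rowLen q = 0 ↔ lam.colLen 0 ≤ q := by
  rw [← not_lt, ← YoungDiagram.mem_iff_lt_colLen, YoungDiagram.mem_iff_lt_rowLen]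
  omega

lemma beta_strictAnti (lam : YoungDiagram) : StrictAnti (beta lam) := by
  apply strictAnti_nat_of_succ_lt
  intro q
  have := lam.rowLen_anti q (q+1) (by omega)
  unfold beta; push_cast; omega

lemma beta_stable (lam : YoungDiagram) {q : ℕ} (h : lam.colLen 0 ≤ q) :
    beta lam q = -1 - q := by
  have : lam.rowLen q = 0 := rowLen_zero_iff.mpr h
  unfold beta; rw [this]; push_cast; ring

lemma beta_ge (lam : YoungDiagram) (q : ℕ) : -1 - q ≤ beta lam q := by
  unfold beta; have : (0:ℤ) ≤ lam.rowLen q := Int.natCast_nonneg _; omega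

lemma rowLen_eq_beta (lam : YoungDiagram) (q : ℕ) :
    (lam.rowLen q : ℤ) = beta lam q + 1 + q := by unfold beta; ring

lemma filter_card_one_of_inj {α : Type*} [DecidableEq α] {s : Finset α} {n : ℕ} (hn : 0 < n)
    {f : α → ZMod n} (hcard : s.card = n)
    (hinj : ∀ a ∈ s, ∀ b ∈ s, f a = f b → a = b) (i : ZMod n) :
    (s.filter (fun a => f a = i)).card = 1 := by
  haveI : NeZero n := ⟨hn.ne'⟩
  have himg : s.image f = Finset.univ := by
    apply Finset.eq_univ_of_card
    rw [Finset.card_image_of_injOn (fun a ha b hb => hinj a ha b hb), hcard, ZMod.card]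
  have hi : i ∈ s.image f := by rw [himg]; exact Finset.mem_univ i
  obtain ⟨a, ha, rfl⟩ := Finset.mem_image.mp hi
  rw [Finset.card_eq_one]
  refine ⟨a, ?_⟩
  ext b
  simp only [Finset.mem_filter, Finset.mem_singleton]
  constructor
  · rintro ⟨hb, hfb⟩; exact hinj b hb a ha hfb
  · rintro rfl; exact ⟨ha, rfl⟩

noncomputable def cntI (ℓ : ℕ) (u v : ℤ) (i : ZMod ℓ) : ℕ :=
  ((Finset.Icc u v).filter (fun c : ℤ => ((c : ZMod ℓ) = i))).card

lemma cntI_diff (ℓ : ℕ) (u v : ℤ) (h : u - 1 ≤ v) (i : ZMod ℓ) :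
    (cntI ℓ u v i : ℤ) - cntI ℓ u v (i+1) =
      (if ((v : ZMod ℓ) = i) then 1 else 0) - (if (((u-1 : ℤ) : ZMod ℓ) = i) then 1 else 0) := by
  obtain ⟨n, hn⟩ : ∃ n : ℕ, v = u - 1 + n := ⟨(v - (u-1)).toNat, by omega⟩
  subst hn
  induction n with
  | zero =>
    simp only [Nat.cast_zero, add_zero]
    have : Finset.Icc u (u - 1) = ∅ := by rw [Finset.Icc_eq_empty]; omega
    simp [cntI, this]
  | succ m ih =>
    have hw : u - 1 + ((m+1 : ℕ) : ℤ) = (u - 1 + (m : ℕ)) + 1 := by push_cast; ring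
    rw [hw]
    set w : ℤ := u - 1 + (m : ℕ) with hwdef
    have hins : Finset.Icc u (w + 1) = insert (w + 1) (Finset.Icc u w) := by
      ext x; simp only [Finset.mem_Icc, Finset.mem_insert]; omega
    have key : ∀ j : ZMod ℓ, cntI ℓ u (w + 1) j =
        cntI ℓ u w j + (if (((w + 1 : ℤ) : ZMod ℓ) = j) then 1 else 0) := by
      intro j
      unfold cntI
      rw [hins, Finset.filter_insert]
      split
      · rw [Finset.card_insert_of_notMem (by simp only [Finset.mem_filter, Finset.mem_Icc]; omega)]
      · omega
    rw [key i, key (i+1)]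
    have step : (((w + 1 : ℤ) : ZMod ℓ) = i + 1) ↔ (((w : ℤ) : ZMod ℓ) = i) := by
      rw [Int.cast_add, Int.cast_one, add_left_inj]
    rw [if_congr step rfl rfl]
    have ihm := ih (by omega)
    push_cast at ihm ⊢
    split_ifs at ihm ⊢ <;> omega

lemma const_of_shift (ℓ : ℕ) (hℓ : 0 < ℓ) (g : ZMod ℓ → ℤ) (h : ∀ i, g i = g (i+1)) :
    ∀ i, g i = g 0 := by
  haveI : NeZero ℓ := ⟨hℓ.ne'⟩
  have key : ∀ n : ℕ, g (n : ZMod ℓ) = g 0 := by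
    intro n
    induction n with
    | zero => simp
    | succ m ih => push_cast; rw [← h (m : ZMod ℓ)]; exact ih
  intro i
  have := key i.val
  rwa [ZMod.natCast_val, ZMod.cast_id] at this

def Closed (ℓ : ℕ) (lam : YoungDiagram) : Prop := ∀ q, ∃ p, beta lam p = beta lam q - ℓ

lemma yd_ext {lam mu : YoungDiagram} (h : lam.cells = mu.cells) : lam = mu := by
  cases lam; cases mu; simpa using h

lemma boxRes_eq (ℓ : ℕ) (c : ℕ × ℕ) : boxRes ℓ c = ((((c.2 : ℤ) - c.1) : ℤ) : ZMod ℓ) := by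
  unfold boxRes; push_cast; ring

lemma row_cnt (ℓ : ℕ) (lam : YoungDiagram) (q : ℕ) (i : ZMod ℓ) :
    (lam.cells.filter (fun c => c.1 = q ∧ boxRes ℓ c = i)).card
      = cntI ℓ (-(q:ℤ)) (beta lam q) i := by
  have himg : Finset.Icc (-(q:ℤ)) (beta lam q)
      = (Finset.range (lam.rowLen q)).image (fun j : ℕ => (j : ℤ) - q) := by
    ext y
    simp only [Finset.mem_Icc, Finset.mem_image, Finset.mem_range]
    unfold beta
    constructor
    · intro hy; exact ⟨(y + q).toNat, by omega, by omega⟩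
    · rintro ⟨j, hj, rfl⟩; omega
  have hcells : lam.cells.filter (fun c => c.1 = q ∧ boxRes ℓ c = i)
      = ((Finset.range (lam.rowLen q)).filter
          (fun j : ℕ => (((j : ℤ) - q : ℤ) : ZMod ℓ) = i)).image (fun j => (q, j)) := by
    ext c
    simp only [Finset.mem_filter, Finset.mem_image, Finset.mem_range, YoungDiagram.mem_cells]
    constructor
    · rintro ⟨hc, rfl, hres⟩
      refine ⟨c.2, ⟨YoungDiagram.mem_iff_lt_rowLen.mp (by simpa using hc), ?_⟩, by simp⟩
      rw [boxRes_eq] at hres; exact hres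
    · rintro ⟨j, ⟨hj, hres⟩, rfl⟩
      exact ⟨YoungDiagram.mem_iff_lt_rowLen.mpr hj, rfl, by rw [boxRes_eq]; exact hres⟩
  rw [hcells, cntI, himg, Finset.filter_image,
    Finset.card_image_of_injective _ (fun a b hab => by simpa using hab),
    Finset.card_image_of_injective _ (fun a b hab => by omega)]

lemma ResL_eq_sum (ℓ : ℕ) (lam : YoungDiagram) (i : ZMod ℓ) {Q : ℕ} (hQ : lam.colLen 0 ≤ Q) :
    ResL ℓ lam i = ∑ q ∈ Finset.range Q, (cntI ℓ (-(q:ℤ)) (beta lam q) i : ℤ) := by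
  have hdecomp : lam.cells.filter (fun c => boxRes ℓ c = i)
      = (Finset.range Q).biUnion
          (fun q => lam.cells.filter (fun c => c.1 = q ∧ boxRes ℓ c = i)) := by
    ext c
    simp only [Finset.mem_filter, Finset.mem_biUnion, Finset.mem_range, YoungDiagram.mem_cells]
    constructor
    · rintro ⟨hc, hr⟩
      refine ⟨c.1, ?_, hc, rfl, hr⟩
      have hm : (c.1, (0:ℕ)) ∈ lam := lam.up_left_mem le_rfl (Nat.zero_le _)
        (by simpa using hc)
      have := YoungDiagram.mem_iff_lt_colLen.mp hm
      omega
    · rintro ⟨q, hq, hc, rfl, hr⟩; exact ⟨hc, hr⟩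
  have hdisj : ∀ x ∈ Finset.range Q, ∀ y ∈ Finset.range Q, x ≠ y →
      Disjoint (lam.cells.filter (fun c => c.1 = x ∧ boxRes ℓ c = i))
        (lam.cells.filter (fun c => c.1 = y ∧ boxRes ℓ c = i)) := by
    intro x _ y _ hxy
    rw [Finset.disjoint_left]
    rintro c hc hc'
    simp only [Finset.mem_filter] at hc hc'
    exact hxy (hc.2.1 ▸ hc'.2.1 ▸ rfl)
  rw [ResL, hdecomp, Finset.card_biUnion hdisj]
  push_cast
  exact Finset.sum_congr rfl (fun q _ => by rw [row_cnt])

lemma d_formula (ℓ : ℕ) (lam : YoungDiagram) (i : ZMod ℓ) {Q : ℕ} (hQ : lam.colLen 0 ≤ Q) :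
    ResL ℓ lam i - ResL ℓ lam (i+1) =
      ∑ q ∈ Finset.range Q,
        ((if ((beta lam q : ZMod ℓ) = i) then (1:ℤ) else 0)
          - (if (((-1 - q : ℤ) : ZMod ℓ) = i) then 1 else 0)) := by
  rw [ResL_eq_sum ℓ lam i hQ, ResL_eq_sum ℓ lam (i+1) hQ, ← Finset.sum_sub_distrib]
  refine Finset.sum_congr rfl (fun q _ => ?_)
  have h1 : -(q:ℤ) - 1 ≤ beta lam q := by have := beta_ge lam q; omega
  have hthis := cntI_diff ℓ (-(q:ℤ)) (beta lam q) (by omega) i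
  have e : (-(q:ℤ) - 1) = (-1 - (q:ℤ)) := by ring
  rw [e] at hthis
  rw [hthis]

lemma rowLen_le_of_subset {lam mu : YoungDiagram} (h : mu.cells ⊆ lam.cells) (q : ℕ) :
    mu.rowLen q ≤ lam.rowLen q := by
  by_cases h0 : mu.rowLen q = 0
  · omega
  · have hm : (q, mu.rowLen q - 1) ∈ mu := YoungDiagram.mem_iff_lt_rowLen.mpr (by omega)
    have := YoungDiagram.mem_iff_lt_rowLen.mp
      ((YoungDiagram.mem_cells _).mp (h ((YoungDiagram.mem_cells _).mpr hm)))
    omega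

lemma removals_subset {lam mu : YoungDiagram} (h : Removals lam mu) : mu.cells ⊆ lam.cells := by
  induction h with
  | refl => exact Finset.Subset.refl _
  | tail _ hstep ih =>
    obtain ⟨c, _, hc⟩ := hstep
    exact fun x hx => ih (hc ▸ hx |> Finset.erase_subset c _)

lemma removals_of_subset {lam mu : YoungDiagram} (h : mu.cells ⊆ lam.cells) : Removals lam mu := by
  generalize hN : (lam.cells \ mu.cells).card = N
  induction N generalizing lam with
  | zero =>
    have hsub : lam.cells ⊆ mu.cells := by
      intro x hx
      by_contra hxm
      have : x ∈ lam.cells \ mu.cells := Finset.mem_sdiff.mpr ⟨hx, hxm⟩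
      rw [Finset.card_eq_zero] at hN
      simp [hN] at this
    have : lam = mu := yd_ext (Finset.Subset.antisymm hsub h)
    subst this; exact Relation.ReflTransGen.refl
  | succ n ih =>
    have hne : ((Finset.range (lam.colLen 0)).filter
        (fun q => mu.rowLen q < lam.rowLen q)).Nonempty := by
      obtain ⟨c, hc⟩ : (lam.cells \ mu.cells).Nonempty := by
        rw [← Finset.card_pos, hN]; omega
      rw [Finset.mem_sdiff] at hc
      obtain ⟨hcl, hcm⟩ := hc
      refine ⟨c.1, Finset.mem_filter.mpr ⟨Finset.mem_range.mpr ?_, ?_⟩⟩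
      · exact YoungDiagram.mem_iff_lt_colLen.mp
          (lam.up_left_mem le_rfl (Nat.zero_le _) (by simpa using (YoungDiagram.mem_cells _).mp hcl))
      · have h1 := YoungDiagram.mem_iff_lt_rowLen.mp (by simpa using (YoungDiagram.mem_cells _).mp hcl)
        have h2 : ¬ (c.2 < mu.rowLen c.1) := fun hlt => hcm ((YoungDiagram.mem_cells _).mpr
          (by simpa using YoungDiagram.mem_iff_lt_rowLen.mpr hlt))
        omega
    set F := (Finset.range (lam.colLen 0)).filter (fun q => mu.rowLen q < lam.rowLen q)
    set i := F.max' hne with hi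
    have hiF : i ∈ F := F.max'_mem hne
    rw [Finset.mem_filter, Finset.mem_range] at hiF
    have hmax : ∀ p, i < p → lam.rowLen p ≤ mu.rowLen p := by
      intro p hp
      by_contra hcon
      have hpF : p ∈ F := by
        refine Finset.mem_filter.mpr ⟨Finset.mem_range.mpr ?_, by omega⟩
        have : 0 < lam.rowLen p := by omega
        exact YoungDiagram.mem_iff_lt_colLen.mp (YoungDiagram.mem_iff_lt_rowLen.mpr this
          |> lam.up_left_mem le_rfl (Nat.zero_le _))
      have := F.le_max' p hpF
      omega
    set c : ℕ × ℕ := (i, lam.rowLen i - 1) with hc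
    have hclam : c ∈ lam.cells := (YoungDiagram.mem_cells _).mpr
      (YoungDiagram.mem_iff_lt_rowLen.mpr (by omega))
    have hcmu : c ∉ mu.cells := by
      intro hmem
      have := YoungDiagram.mem_iff_lt_rowLen.mp ((YoungDiagram.mem_cells _).mp hmem)
      omega
    have hlower : IsLowerSet (↑(lam.cells.erase c) : Set (ℕ × ℕ)) := by
      intro a b hba ha
      simp only [Finset.coe_erase, Set.mem_diff, Finset.mem_coe, Set.mem_singleton_iff] at ha ⊢
      obtain ⟨hal, hane⟩ := ha
      refine ⟨lam.isLowerSet hba hal, ?_⟩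
      intro hbc
      subst hbc
      obtain ⟨h1, h2⟩ := hba
      have hmema : a.2 < lam.rowLen a.1 := YoungDiagram.mem_iff_lt_rowLen.mp
        (by simpa using (YoungDiagram.mem_cells _).mp hal)
      simp only [hc] at h1 h2
      rcases Nat.lt_or_ge i a.1 with hcase | hcase
      · have hle := rowLen_le_of_subset h -- not needed
        have h3 := hmax a.1 hcase
        have h4 := mu.rowLen_anti i a.1 (by omega)
        omega
      · have ha1 : a.1 = i := by omega
        have h5 := lam.rowLen_anti i a.1 (by omega)
        apply hane
        have : a.2 = lam.rowLen i - 1 := by rw [ha1] at hmema; omega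
        rw [hc, Prod.ext_iff]
        exact ⟨ha1, this⟩
    set lam' : YoungDiagram := ⟨lam.cells.erase c, hlower⟩ with hlam'
    have hsub' : mu.cells ⊆ lam'.cells := by
      intro x hx
      exact Finset.mem_erase.mpr ⟨fun hxc => hcmu (hxc ▸ hx), h hx⟩
    have hsd : lam'.cells \ mu.cells = (lam.cells \ mu.cells).erase c := by
      ext x
      simp only [Finset.mem_sdiff, Finset.mem_erase, hlam']
      tauto
    have hcards : (lam'.cells \ mu.cells).card = n := by
      rw [hsd, Finset.card_erase_of_mem (Finset.mem_sdiff.mpr ⟨hclam, hcmu⟩), hN]; omega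
    exact Relation.ReflTransGen.head ⟨c, hclam, rfl⟩ (ih hsub' hcards)

lemma step_res (ℓ : ℕ) (hℓ : 0 < ℓ) {lam mu : YoungDiagram} (h : ElemStep ℓ lam mu) :
    (∀ i, ResL ℓ lam i = ResL ℓ mu i + 1) ∧ mu.cells.card + ℓ = lam.cells.card := by
  obtain ⟨hrem, hcard, hdist⟩ := h
  have hsub := removals_subset hrem
  have hunion : mu.cells ∪ (lam.cells \ mu.cells) = lam.cells :=
    Finset.union_sdiff_of_subset hsub
  constructor
  · intro i
    have key : ((lam.cells \ mu.cells).filter (fun c => boxRes ℓ c = i)).card = 1 :=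
      filter_card_one_of_inj hℓ hcard
        (fun a ha b hb hf => by
          by_contra hne
          exact hdist a ha b hb hne hf) i
    have hdisj : Disjoint (mu.cells.filter (fun c => boxRes ℓ c = i))
        ((lam.cells \ mu.cells).filter (fun c => boxRes ℓ c = i)) := by
      apply Finset.disjoint_filter_filter
      exact Finset.disjoint_sdiff
    unfold ResL
    rw [← hunion, Finset.filter_union, Finset.card_union_of_disjoint hdisj, key]
    push_cast; ring
  · have := Finset.card_sdiff_add_card_eq_card hsub
    omega

lemma exists_core (ℓ : ℕ) (hℓ : 0 < ℓ) (lam : YoungDiagram) :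
    ∃ (nu : YoungDiagram) (k : ℕ), IsLCore ℓ nu ∧ ∀ i, ResL ℓ lam i = ResL ℓ nu i + k := by
  generalize hN : lam.cells.card = N
  induction N using Nat.strong_induction_on generalizing lam with
  | _ N ih =>
    by_cases hc : IsLCore ℓ lam
    · exact ⟨lam, 0, hc, fun i => by simp⟩
    · rw [IsLCore, not_not] at hc
      obtain ⟨mu, hstep⟩ := hc
      obtain ⟨hres, hcard⟩ := step_res ℓ hℓ hstep
      obtain ⟨nu, k, hcore, hk⟩ := ih mu.cells.card (by omega) mu rfl
      exact ⟨nu, k + 1, hcore, fun i => by rw [hres i, hk i]; push_cast; ring⟩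


open Finset

lemma mem_cells_iff {lam : YoungDiagram} {c : ℕ × ℕ} :
    c ∈ lam.cells ↔ c.2 < lam.rowLen c.1 := by
  rw [YoungDiagram.mem_cells, ← Prod.mk.eta (p := c), YoungDiagram.mem_iff_lt_rowLen]

lemma rowLen_pos_iff {lam : YoungDiagram} {q : ℕ} : 0 < lam.rowLen q ↔ q < lam.colLen 0 := by
  have := rowLen_zero_iff (lam := lam) (q := q); omega

lemma beta_anti (lam : YoungDiagram) {a b : ℕ} (h : a ≤ b) : beta lam b ≤ beta lam a :=
  (beta_strictAnti lam).antitone h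

set_option maxHeartbeats 1000000 in
lemma step_of_not_closed (ℓ : ℕ) (hℓ : 0 < ℓ) (lam : YoungDiagram) (h : ¬ Closed ℓ lam) :
    ∃ mu, ElemStep ℓ lam mu := by
  classical
  rw [Closed] at h
  push_neg at h
  obtain ⟨q0, hq0⟩ := h
  set L := lam.colLen 0 with hL
  set x := beta lam q0 with hx
  have hxl : -1 - (L:ℤ) < x - ℓ := by
    by_contra hcon
    push_neg at hcon
    have hnn : (0:ℤ) ≤ -(x - ℓ) - 1 - L := by omega
    set q : ℕ := (-(x - ℓ) - 1).toNat with hq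
    have hqL : L ≤ q := by omega
    have : beta lam q = x - ℓ := by
      rw [beta_stable lam hqL]; omega
    exact hq0 q this
  have hq0L : q0 < L := by
    by_contra hcon
    push_neg at hcon
    have hst := beta_stable lam hcon
    rw [← hx] at hst
    omega
  set F := (Finset.range L).filter (fun p => x - ℓ < beta lam p) with hF
  have hq0F : q0 ∈ F := by
    refine Finset.mem_filter.mpr ⟨Finset.mem_range.mpr hq0L, ?_⟩
    rw [← hx]; omega
  have hne : F.Nonempty := ⟨q0, hq0F⟩
  set t := F.max' hne with ht
  have htF : t ∈ F := F.max'_mem hne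
  obtain ⟨htL', htx⟩ := Finset.mem_filter.mp htF
  have htL : t < L := Finset.mem_range.mp htL' 
  have hq0t : q0 ≤ t := F.le_max' q0 hq0F
  have htsucc : beta lam (t+1) < x - ℓ := by
    rcases Nat.lt_or_ge (t+1) L with hcase | hcase
    · have hnotin : ¬ (x - ℓ < beta lam (t+1)) := by
        intro hcon
        have hmem : t + 1 ∈ F := Finset.mem_filter.mpr ⟨Finset.mem_range.mpr hcase, hcon⟩
        have := F.le_max' _ hmem
        omega
      have hne' := hq0 (t+1)
      omega
    · have := beta_stable lam hcase
      omega
  -- basic beta facts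
  have hbeta : ∀ p : ℕ, (lam.rowLen p : ℤ) = beta lam p + 1 + p := fun p => rowLen_eq_beta lam p
  have hpos : ∀ p : ℕ, p < L → 1 ≤ (lam.rowLen p : ℤ) := by
    intro p hp; have := rowLen_pos_iff (lam := lam) (q := p); rw [← hL] at this; omega
  have hxt : x - ℓ + (t:ℤ) + 1 ≥ 0 := by
    have h1 := hbeta (t+1)
    have h2 : (0:ℤ) ≤ (lam.rowLen (t+1) : ℤ) := Int.natCast_nonneg _
    push_cast at h1
    omega
  -- the new row lengths
  set R : ℕ → ℕ := fun p =>
    if p < q0 then lam.rowLen p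
    else if p < t then lam.rowLen (p+1) - 1
    else if p = t then (x - ℓ + t + 1).toNat
    else lam.rowLen p with hR
  have hRa : ∀ p, p < q0 → R p = lam.rowLen p := by
    intro p hp; simp only [hR]; rw [if_pos hp]
  have hRb : ∀ p, q0 ≤ p → p < t → R p = lam.rowLen (p+1) - 1 := by
    intro p hp1 hp2; simp only [hR]; rw [if_neg (by omega), if_pos hp2]
  have hRc : R t = (x - ℓ + t + 1).toNat := by
    simp only [hR]; rw [if_neg (by omega), if_neg (by omega)]; simp
  have hRd : ∀ p, t < p → R p = lam.rowLen p := by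
    intro p hp; simp only [hR]; rw [if_neg (by omega), if_neg (by omega), if_neg (by omega)]
  have htn : ((x - ℓ + t + 1).toNat : ℤ) = x - ℓ + t + 1 := Int.toNat_of_nonneg (by omega)
  have hposN : ∀ p, p < L → 1 ≤ lam.rowLen p := by
    intro p hp
    have := rowLen_pos_iff (lam := lam) (q := p)
    rw [← hL] at this; omega
  have hRle : ∀ p, R p ≤ lam.rowLen p := by
    intro p
    rcases Nat.lt_or_ge p q0 with h1 | h1
    · rw [hRa p h1]
    · rcases Nat.lt_or_ge p t with h2 | h2
      · rw [hRb p h1 h2]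
        have := lam.rowLen_anti p (p+1) (by omega)
        omega
      · rcases Nat.eq_or_lt_of_le h2 with h3 | h3
        · rw [← h3, hRc]
          have hb := hbeta t
          omega
        · rw [hRd p h3]
  have hRanti : ∀ a b : ℕ, a ≤ b → R b ≤ R a := by
    have hsucc : ∀ p, R (p+1) ≤ R p := by
      intro p
      rcases Nat.lt_or_ge p q0 with h1 | h1
      · rw [hRa p h1]
        exact le_trans (hRle (p+1)) (lam.rowLen_anti p (p+1) (by omega))
      · rcases Nat.lt_or_ge p t with h2 | h2
        · rw [hRb p h1 h2]
          rcases Nat.lt_or_ge (p+1) t with h3 | h3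
          · rw [hRb (p+1) (by omega) h3]
            have := lam.rowLen_anti (p+1) (p+1+1) (by omega)
            omega
          · have hpt : p + 1 = t := by omega
            rw [hpt, hRc]
            have hb := hbeta t
            omega
        · rcases Nat.eq_or_lt_of_le h2 with h3 | h3
          · rw [h3] at hRc htsucc htn
            rw [hRc, hRd (p+1) (by omega)]
            have hb := hbeta (p+1)
            omega
          · rw [hRd p h3, hRd (p+1) (by omega)]
            exact lam.rowLen_anti p (p+1) (by omega)
    intro a b hab
    induction b with
    | zero => have : a = 0 := by omega
              subst this; exact le_refl _
    | succ n ihn =>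
      rcases Nat.lt_or_ge a (n+1) with hcase | hcase
      · exact le_trans (hsucc n) (ihn (by omega))
      · have : a = n + 1 := by omega
        subst this; exact le_refl _
  have hlow : IsLowerSet (↑(lam.cells.filter (fun c => c.2 < R c.1)) : Set (ℕ × ℕ)) := by
    intro a b hba ha
    simp only [Finset.coe_filter, Set.mem_setOf_eq] at ha ⊢
    obtain ⟨hal, haR⟩ := ha
    refine ⟨(YoungDiagram.mem_cells _).mpr (lam.isLowerSet hba ((YoungDiagram.mem_cells _).mp hal)), ?_⟩
    obtain ⟨h1, h2⟩ := hba
    have := hRanti b.1 a.1 h1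
    omega
  set mu : YoungDiagram := ⟨lam.cells.filter (fun c => c.2 < R c.1), hlow⟩ with hmu
  have hsub : mu.cells ⊆ lam.cells := Finset.filter_subset _ _
  have hdiff : lam.cells \ mu.cells = lam.cells.filter (fun c => R c.1 ≤ c.2) := by
    ext c
    simp only [Finset.mem_sdiff, Finset.mem_filter, hmu]
    constructor
    · rintro ⟨hcl, hcm⟩
      refine ⟨hcl, ?_⟩
      by_contra hcon
      exact hcm ⟨hcl, by omega⟩
    · rintro ⟨hcl, hcR⟩
      exact ⟨hcl, fun hmem => by have := hmem.2; omega⟩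
  -- structure of diff cells
  have hdmem : ∀ c ∈ lam.cells \ mu.cells,
      q0 ≤ c.1 ∧ c.1 ≤ t ∧ R c.1 ≤ c.2 ∧ c.2 < lam.rowLen c.1 := by
    intro c hc
    rw [hdiff, Finset.mem_filter] at hc
    obtain ⟨hcl, hcR⟩ := hc
    have hcl' := mem_cells_iff.mp hcl
    constructor
    · by_contra hcon
      push_neg at hcon
      rw [hRa c.1 hcon] at hcR
      omega
    refine ⟨?_, hcR, hcl'⟩
    · by_contra hcon
      push_neg at hcon
      rw [hRd c.1 hcon] at hcR
      omega
  -- content bounds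
  have hcontent : ∀ c ∈ lam.cells \ mu.cells,
      x - ℓ < (c.2 : ℤ) - c.1 ∧ (c.2 : ℤ) - c.1 ≤ x ∧
      (c.1 < t → beta lam (c.1 + 1) + 1 ≤ (c.2 : ℤ) - c.1) := by
    intro c hc
    obtain ⟨h1, h2, h3, h4⟩ := hdmem c hc
    have hb1 := hbeta c.1
    have hble : beta lam c.1 ≤ x := by rw [hx]; exact beta_anti lam h1
    refine ⟨?_, by omega, ?_⟩
    · -- lower bound
      rcases Nat.lt_or_ge c.1 t with hcase | hcase
      · have hRval : R c.1 = lam.rowLen (c.1 + 1) - 1 := by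
          simp only [hR]; rw [if_neg (by omega), if_pos hcase]
        have hposrow : 1 ≤ (lam.rowLen (c.1+1) : ℤ) := hpos (c.1+1) (by omega)
        have hb2 := hbeta (c.1+1)
        have hbt : beta lam t ≤ beta lam (c.1+1) := beta_anti lam (by omega)
        rw [hRval] at h3
        have : ((lam.rowLen (c.1+1) - 1 : ℕ) : ℤ) = (lam.rowLen (c.1+1) : ℤ) - 1 := by omega
        omega
      · have hct : c.1 = t := by omega
        have hRval : R c.1 = (x - ℓ + t + 1).toNat := by rw [hct, hRc]
        rw [hRval] at h3
        omega
    · intro hcase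
      have hRval : R c.1 = lam.rowLen (c.1 + 1) - 1 := hRb c.1 (by omega) hcase
      have hposrow : 1 ≤ (lam.rowLen (c.1+1) : ℤ) := hpos (c.1+1) (by omega)
      have hb2 := hbeta (c.1+1)
      rw [hRval] at h3
      omega
  -- injectivity of content on diff
  have hinj : ∀ c ∈ lam.cells \ mu.cells, ∀ c' ∈ lam.cells \ mu.cells,
      (c.2 : ℤ) - c.1 = (c'.2 : ℤ) - c'.1 → c = c' := by
    have key : ∀ c ∈ lam.cells \ mu.cells, ∀ c' ∈ lam.cells \ mu.cells,
        c.1 < c'.1 → False ∨ ¬ ((c.2 : ℤ) - c.1 = (c'.2 : ℤ) - c'.1) := by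
      intro c hc c' hc' hlt
      right
      intro heq
      obtain ⟨_, h2, _, h4⟩ := hdmem c hc
      obtain ⟨h1', h2', _, h4'⟩ := hdmem c' hc'
      obtain ⟨_, _, h5⟩ := hcontent c hc
      have hlow := h5 (by omega)
      have hanti : beta lam c'.1 ≤ beta lam (c.1 + 1) := beta_anti lam (by omega)
      have hb' := hbeta c'.1
      omega
    intro c hc c' hc' heq
    rcases Nat.lt_trichotomy c.1 c'.1 with hlt | heq1 | hgt
    · rcases key c hc c' hc' hlt with hf | hne
      · exact absurd hf (by simp)
      · exact absurd heq hne
    · have : c.2 = c'.2 := by omega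
      exact Prod.ext heq1 this
    · rcases key c' hc' c hc hgt with hf | hne
      · exact absurd hf (by simp)
      · exact absurd heq.symm hne
  -- surjectivity of content onto Ioc (x-ℓ) x
  have hsurj : ∀ y : ℤ, x - ℓ < y → y ≤ x → ∃ c ∈ lam.cells \ mu.cells, (c.2 : ℤ) - c.1 = y := by
    intro y hy1 hy2
    set G := (Finset.range (t+1)).filter (fun p => q0 ≤ p ∧ y ≤ beta lam p) with hG
    have hq0G : q0 ∈ G := by
      refine Finset.mem_filter.mpr ⟨Finset.mem_range.mpr (by omega), le_refl _, ?_⟩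
      rw [← hx]; omega
    have hneG : G.Nonempty := ⟨q0, hq0G⟩
    set p := G.max' hneG with hp
    have hpG : p ∈ G := G.max'_mem hneG
    obtain ⟨hpt1', hpq0, hpy⟩ := Finset.mem_filter.mp hpG
    have hpt1 : p < t + 1 := Finset.mem_range.mp hpt1' 
    have hpt : p ≤ t := by omega
    have hb1 := hbeta p
    have hb2 := hbeta (p+1)
    -- j lower bound facts
    have hjR : (R p : ℤ) ≤ y + p ∧ 0 ≤ y + p := by
      rcases Nat.lt_or_ge p t with hcase | hcase
      · have hnotG : ¬ (y ≤ beta lam (p+1)) := by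
          intro hcon
          have hmem : p + 1 ∈ G :=
            Finset.mem_filter.mpr ⟨Finset.mem_range.mpr (by omega), by omega, hcon⟩
          have := G.le_max' _ hmem
          omega
        push_neg at hnotG
        have hRval : R p = lam.rowLen (p + 1) - 1 := hRb p (by omega) hcase
        have hposrow : 1 ≤ (lam.rowLen (p+1) : ℤ) := hpos (p+1) (by omega)
        rw [hRval]
        have : ((lam.rowLen (p+1) - 1 : ℕ) : ℤ) = (lam.rowLen (p+1) : ℤ) - 1 := by omega
        omega
      · have hpt' : p = t := by omega
        have hRval : R p = (x - ℓ + t + 1).toNat := by rw [hpt', hRc]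
        rw [hRval]
        omega
    obtain ⟨hjR1, hjR2⟩ := hjR
    set j : ℕ := (y + p).toNat with hj
    have hjval : (j : ℤ) = y + p := Int.toNat_of_nonneg hjR2
    refine ⟨(p, j), ?_, by simp only []; omega⟩
    rw [hdiff, Finset.mem_filter]
    constructor
    · rw [mem_cells_iff]
      simp only []
      omega
    · simp only []
      omega
  -- the image of the content map
  have himg : (lam.cells \ mu.cells).image (fun c : ℕ × ℕ => (c.2 : ℤ) - c.1)
      = Finset.Ioc (x - ℓ) x := by
    ext y
    simp only [Finset.mem_image, Finset.mem_Ioc]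
    constructor
    · rintro ⟨c, hc, rfl⟩
      obtain ⟨h1, h2, _⟩ := hcontent c hc
      exact ⟨h1, h2⟩
    · rintro ⟨hy1, hy2⟩
      obtain ⟨c, hc, hcy⟩ := hsurj y hy1 hy2
      exact ⟨c, hc, hcy⟩
  have hcard : (lam.cells \ mu.cells).card = ℓ := by
    have hinj' : Set.InjOn (fun c : ℕ × ℕ => (c.2 : ℤ) - c.1) ↑(lam.cells \ mu.cells) := by
      intro a ha b hb hab
      exact hinj a (by simpa using ha) b (by simpa using hb) hab
    rw [← Finset.card_image_of_injOn hinj', himg, Int.card_Ioc]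
    omega
  refine ⟨mu, removals_of_subset hsub, hcard, ?_⟩
  intro c hc c' hc' hne hres
  apply hne
  apply hinj c hc c' hc'
  rw [boxRes_eq, boxRes_eq, ZMod.intCast_eq_intCast_iff] at hres
  have hdvd : (ℓ:ℤ) ∣ ((c.2 : ℤ) - c.1) - ((c'.2 : ℤ) - c'.1) := Int.ModEq.dvd (Int.ModEq.symm hres)
  obtain ⟨h1, h2, _⟩ := hcontent c hc
  obtain ⟨h1', h2', _⟩ := hcontent c' hc'
  obtain ⟨k, hk⟩ := hdvd
  have hkval : k = 0 := by
    rcases Int.lt_trichotomy k 0 with hkc | hkc | hkc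
    · nlinarith [hk, h1, h2, h1', h2']
    · exact hkc
    · nlinarith [hk, h1, h2, h1', h2']
  rw [hkval] at hk
  omega

lemma closed_of_core (ℓ : ℕ) (hℓ : 0 < ℓ) {lam : YoungDiagram} (h : IsLCore ℓ lam) :
    Closed ℓ lam := by
  by_contra hcon
  exact h (step_of_not_closed ℓ hℓ lam hcon)


open Finset

lemma exists_class_in_block (ℓ : ℕ) (hℓ : 0 < ℓ) (a : ℕ) (i : ZMod ℓ) :
    ∃ q, a ≤ q ∧ q < a + ℓ ∧ (((-1 - (q:ℤ)) : ℤ) : ZMod ℓ) = i := by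
  have hcard : (Finset.Ico a (a+ℓ)).card = ℓ := by simp
  have hinj : ∀ x ∈ Finset.Ico a (a+ℓ), ∀ y ∈ Finset.Ico a (a+ℓ),
      (((-1 - (x:ℤ)) : ℤ) : ZMod ℓ) = (((-1 - (y:ℤ)) : ℤ) : ZMod ℓ) → x = y := by
    intro x hx y hy hxy
    rw [Finset.mem_Ico] at hx hy
    push_cast at hxy
    have hcast : ((x:ℕ) : ZMod ℓ) = ((y:ℕ) : ZMod ℓ) := by linear_combination -hxy
    rw [ZMod.natCast_eq_natCast_iff] at hcast
    have hdvd := (Nat.modEq_iff_dvd).mp hcast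
    obtain ⟨k, hk⟩ := hdvd
    rcases Int.lt_trichotomy k 0 with h | h | h
    · nlinarith [hk, hx.1, hx.2, hy.1, hy.2]
    · subst h; omega
    · nlinarith [hk, hx.1, hx.2, hy.1, hy.2]
  have h1 := filter_card_one_of_inj hℓ hcard hinj i
  have : ((Finset.Ico a (a+ℓ)).filter
      (fun q : ℕ => (((-1 - (q:ℤ)) : ℤ) : ZMod ℓ) = i)).Nonempty := by
    rw [← Finset.card_pos, h1]; omega
  obtain ⟨q, hq⟩ := this
  rw [Finset.mem_filter, Finset.mem_Ico] at hq
  exact ⟨q, hq.1.1, hq.1.2, hq.2⟩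

set_option maxHeartbeats 1000000 in
lemma closed_eq (ℓ : ℕ) (hℓ : 0 < ℓ) {lam mu : YoungDiagram}
    (hl : Closed ℓ lam) (hm : Closed ℓ mu)
    (hd : ∀ i : ZMod ℓ, ResL ℓ lam i - ResL ℓ lam (i+1) = ResL ℓ mu i - ResL ℓ mu (i+1)) :
    lam = mu := by
  classical
  set Q := lam.colLen 0 + mu.colLen 0 + ℓ with hQ
  have hQ1 : lam.colLen 0 + ℓ ≤ Q := by omega
  have hQ2 : mu.colLen 0 + ℓ ≤ Q := by omega
  have hQpos : 0 < Q := by omega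
  -- count equality
  have hcount : ∀ i : ZMod ℓ,
      ((Finset.range Q).filter (fun q => ((beta lam q : ZMod ℓ) = i))).card
      = ((Finset.range Q).filter (fun q => ((beta mu q : ZMod ℓ) = i))).card := by
    intro i
    have h1 := d_formula ℓ lam i (Q := Q) (by omega)
    have h2 := d_formula ℓ mu i (Q := Q) (by omega)
    rw [hd i] at h1
    have h3 := h1.symm.trans h2
    rw [Finset.sum_sub_distrib, Finset.sum_sub_distrib] at h3
    have h4 : (∑ q ∈ Finset.range Q, if ((beta lam q : ZMod ℓ) = i) then (1:ℤ) else 0)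
        = ∑ q ∈ Finset.range Q, if ((beta mu q : ZMod ℓ) = i) then (1:ℤ) else 0 := by omega
    rw [Finset.sum_boole, Finset.sum_boole] at h4
    exact_mod_cast h4
  -- image sets
  set SB1 := (Finset.range Q).image (beta lam) with hSB1
  set SB2 := (Finset.range Q).image (beta mu) with hSB2
  -- generic structure lemma
  have key : ∀ (nu : YoungDiagram), Closed ℓ nu → nu.colLen 0 + ℓ ≤ Q → ∀ i : ZMod ℓ,
      ∃ M : ℤ, ((M : ZMod ℓ) = i) ∧ (-(Q:ℤ)) ≤ M ∧
        ((Finset.range Q).image (beta nu)).filter (fun y : ℤ => (y : ZMod ℓ) = i)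
          = (Finset.Icc (-(Q:ℤ)) M).filter (fun y : ℤ => (y : ZMod ℓ) = i) := by
    intro nu hcl hQn i
    set S := ((Finset.range Q).image (beta nu)).filter (fun y : ℤ => (y : ZMod ℓ) = i) with hS
    have hlastm : beta nu (Q-1) = -(Q:ℤ) := by
      have := beta_stable nu (q := Q-1) (by omega)
      rw [this]; push_cast; omega
    have hne : S.Nonempty := by
      obtain ⟨q, hq1, hq2, hq3⟩ := exists_class_in_block ℓ hℓ (nu.colLen 0) i
      refine ⟨beta nu q, Finset.mem_filter.mpr ⟨Finset.mem_image.mpr ⟨q, Finset.mem_range.mpr (by omega), rfl⟩, ?_⟩⟩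
      rw [beta_stable nu hq1]
      rw [show (-1 - (q:ℤ)) = (-1 - (q:ℤ)) from rfl] at hq3
      exact_mod_cast hq3
    set M := S.max' hne with hM
    have hMS : M ∈ S := S.max'_mem hne
    obtain ⟨hMim, hMclass⟩ := Finset.mem_filter.mp hMS
    obtain ⟨qM, hqM, hqMe⟩ := Finset.mem_image.mp hMim
    rw [Finset.mem_range] at hqM
    have hMgeQ : (-(Q:ℤ)) ≤ M := by
      rw [← hqMe, ← hlastm]
      exact beta_anti nu (by omega)
    refine ⟨M, hMclass, hMgeQ, ?_⟩
    ext y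
    simp only [hS, Finset.mem_filter, Finset.mem_image, Finset.mem_range, Finset.mem_Icc]
    constructor
    · rintro ⟨⟨q, hq, rfl⟩, hcls⟩
      refine ⟨⟨?_, ?_⟩, hcls⟩
      · rw [← hlastm]; exact beta_anti nu (by omega)
      · exact S.le_max' _ (Finset.mem_filter.mpr ⟨Finset.mem_image.mpr ⟨q, Finset.mem_range.mpr hq, rfl⟩, hcls⟩)
    · rintro ⟨⟨hy1, hy2⟩, hcls⟩
      refine ⟨?_, hcls⟩
      -- y = M - k ℓ
      have hdvd : (ℓ:ℤ) ∣ M - y := by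
        have : ((M - y : ℤ) : ZMod ℓ) = 0 := by push_cast; rw [hMclass, hcls]; ring
        exact_mod_cast (ZMod.intCast_zmod_eq_zero_iff_dvd _ _).mp this
      obtain ⟨k, hk⟩ := hdvd
      have hk0 : 0 ≤ k := by
        rcases Int.lt_or_le k 0 with h | h
        · have : (ℓ:ℤ) * k < 0 := mul_neg_of_pos_of_neg (by exact_mod_cast hℓ) h
          omega
        · exact h
      -- induction
      have main : ∀ n : ℕ, M - n * ℓ ≥ -(Q:ℤ) → ∃ q < Q, beta nu q = M - n * ℓ := by
        intro n
        induction n with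
        | zero => intro _; exact ⟨qM, hqM, by rw [hqMe]; push_cast; ring⟩
        | succ m ih =>
          intro hge
          have hge' : M - m * ℓ ≥ -(Q:ℤ) := by
            have hstep : M - ((m:ℤ)+1)*ℓ + ℓ = M - m*ℓ := by ring
            push_cast at hge
            omega
          obtain ⟨q, hq, hqe⟩ := ih hge'
          obtain ⟨p, hp⟩ := hcl q
          have hpval : beta nu p = M - (m+1) * ℓ := by rw [hp, hqe]; push_cast; ring
          refine ⟨p, ?_, hpval⟩
          by_contra hcon
          push_neg at hcon
          have hlt : beta nu p < beta nu (Q-1) := beta_strictAnti nu (by omega)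
          rw [hlastm] at hlt
          push_cast at hge hlt hpval
          omega
      have hyk : y = M - k.toNat * ℓ := by
        have h1 : (k.toNat : ℤ) = k := Int.toNat_of_nonneg hk0
        have h2 : (k.toNat : ℤ) * ℓ = (ℓ:ℤ) * k := by rw [h1]; ring
        omega
      obtain ⟨q, hq, hqe⟩ := main k.toNat (by rw [← hyk]; omega)
      exact ⟨q, hq, by omega⟩
  -- apply to both
  have hfilterscard : ∀ i : ZMod ℓ,
      (SB1.filter (fun y : ℤ => (y : ZMod ℓ) = i)).card
        = (SB2.filter (fun y : ℤ => (y : ZMod ℓ) = i)).card := by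
    intro i
    rw [hSB1, hSB2, Finset.filter_image, Finset.filter_image,
      Finset.card_image_of_injOn, Finset.card_image_of_injOn]
    · exact hcount i
    · exact fun a _ b _ hab => (beta_strictAnti mu).injective hab
    · exact fun a _ b _ hab => (beta_strictAnti lam).injective hab
  have hSBeq : SB1 = SB2 := by
    ext y
    have hy := key lam hl hQ1 ((y : ZMod ℓ))
    have hy' := key mu hm hQ2 ((y : ZMod ℓ))
    obtain ⟨M1, hM1c, hM1ge, hM1⟩ := hy
    obtain ⟨M2, hM2c, hM2ge, hM2⟩ := hy'
    have hMeq : M1 = M2 := by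
      have hc := hfilterscard ((y : ZMod ℓ))
      rw [hM1, hM2] at hc
      by_contra hne
      rcases Int.lt_trichotomy M1 M2 with hlt | heq | hgt
      · have hss : (Finset.Icc (-(Q:ℤ)) M1).filter (fun z : ℤ => (z : ZMod ℓ) = (y : ZMod ℓ))
            ⊂ (Finset.Icc (-(Q:ℤ)) M2).filter (fun z : ℤ => (z : ZMod ℓ) = (y : ZMod ℓ)) := by
          refine Finset.ssubset_iff_of_subset (Finset.filter_subset_filter _ (Finset.Icc_subset_Icc le_rfl (by omega))) |>.mpr ?_
          refine ⟨M2, Finset.mem_filter.mpr ⟨Finset.mem_Icc.mpr ⟨hM2ge, le_rfl⟩, hM2c⟩, ?_⟩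
          intro hmem
          have := (Finset.mem_Icc.mp (Finset.mem_filter.mp hmem).1).2
          omega
        have := Finset.card_lt_card hss
        omega
      · exact hne heq
      · have hss : (Finset.Icc (-(Q:ℤ)) M2).filter (fun z : ℤ => (z : ZMod ℓ) = (y : ZMod ℓ))
            ⊂ (Finset.Icc (-(Q:ℤ)) M1).filter (fun z : ℤ => (z : ZMod ℓ) = (y : ZMod ℓ)) := by
          refine Finset.ssubset_iff_of_subset (Finset.filter_subset_filter _ (Finset.Icc_subset_Icc le_rfl (by omega))) |>.mpr ?_
          refine ⟨M1, Finset.mem_filter.mpr ⟨Finset.mem_Icc.mpr ⟨hM1ge, le_rfl⟩, hM1c⟩, ?_⟩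
          intro hmem
          have := (Finset.mem_Icc.mp (Finset.mem_filter.mp hmem).1).2
          omega
        have := Finset.card_lt_card hss
        omega
    constructor
    · intro hmem
      have : y ∈ SB1.filter (fun z : ℤ => (z : ZMod ℓ) = (y : ZMod ℓ)) :=
        Finset.mem_filter.mpr ⟨hmem, rfl⟩
      rw [hM1, hMeq, ← hM2] at this
      exact (Finset.mem_filter.mp this).1
    · intro hmem
      have : y ∈ SB2.filter (fun z : ℤ => (z : ZMod ℓ) = (y : ZMod ℓ)) :=
        Finset.mem_filter.mpr ⟨hmem, rfl⟩
      rw [hM2, ← hMeq, ← hM1] at this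
      exact (Finset.mem_filter.mp this).1
  -- enumeration equality
  have hbetaeq : ∀ q, beta lam q = beta mu q := by
    have hsmall : ∀ q, q < Q → beta lam q = beta mu q := by
      intro q
      induction q using Nat.strong_induction_on with
      | _ q ih =>
        intro hq
        have hle1 : beta lam q ≤ beta mu q := by
          have h1 : beta lam q ∈ SB2 := by
            rw [← hSBeq]
            exact Finset.mem_image.mpr ⟨q, Finset.mem_range.mpr hq, rfl⟩
          obtain ⟨p, hp, hpe⟩ := Finset.mem_image.mp h1
          rw [Finset.mem_range] at hp
          have hpq : q ≤ p := by
            by_contra hcon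
            push_neg at hcon
            have hip := ih p hcon (by omega)
            rw [← hip] at hpe
            have := (beta_strictAnti lam).injective hpe
            omega
          rw [← hpe]
          exact beta_anti mu hpq
        have hle2 : beta mu q ≤ beta lam q := by
          have h1 : beta mu q ∈ SB1 := by
            rw [hSBeq]
            exact Finset.mem_image.mpr ⟨q, Finset.mem_range.mpr hq, rfl⟩
          obtain ⟨p, hp, hpe⟩ := Finset.mem_image.mp h1
          rw [Finset.mem_range] at hp
          have hpq : q ≤ p := by
            by_contra hcon
            push_neg at hcon
            have hip := ih p hcon (by omega)
            rw [hip] at hpe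
            have := (beta_strictAnti mu).injective hpe
            omega
          rw [← hpe]
          exact beta_anti lam hpq
        omega
    intro q
    rcases Nat.lt_or_ge q Q with h | h
    · exact hsmall q h
    · rw [beta_stable lam (by omega), beta_stable mu (by omega)]
  -- conclude
  apply yd_ext
  ext c
  rw [mem_cells_iff, mem_cells_iff]
  have h1 := rowLen_eq_beta lam c.1
  have h2 := rowLen_eq_beta mu c.1
  have h3 := hbetaeq c.1
  omega


open Finset

/-- block count of residues of -1-q -/
lemma block_count (ℓ : ℕ) (hℓ : 0 < ℓ) (a : ℕ) (i : ZMod ℓ) :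
    ((Finset.Ico a (a+ℓ)).filter (fun q : ℕ => (((-1 - (q:ℤ)) : ℤ) : ZMod ℓ) = i)).card = 1 := by
  have hcard : (Finset.Ico a (a+ℓ)).card = ℓ := by simp
  have hinj : ∀ x ∈ Finset.Ico a (a+ℓ), ∀ y ∈ Finset.Ico a (a+ℓ),
      (((-1 - (x:ℤ)) : ℤ) : ZMod ℓ) = (((-1 - (y:ℤ)) : ℤ) : ZMod ℓ) → x = y := by
    intro x hx y hy hxy
    rw [Finset.mem_Ico] at hx hy
    push_cast at hxy
    have hcast : ((x:ℕ) : ZMod ℓ) = ((y:ℕ) : ZMod ℓ) := by linear_combination -hxy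
    rw [ZMod.natCast_eq_natCast_iff] at hcast
    have hdvd := (Nat.modEq_iff_dvd).mp hcast
    obtain ⟨k, hk⟩ := hdvd
    rcases Int.lt_trichotomy k 0 with h | h | h
    · nlinarith [hk, hx.1, hx.2, hy.1, hy.2]
    · subst h; omega
    · nlinarith [hk, hx.1, hx.2, hy.1, hy.2]
  exact filter_card_one_of_inj hℓ hcard hinj i

lemma range_count (ℓ : ℕ) (hℓ : 0 < ℓ) (K : ℕ) (i : ZMod ℓ) :
    ((Finset.range (K * ℓ)).filter (fun q : ℕ => (((-1 - (q:ℤ)) : ℤ) : ZMod ℓ) = i)).card = K := by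
  induction K with
  | zero => simp
  | succ m ih =>
    have hsplit : Finset.range ((m+1) * ℓ) =
        Finset.range (m * ℓ) ∪ Finset.Ico (m * ℓ) (m * ℓ + ℓ) := by
      ext q
      simp only [Finset.mem_range, Finset.mem_union, Finset.mem_Ico]
      constructor
      · intro h; rcases Nat.lt_or_ge q (m*ℓ) with h1 | h1
        · exact Or.inl h1
        · right; constructor; omega;
          have : (m+1)*ℓ = m*ℓ + ℓ := by ring
          omega
      · intro h
        have : (m+1)*ℓ = m*ℓ + ℓ := by ring
        rcases h with h1 | h1 <;> omega
    have hdisj : Disjoint (Finset.range (m * ℓ)) (Finset.Ico (m * ℓ) (m * ℓ + ℓ)) := by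
      rw [Finset.disjoint_left]
      intro q hq hq'
      rw [Finset.mem_range] at hq
      rw [Finset.mem_Ico] at hq'
      omega
    rw [hsplit, Finset.filter_union, Finset.card_union_of_disjoint
      (Finset.disjoint_filter_filter hdisj), ih, block_count ℓ hℓ]

/-- Young diagram from an eventually-zero antitone function -/
def ofFn (f : ℕ → ℕ) (L : ℕ) (hf : ∀ a b : ℕ, a ≤ b → f b ≤ f a) (hL : ∀ q, L ≤ q → f q = 0) :
    YoungDiagram where
  cells := ((Finset.range L) ×ˢ (Finset.range (f 0 + 1))).filter (fun c => c.2 < f c.1)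
  isLowerSet := by
    intro a b hba ha
    simp only [Finset.coe_filter, Finset.mem_product, Finset.mem_range, Set.mem_setOf_eq] at ha ⊢
    obtain ⟨⟨h1, h2⟩, h3⟩ := ha
    obtain ⟨hb1, hb2⟩ := hba
    have hf1 := hf b.1 a.1 hb1
    have hf0 := hf 0 b.1 (Nat.zero_le _)
    constructor
    constructor
    · by_contra hcon
      push_neg at hcon
      have := hL b.1 hcon
      omega
    · omega
    · omega

lemma mem_ofFn (f : ℕ → ℕ) (L : ℕ) (hf : ∀ a b : ℕ, a ≤ b → f b ≤ f a)
    (hL : ∀ q, L ≤ q → f q = 0) (c : ℕ × ℕ) :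
    c ∈ (ofFn f L hf hL).cells ↔ c.2 < f c.1 := by
  simp only [ofFn, Finset.mem_filter, Finset.mem_product, Finset.mem_range]
  constructor
  · tauto
  · intro h
    refine ⟨⟨?_, ?_⟩, h⟩
    · by_contra hcon
      push_neg at hcon
      have := hL c.1 hcon
      omega
    · have := hf 0 c.1 (Nat.zero_le _)
      omega

lemma rowLen_ofFn (f : ℕ → ℕ) (L : ℕ) (hf : ∀ a b : ℕ, a ≤ b → f b ≤ f a)
    (hL : ∀ q, L ≤ q → f q = 0) (q : ℕ) :
    (ofFn f L hf hL).rowLen q = f q := by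
  have hmem : ∀ j, ((q, j) ∈ (ofFn f L hf hL)) ↔ j < f q := by
    intro j
    rw [← YoungDiagram.mem_cells, mem_ofFn]
  rcases Nat.lt_trichotomy ((ofFn f L hf hL).rowLen q) (f q) with h | h | h
  · exfalso
    have := (hmem ((ofFn f L hf hL).rowLen q)).mpr h
    rw [YoungDiagram.mem_iff_lt_rowLen] at this
    omega
  · exact h
  · exfalso
    have hm : (q, f q) ∈ (ofFn f L hf hL) := YoungDiagram.mem_iff_lt_rowLen.mpr h
    rw [hmem (f q)] at hm
    omega

lemma exists_partition (ℓ : ℕ) (hℓ : 0 < ℓ) (α : ZMod ℓ → ℤ) :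
    ∃ (lam : YoungDiagram), ∀ i : ZMod ℓ,
      α i - α (i+1) = ResL ℓ lam i - ResL ℓ lam (i+1) := by
  classical
  haveI : NeZero ℓ := ⟨hℓ.ne'⟩
  set d : ZMod ℓ → ℤ := fun r => α r - α (r+1) with hd
  have hsum0 : ∑ r : ZMod ℓ, d r = 0 := by
    have h1 : ∑ r : ZMod ℓ, α (r+1) = ∑ r : ZMod ℓ, α r :=
      Fintype.sum_equiv (Equiv.addRight (1 : ZMod ℓ)) _ _ (fun r => rfl)
    simp only [hd]
    rw [Finset.sum_sub_distrib, h1]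
    ring
  set K : ℕ := ∑ r : ZMod ℓ, (d r).natAbs with hK
  have hKd : ∀ r : ZMod ℓ, (d r).natAbs ≤ K := by
    intro r
    exact Finset.single_le_sum (f := fun r => (d r).natAbs) (fun _ _ => Nat.zero_le _)
      (Finset.mem_univ r)
  set c : ZMod ℓ → ℕ := fun r => (K + d r).toNat with hc
  have hcval : ∀ r, (c r : ℤ) = K + d r := by
    intro r
    have h1 := hKd r
    have h2 : (d r).natAbs ≤ K := h1
    simp only [hc]
    rw [Int.toNat_of_nonneg]
    omega
  set L : ℕ := ∑ r : ZMod ℓ, c r with hL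
  have hLval : (L : ℤ) = K * ℓ := by
    simp only [hL]
    push_cast
    rw [Finset.sum_congr rfl (fun r _ => hcval r), Finset.sum_add_distrib, hsum0]
    simp [ZMod.card]
    ring
  have hLKl : L = K * ℓ := by exact_mod_cast hLval
  -- the value set
  set V : Finset ℕ := Finset.univ.biUnion
    (fun r : ZMod ℓ => (Finset.range (c r)).image (fun s => r.val + ℓ * s)) with hV
  have hblockclass : ∀ r : ZMod ℓ, ∀ y ∈ (Finset.range (c r)).image (fun s => r.val + ℓ * s),
      (y : ZMod ℓ) = r := by
    intro r y hy
    obtain ⟨s, _, rfl⟩ := Finset.mem_image.mp hy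
    push_cast
    rw [ZMod.natCast_val, ZMod.cast_id, ZMod.natCast_self]
    ring
  have hblockcard : ∀ r : ZMod ℓ, ((Finset.range (c r)).image (fun s => r.val + ℓ * s)).card = c r := by
    intro r
    rw [Finset.card_image_of_injective _ (fun a b hab => by
      have h2 : ℓ * a = ℓ * b := by omega
      exact Nat.eq_of_mul_eq_mul_left hℓ h2), Finset.card_range]
  have hVcard : V.card = L := by
    rw [hV, Finset.card_biUnion]
    · rw [hL]
      exact Finset.sum_congr rfl (fun r _ => hblockcard r)
    · intro r _ r' _ hrr'
      rw [Function.onFun, Finset.disjoint_left]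
      intro y hy hy'
      have h1 := hblockclass r y hy
      have h2 := hblockclass r' y hy'
      exact hrr' (h1 ▸ h2 ▸ rfl)
  have hVfilter : ∀ i : ZMod ℓ, (V.filter (fun y : ℕ => (y : ZMod ℓ) = i)).card = c i := by
    intro i
    have : V.filter (fun y : ℕ => (y : ZMod ℓ) = i)
        = (Finset.range (c i)).image (fun s => i.val + ℓ * s) := by
      ext y
      simp only [Finset.mem_filter, hV, Finset.mem_biUnion, Finset.mem_univ, true_and]
      constructor
      · rintro ⟨⟨r, hr⟩, hcls⟩
        have := hblockclass r y hr
        rw [this] at hcls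
        rw [← hcls]
        exact hr
      · intro hy
        exact ⟨⟨i, hy⟩, hblockclass i y hy⟩
    rw [this, hblockcard]
  -- sorted enumeration
  set asc := V.sort (· ≤ ·) with hasc
  have hlen : asc.length = L := by rw [hasc, Finset.length_sort, hVcard]
  set v : ℕ → ℕ := fun q => if h : q < L then asc.get ⟨L - 1 - q, by omega⟩ else 0 with hv
  have hvmem : ∀ q, q < L → v q ∈ V := by
    intro q hq
    simp only [hv, dif_pos hq]
    rw [← Finset.mem_sort (α := ℕ) (· ≤ ·) (s := V)]
    exact asc.get_mem _
  have hvstrict : ∀ a b, a < b → b < L → v b < v a := by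
    intro a b hab hbL
    simp only [hv, dif_pos hbL, dif_pos (by omega : a < L)]
    exact (Finset.sortedLT_sort V).strictMono_get (by simp only [Fin.mk_lt_mk]; omega)
  -- row lengths
  have hvgap : ∀ k b, b < L → k ≤ b → v b + k ≤ v (b - k) := by
    intro k
    induction k with
    | zero => intro b _ _; simpa
    | succ m ih =>
      intro b hb hm
      have h1 := ih b hb (by omega)
      have h2 := hvstrict (b - m - 1) (b - m) (by omega) (by omega)
      have h3 : b - (m+1) = b - m - 1 := by omega
      rw [h3]
      omega
  set RL : ℕ → ℕ := fun q => if q < L then v q + q + 1 else 0 with hRL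
  have hRLanti : ∀ a b : ℕ, a ≤ b → RL b ≤ RL a := by
    intro a b hab
    rcases Nat.eq_or_lt_of_le hab with h | h
    · rw [h]
    · simp only [hRL]
      split_ifs with h1 h2 h3
      · have := hvgap (b - a) b h1 (by omega)
        have h4 : b - (b - a) = a := by omega
        rw [h4] at this
        omega
      · omega
      · omega
      · omega
  have hRL0 : ∀ q, L ≤ q → RL q = 0 := by
    intro q hq
    simp only [hRL]
    rw [if_neg (by omega)]
  set lam := ofFn RL L hRLanti hRL0 with hlam
  have hrow : ∀ q, lam.rowLen q = RL q := fun q => rowLen_ofFn RL L hRLanti hRL0 q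
  have hcol : lam.colLen 0 ≤ L := by
    by_contra hcon
    push_neg at hcon
    have : (L, 0) ∈ lam := YoungDiagram.mem_iff_lt_colLen.mpr hcon
    rw [YoungDiagram.mem_iff_lt_rowLen, hrow, hRL0 L le_rfl] at this
    omega
  have hbetaS : ∀ q, q < L → beta lam q = (v q : ℤ) := by
    intro q hq
    unfold beta
    rw [hrow]
    simp only [hRL, if_pos hq]
    push_cast
    ring
  refine ⟨lam, fun i => ?_⟩
  rw [d_formula ℓ lam i (Q := L) hcol]
  rw [Finset.sum_sub_distrib]
  -- first sum = c i
  have hsum1 : (∑ q ∈ Finset.range L, if ((beta lam q : ZMod ℓ) = i) then (1:ℤ) else 0)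
      = c i := by
    have hcong : ∀ q ∈ Finset.range L,
        (if ((beta lam q : ZMod ℓ) = i) then (1:ℤ) else 0)
          = (if ((v q : ZMod ℓ) = i) then (1:ℤ) else 0) := by
      intro q hq
      rw [Finset.mem_range] at hq
      rw [hbetaS q hq]
      norm_cast
    rw [Finset.sum_congr rfl hcong, Finset.sum_boole]
    congr 1
    -- filter count via image
    have himage : (Finset.range L).image v = V := by
      apply Finset.eq_of_subset_of_card_le
      · intro y hy
        obtain ⟨q, hq, rfl⟩ := Finset.mem_image.mp hy
        exact hvmem q (Finset.mem_range.mp hq)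
      · rw [hVcard, Finset.card_image_of_injOn]
        · rw [Finset.card_range]
        · intro a ha b hb hab
          rw [Finset.mem_coe, Finset.mem_range] at ha hb
          rcases Nat.lt_trichotomy a b with h | h | h
          · have := hvstrict a b h hb; omega
          · exact h
          · have := hvstrict b a h ha; omega
    have hinjOn : Set.InjOn v ↑(Finset.range L) := by
      intro a ha b hb hab
      rw [Finset.mem_coe, Finset.mem_range] at ha hb
      rcases Nat.lt_trichotomy a b with h | h | h
      · have := hvstrict a b h hb; omega
      · exact h
      · have := hvstrict b a h ha; omega
    calc ((Finset.range L).filter (fun q => (v q : ZMod ℓ) = i)).card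
        = (((Finset.range L).filter (fun q => (v q : ZMod ℓ) = i)).image v).card := by
          rw [Finset.card_image_of_injOn (hinjOn.mono (Finset.coe_subset.mpr (Finset.filter_subset _ _)))]
      _ = (((Finset.range L).image v).filter (fun y : ℕ => (y : ZMod ℓ) = i)).card := by
          rw [Finset.filter_image]
      _ = (V.filter (fun y : ℕ => (y : ZMod ℓ) = i)).card := by rw [himage]
      _ = c i := hVfilter i
  -- second sum = K
  have hsum2 : (∑ q ∈ Finset.range L, if (((-1 - (q:ℤ)) : ℤ) : ZMod ℓ) = i then (1:ℤ) else 0)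
      = K := by
    rw [Finset.sum_boole, hLKl, range_count ℓ hℓ K i]
  rw [hsum1, hsum2, hcval i]
  simp only [hd]
  ring

end CoreShift

open CoreShift in
/-- For every `α ∈ ℤ^{ℤ/ℓℤ}` there exist a unique `ℓ`-core `ν` and a unique integer
`n ∈ ℤ` such that `α = Res_ℓ(ν) + n·δ`, where `δ = (1,1,…,1) ∈ ℤ^{ℤ/ℓℤ}`. -/
theorem exists_unique_core_shift (ℓ : ℕ) (hℓ : 0 < ℓ) (α : ZMod ℓ → ℤ) :
    ∃! p : YoungDiagram × ℤ,
      IsLCore ℓ p.1 ∧ α = ResL ℓ p.1 + p.2 • (fun _ => (1 : ℤ)) := by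
  classical
  obtain ⟨lam, hlam⟩ := exists_partition ℓ hℓ α
  obtain ⟨nu, k, hcore, hk⟩ := exists_core ℓ hℓ lam
  set g : ZMod ℓ → ℤ := fun i => α i - ResL ℓ nu i with hg
  have hshift : ∀ i, g i = g (i+1) := by
    intro i
    have h1 := hlam i
    have h2 := hk i
    have h3 := hk (i+1)
    simp only [hg]
    omega
  have hconst := const_of_shift ℓ hℓ g hshift
  set n := g 0 with hn
  have hmain : α = ResL ℓ nu + n • (fun _ => (1 : ℤ)) := by
    funext i
    have h1 := hconst i
    simp only [hg] at h1
    simp only [Pi.add_apply, Pi.smul_apply, smul_eq_mul, mul_one]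
    omega
  refine ⟨(nu, n), ⟨hcore, hmain⟩, ?_⟩
  rintro ⟨nu', n'⟩ ⟨hcore', heq'⟩
  have hpt : ∀ i, ResL ℓ nu' i + n' = ResL ℓ nu i + n := by
    intro i
    have e1 := congrFun heq' i
    have e2 := congrFun hmain i
    simp only [Pi.add_apply, Pi.smul_apply, smul_eq_mul, mul_one] at e1 e2
    omega
  have hd : ∀ i : ZMod ℓ, ResL ℓ nu' i - ResL ℓ nu' (i+1) = ResL ℓ nu i - ResL ℓ nu (i+1) := by
    intro i
    have h1 := hpt i
    have h2 := hpt (i+1)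
    omega
  have hnu : nu' = nu :=
    closed_eq ℓ hℓ (closed_of_core ℓ hℓ hcore') (closed_of_core ℓ hℓ hcore) hd
  subst hnu
  have hn' : n' = n := by have := hpt 0; omega
  rw [hn']
end

section
/- Assume ℓ ≥ 2, let c ∈ ℂ^{ℤ/ℓℤ}, set J = {i ∈ ℤ/ℓℤ : c_i = 0}, and suppose c is J-standard, i.e., the stabilizer of c in W equals W_J. Then for all integers a ≤ b, if Σ_{i=a}^{b} c_{i mod ℓ} = 0 then c_{i mod ℓ} = 0 for every integer i with a ≤ i ≤ b. -/
/-- The Cartan matrix of the cycle of length `ℓ`: `C_{jj} = 2` and, for `i ≠ j`,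
`C_{ji} = −([i = j+1] + [i = j−1])` with indices in `ℤ/ℓℤ`. -/
def cycleCartan (ℓ : ℕ) (j i : ZMod ℓ) : ℤ :=
  if i = j then 2
  else -(((if i = j + 1 then 1 else 0) + (if i = j - 1 then 1 else 0) : ℤ))

/-- The dual reflection `s_j* : ℂ^{ℤ/ℓℤ} → ℂ^{ℤ/ℓℤ}`, `(s_j* c)_i = c_i − C_{ji}·c_j`. -/
def sStar (ℓ : ℕ) (j : ZMod ℓ) (c : ZMod ℓ → ℂ) : ZMod ℓ → ℂ :=
  fun i => c i - (cycleCartan ℓ j i : ℂ) * c j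

/-- The group `W` of bijections of `ℂ^{ℤ/ℓℤ}` generated by the dual reflections `s_j*`. -/
def WStar (ℓ : ℕ) : Subgroup (Equiv.Perm (ZMod ℓ → ℂ)) :=
  Subgroup.closure {σ | ∃ j : ZMod ℓ, ∀ c, σ c = sStar ℓ j c}

/-- The subgroup `W_J ≤ W` generated by `{s_j* : j ∈ J}`. -/
def WStarJ (ℓ : ℕ) (J : Set (ZMod ℓ)) : Subgroup (Equiv.Perm (ZMod ℓ → ℂ)) :=
  Subgroup.closure {σ | ∃ j ∈ J, ∀ c, σ c = sStar ℓ j c}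

section Aux
variable (ℓ : ℕ)

lemma sStar_invol (j : ZMod ℓ) (c : ZMod ℓ → ℂ) : sStar ℓ j (sStar ℓ j c) = c := by
  funext i
  simp only [sStar]
  rw [show cycleCartan ℓ j j = 2 from if_pos rfl]
  push_cast
  ring

noncomputable def sE (j : ZMod ℓ) : Equiv.Perm (ZMod ℓ → ℂ) :=
  ⟨sStar ℓ j, sStar ℓ j, fun c => sStar_invol ℓ j c, fun c => sStar_invol ℓ j c⟩

noncomputable def F (c : ZMod ℓ → ℂ) (i : ℤ) : ℂ :=
  (∑ k ∈ Finset.Ico (0:ℤ) i, c (k : ZMod ℓ)) - ∑ k ∈ Finset.Ico i (0:ℤ), c (k : ZMod ℓ)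

lemma F_zero (c : ZMod ℓ → ℂ) : F ℓ c 0 = 0 := by simp [F]

lemma F_succ (c : ZMod ℓ → ℂ) (i : ℤ) : F ℓ c (i+1) = F ℓ c i + c (i : ZMod ℓ) := by
  unfold F
  rcases le_or_gt 0 i with h | h
  · have h1 : Finset.Ico (0:ℤ) (i+1) = insert i (Finset.Ico (0:ℤ) i) := by
      ext x; simp; omega
    have h2 : (i : ℤ) ∉ Finset.Ico (0:ℤ) i := by simp
    rw [h1, Finset.sum_insert h2,
      Finset.Ico_eq_empty (by omega : ¬ i < 0), Finset.Ico_eq_empty (by omega : ¬ i+1 < 0)]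
    simp; ring
  · have h1 : Finset.Ico i (0:ℤ) = insert i (Finset.Ico (i+1) (0:ℤ)) := by
      ext x; simp; omega
    have h2 : (i : ℤ) ∉ Finset.Ico (i+1) (0:ℤ) := by simp
    rw [h1, Finset.sum_insert h2,
      Finset.Ico_eq_empty (by omega : ¬ (0:ℤ) < i), Finset.Ico_eq_empty (by omega : ¬ (0:ℤ) < i+1)]
    simp

lemma F_ext (c : ZMod ℓ → ℂ) (G : ℤ → ℂ) (h0 : G 0 = 0)
    (hs : ∀ i : ℤ, G (i+1) = G i + c (i : ZMod ℓ)) : ∀ i, G i = F ℓ c i := by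
  intro i
  induction i using Int.induction_on with
  | zero => rw [h0, F_zero]
  | succ k ih => rw [hs, F_succ, ih]
  | pred k ih =>
    have := hs (-(k:ℤ)-1)
    have h2 := F_succ ℓ c (-(k:ℤ)-1)
    simp only [sub_add_cancel] at this h2
    have : G (-(k:ℤ)-1) = G (-(k:ℤ)) - c ((-(k:ℤ)-1 : ℤ) : ZMod ℓ) := by rw [this]; ring
    show G (-(k:ℤ)-1) = F ℓ c (-(k:ℤ)-1)
    rw [this, ih, h2]; ring
end Aux

section Aux2
variable (ℓ : ℕ)

def tauZ (j : ZMod ℓ) (i : ℤ) : ℤ :=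
  if (i : ZMod ℓ) = j then i+1 else if (i : ZMod ℓ) = j+1 then i-1 else i

lemma F_sStar (hℓ : 2 ≤ ℓ) (j : ZMod ℓ) (c : ZMod ℓ → ℂ) (i : ℤ) :
    F ℓ (sStar ℓ j c) i = F ℓ c (tauZ ℓ j i) - F ℓ c (tauZ ℓ j 0) := by
  haveI : Fact (1 < ℓ) := ⟨hℓ⟩
  have key : ∀ i : ℤ, F ℓ c (tauZ ℓ j (i+1)) = F ℓ c (tauZ ℓ j i) + (sStar ℓ j c) (i : ZMod ℓ) := by
    intro i
    have hone : (1 : ZMod ℓ) ≠ 0 := one_ne_zero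
    have hcast : ((i+1 : ℤ) : ZMod ℓ) = (i : ZMod ℓ) + 1 := by push_cast; ring
    have hcast2 : ((i+2 : ℤ) : ZMod ℓ) = (i : ZMod ℓ) + 2 := by push_cast; ring
    have hcastm : ((i-1 : ℤ) : ZMod ℓ) = (i : ZMod ℓ) - 1 := by push_cast; ring
    have hFi : F ℓ c i = F ℓ c (i-1) + c ((i-1 : ℤ) : ZMod ℓ) := by
      have := F_succ ℓ c (i-1); rw [sub_add_cancel] at this; exact this
    by_cases h0 : (i : ZMod ℓ) = j
    · have t1 : tauZ ℓ j i = i + 1 := if_pos h0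
      have t2 : tauZ ℓ j (i+1) = i := by
        unfold tauZ
        rw [hcast, h0, if_neg (by simpa using hone), if_pos rfl]
        ring
      rw [t1, t2, F_succ]
      simp only [sStar, cycleCartan, h0, if_pos rfl]
      push_cast
      ring
    · by_cases h1 : (i : ZMod ℓ) = j + 1
      · have t1 : tauZ ℓ j i = i - 1 := by unfold tauZ; rw [if_neg h0, if_pos h1]
        by_cases h2 : (2 : ZMod ℓ) = 0
        · have hj2 : j + 1 + 1 = j := by linear_combination h2
          have t2 : tauZ ℓ j (i+1) = i + 2 := by
            unfold tauZ
            rw [hcast, h1, if_pos hj2]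
            ring
          have hC : cycleCartan ℓ j ((i : ZMod ℓ)) = -2 := by
            unfold cycleCartan
            rw [if_neg h0, if_pos h1, if_pos (by rw [h1]; linear_combination h2)]
            norm_num
          rw [t1, t2, show (i:ℤ)+2 = (i+1)+1 by ring, F_succ, F_succ, hFi]
          simp only [sStar]
          rw [hC]
          simp only [hcast, hcastm, h1]
          rw [show j + 1 - 1 = j by ring, show j + 1 + 1 = j from hj2]
          push_cast
          ring
        · have t2 : tauZ ℓ j (i+1) = i + 1 := by
            unfold tauZ
            rw [hcast, h1, if_neg (by intro hcontra; exact h2 (by linear_combination hcontra)),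
              if_neg (by simpa using hone)]
          have hC : cycleCartan ℓ j ((i : ZMod ℓ)) = -1 := by
            unfold cycleCartan
            rw [if_neg h0, if_pos h1,
              if_neg (by rw [h1]; intro hcontra; exact h2 (by linear_combination hcontra))]
            norm_num
          rw [t1, t2, F_succ, hFi]
          simp only [sStar]
          rw [hC]
          simp only [hcastm, h1]
          rw [show j + 1 - 1 = j by ring]
          push_cast
          ring
      · have t1 : tauZ ℓ j i = i := by unfold tauZ; rw [if_neg h0, if_neg h1]
        by_cases h3 : (i : ZMod ℓ) + 1 = j
        · have t2 : tauZ ℓ j (i+1) = i + 2 := by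
            unfold tauZ
            rw [hcast, if_pos h3]
            ring
          have hC : cycleCartan ℓ j ((i : ZMod ℓ)) = -1 := by
            unfold cycleCartan
            rw [if_neg h0, if_neg h1, if_pos (by rw [← h3]; ring)]
            norm_num
          rw [t1, t2, show (i:ℤ)+2 = (i+1)+1 by ring, F_succ, F_succ]
          simp only [sStar]
          rw [hC]
          simp only [hcast, h3]
          push_cast
          ring
        · have t2 : tauZ ℓ j (i+1) = i + 1 := by
            unfold tauZ
            rw [hcast, if_neg h3, if_neg (by intro hcontra; exact h0 (by linear_combination hcontra))]
          have hC : cycleCartan ℓ j ((i : ZMod ℓ)) = 0 := by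
            unfold cycleCartan
            rw [if_neg h0, if_neg h1, if_neg (by intro hcontra; exact h3 (by linear_combination hcontra))]
            norm_num
          rw [t1, t2, F_succ]
          simp only [sStar]
          rw [hC]
          push_cast
          ring
  have := F_ext ℓ (sStar ℓ j c) (fun i => F ℓ c (tauZ ℓ j i) - F ℓ c (tauZ ℓ j 0)) (sub_self _)
    (by intro i; rw [key]; ring) i
  exact this.symm
end Aux2

section Aux3
variable (ℓ : ℕ)

noncomputable def wp (w : List (ZMod ℓ)) : Equiv.Perm (ZMod ℓ → ℂ) := (w.map (sE ℓ)).prod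

lemma wp_mem (w : List (ZMod ℓ)) : wp ℓ w ∈ WStar ℓ := by
  apply Subgroup.list_prod_mem
  intro x hx
  simp only [List.mem_map] at hx
  obtain ⟨j, -, rfl⟩ := hx
  exact Subgroup.subset_closure ⟨j, fun c => rfl⟩

def tw : List (ZMod ℓ) → ℤ → ℤ
  | [] => id
  | j :: w => tw w ∘ tauZ ℓ j

lemma tw_append (w₁ w₂ : List (ZMod ℓ)) (i : ℤ) :
    tw ℓ (w₁ ++ w₂) i = tw ℓ w₂ (tw ℓ w₁ i) := by
  induction w₁ generalizing i with
  | nil => rfl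
  | cons j w ih => simp [tw, ih]

lemma F_wp (hℓ : 2 ≤ ℓ) (w : List (ZMod ℓ)) (c : ZMod ℓ → ℂ) (i : ℤ) :
    F ℓ (wp ℓ w c) i = F ℓ c (tw ℓ w i) - F ℓ c (tw ℓ w 0) := by
  induction w generalizing i with
  | nil => simp [wp, tw, F_zero]
  | cons j w ih =>
    have hw : wp ℓ (j :: w) c = sStar ℓ j (wp ℓ w c) := by
      simp [wp, Equiv.Perm.mul_apply]
      rfl
    rw [hw, F_sStar ℓ hℓ, ih, ih]
    simp [tw]

noncomputable def Del [NeZero ℓ] (c : ZMod ℓ → ℂ) : ℂ := ∑ r : ZMod ℓ, c r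

lemma sum_Ico_int (n : ℕ) (g : ℤ → ℂ) :
    ∑ k ∈ Finset.Ico (0:ℤ) (n:ℤ), g k = ∑ k ∈ Finset.range n, g (k : ℤ) := by
  induction n with
  | zero => simp
  | succ m ih =>
    have h1 : Finset.Ico (0:ℤ) ((m+1:ℕ):ℤ) = insert (m:ℤ) (Finset.Ico (0:ℤ) (m:ℤ)) := by
      ext x; simp
    rw [h1, Finset.sum_insert (by simp), Finset.sum_range_succ, ih]
    ring

lemma window [NeZero ℓ] (c : ZMod ℓ → ℂ) (i : ℤ) :
    ∑ k ∈ Finset.Ico i (i + ℓ), c (k : ZMod ℓ) = Del ℓ c := by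
  have step : ∀ i : ℤ, ∑ k ∈ Finset.Ico (i+1) (i+1+ℓ), c (k : ZMod ℓ)
      = ∑ k ∈ Finset.Ico i (i+ℓ), c (k : ZMod ℓ) := by
    intro i
    have hℓ0 : 0 < (ℓ:ℤ) := by
      have := NeZero.ne ℓ; omega
    have h1 : Finset.Ico i (i+ℓ) = insert i (Finset.Ico (i+1) (i+ℓ)) := by
      ext x; simp; omega
    have h2 : Finset.Ico (i+1) (i+1+ℓ) = insert (i+ℓ) (Finset.Ico (i+1) (i+ℓ)) := by
      ext x; simp; omega
    rw [h1, h2, Finset.sum_insert (by simp), Finset.sum_insert (by simp)]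
    congr 1
    push_cast
    simp
  have base : ∑ k ∈ Finset.Ico (0:ℤ) ((0:ℤ)+ℓ), c (k : ZMod ℓ) = Del ℓ c := by
    rw [zero_add, sum_Ico_int]
    apply Finset.sum_nbij' (i := fun (k:ℕ) => (k : ZMod ℓ)) (j := fun r => r.val)
    · intro k _; exact Finset.mem_univ _
    · intro r _; exact Finset.mem_range.2 (ZMod.val_lt r)
    · intro k hk; exact ZMod.val_cast_of_lt (Finset.mem_range.1 hk)
    · intro r _; exact ZMod.natCast_rightInverse r
    · intro k _; norm_cast
  have main : ∀ i : ℤ, ∑ k ∈ Finset.Ico i (i + ℓ), c (k : ZMod ℓ)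
      = ∑ k ∈ Finset.Ico (0:ℤ) ((0:ℤ)+ℓ), c (k : ZMod ℓ) := by
    intro i
    induction i using Int.induction_on with
    | zero => rfl
    | succ m ih => rw [step, ih]
    | pred m ih =>
      have hstep := step (-(m:ℤ)-1)
      rw [show (-(m:ℤ)-1+1 : ℤ) = -(m:ℤ) by ring] at hstep
      exact hstep.symm.trans ih
  rw [main, base]

lemma F_diff_nat [NeZero ℓ] (c : ZMod ℓ → ℂ) (p : ℤ) (n : ℕ) :
    F ℓ c (p + n) - F ℓ c p = ∑ k ∈ Finset.Ico p (p + (n:ℤ)), c (k : ZMod ℓ) := by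
  induction n with
  | zero => simp
  | succ m ih =>
    have h1 : Finset.Ico p (p + ((m+1:ℕ):ℤ)) = insert (p+m) (Finset.Ico p (p + (m:ℤ))) := by
      ext x; simp; push_cast; omega
    rw [h1, Finset.sum_insert (by simp), show (p + ((m+1:ℕ):ℤ)) = (p + (m:ℤ)) + 1 by push_cast; ring,
      F_succ, ← ih]
    ring

lemma F_diff [NeZero ℓ] (c : ZMod ℓ → ℂ) (p q : ℤ) (h : p ≤ q) :
    F ℓ c q - F ℓ c p = ∑ k ∈ Finset.Ico p q, c (k : ZMod ℓ) := by
  have := F_diff_nat ℓ c p (q - p).toNat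
  rw [show (((q-p).toNat : ℕ) : ℤ) = q - p by omega, show p + (q - p) = q by ring] at this
  exact this

lemma F_addL [NeZero ℓ] (c : ZMod ℓ → ℂ) (i : ℤ) :
    F ℓ c (i + ℓ) = F ℓ c i + Del ℓ c := by
  have h := F_diff ℓ c i (i + ℓ) (by have := NeZero.ne ℓ; omega)
  rw [window ℓ c i] at h
  linear_combination h

lemma F_addMul [NeZero ℓ] (c : ZMod ℓ → ℂ) (i : ℤ) (m : ℤ) :
    F ℓ c (i + m * ℓ) = F ℓ c i + m * Del ℓ c := by
  induction m using Int.induction_on with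
  | zero => simp
  | succ k ih =>
    rw [show i + (k+1) * ℓ = (i + k * ℓ) + ℓ by ring, F_addL, ih]
    push_cast; ring
  | pred k ih =>
    have h2 := F_addL ℓ c (i + (-(k:ℤ)-1) * ℓ)
    rw [show i + (-(k:ℤ)-1) * ℓ + ℓ = i + (-(k:ℤ)) * ℓ by ring, ih] at h2
    show F ℓ c (i + (-(k:ℤ)-1) * ℓ) = F ℓ c i + ((-(k:ℤ)-1 : ℤ) : ℂ) * Del ℓ c
    push_cast at h2 ⊢
    linear_combination -h2
end Aux3

section Aux4
variable (ℓ : ℕ)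

lemma natCast_ne (n : ℕ) (h1 : 0 < n) (h2 : n < ℓ) : ((n:ℕ) : ZMod ℓ) ≠ 0 := by
  intro h
  rw [ZMod.natCast_eq_zero_iff] at h
  have := Nat.le_of_dvd h1 h
  omega

def T : ℕ → ℤ → List (ZMod ℓ)
  | 0, _ => []
  | 1, p => [(p : ZMod ℓ)]
  | (n+2), p => (p : ZMod ℓ) :: (T (n+1) (p+1) ++ [(p : ZMod ℓ)])

def swapMap (p : ℤ) (n : ℕ) (i : ℤ) : ℤ :=
  if (i : ZMod ℓ) = (p : ZMod ℓ) then i + n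
  else if (i : ZMod ℓ) = (p : ZMod ℓ) + (n : ZMod ℓ) then i - n
  else i

lemma tw_T (hℓ : 2 ≤ ℓ) : ∀ (n : ℕ) (p : ℤ) (i : ℤ), 0 < n+1 → n+1 < ℓ →
    tw ℓ (T ℓ (n+1) p) i = swapMap ℓ p (n+1) i := by
  haveI : Fact (1 < ℓ) := ⟨hℓ⟩
  have hone : (1 : ZMod ℓ) ≠ 0 := one_ne_zero
  intro n
  induction n with
  | zero =>
    intro p i _ _
    show tauZ ℓ (p : ZMod ℓ) i = swapMap ℓ p 1 i
    unfold tauZ swapMap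
    norm_num
  | succ m ih =>
    intro p i _ hlt
    have hm1 : ((m+1:ℕ) : ZMod ℓ) ≠ 0 := natCast_ne ℓ (m+1) (by omega) (by omega)
    have hm2 : ((m+2:ℕ) : ZMod ℓ) ≠ 0 := natCast_ne ℓ (m+2) (by omega) (by omega)
    show tw ℓ (T ℓ (m+2) p) i = swapMap ℓ p (m+2) i
    have hT : T ℓ (m+2) p = (p : ZMod ℓ) :: (T ℓ (m+1) (p+1) ++ [(p : ZMod ℓ)]) := rfl
    rw [hT]
    show tw ℓ (T ℓ (m+1) (p+1) ++ [(p : ZMod ℓ)]) (tauZ ℓ (p : ZMod ℓ) i) = _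
    rw [tw_append]
    rw [ih (p+1) _ (by omega) (by omega)]
    show tauZ ℓ (p : ZMod ℓ) (swapMap ℓ (p+1) (m+1) (tauZ ℓ (p : ZMod ℓ) i)) = _
    have hp1 : ((p+1:ℤ) : ZMod ℓ) = (p : ZMod ℓ) + 1 := by push_cast; ring
    have hne1 : (p : ZMod ℓ) + 1 ≠ (p : ZMod ℓ) := by
      intro h; exact hone (by linear_combination h)
    by_cases hx : (i : ZMod ℓ) = (p : ZMod ℓ)
    · have s1 : tauZ ℓ (p : ZMod ℓ) i = i + 1 := if_pos hx
      have c1 : ((i+1:ℤ) : ZMod ℓ) = (p : ZMod ℓ) + 1 := by push_cast; rw [hx]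
      have s2 : swapMap ℓ (p+1) (m+1) (i+1) = i + 1 + ((m+1:ℕ):ℤ) := by
        unfold swapMap; rw [if_pos (by rw [c1, hp1])]
      have c2 : ((i + 1 + ((m+1:ℕ):ℤ) : ℤ) : ZMod ℓ) = (p : ZMod ℓ) + ((m+2:ℕ) : ZMod ℓ) := by
        push_cast; rw [hx]; ring
      have s3 : tauZ ℓ (p : ZMod ℓ) (i + 1 + ((m+1:ℕ):ℤ)) = i + 1 + ((m+1:ℕ):ℤ) := by
        unfold tauZ
        rw [if_neg (by rw [c2]; intro h; exact hm2 (by push_cast at h ⊢; linear_combination h)),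
          if_neg (by rw [c2]; intro h; exact hm1 (by push_cast at h ⊢; linear_combination h))]
      rw [s1, s2, s3]
      unfold swapMap
      rw [if_pos hx]
      push_cast; ring
    · by_cases hx2 : (i : ZMod ℓ) = (p : ZMod ℓ) + ((m+2:ℕ) : ZMod ℓ)
      · have hxne1 : (i : ZMod ℓ) ≠ (p : ZMod ℓ) + 1 := by
          rw [hx2]; intro h; exact hm1 (by push_cast at h ⊢; linear_combination h)
        have s1 : tauZ ℓ (p : ZMod ℓ) i = i := by
          unfold tauZ; rw [if_neg hx, if_neg hxne1]
        have s2 : swapMap ℓ (p+1) (m+1) i = i - ((m+1:ℕ):ℤ) := by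
          unfold swapMap
          rw [if_neg (by rw [hp1]; exact hxne1),
            if_pos (by rw [hx2, hp1]; push_cast; ring)]
        have c2 : ((i - ((m+1:ℕ):ℤ) : ℤ) : ZMod ℓ) = (p : ZMod ℓ) + 1 := by
          push_cast; rw [hx2]; push_cast; ring
        have s3 : tauZ ℓ (p : ZMod ℓ) (i - ((m+1:ℕ):ℤ)) = i - ((m+1:ℕ):ℤ) - 1 := by
          unfold tauZ
          rw [if_neg (by rw [c2]; exact hne1), if_pos c2]
        rw [s1, s2, s3]
        unfold swapMap
        rw [if_neg hx, if_pos hx2]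
        push_cast; ring
      · by_cases hx3 : (i : ZMod ℓ) = (p : ZMod ℓ) + 1
        · have s1 : tauZ ℓ (p : ZMod ℓ) i = i - 1 := by
            unfold tauZ; rw [if_neg hx, if_pos hx3]
          have c1 : ((i-1:ℤ) : ZMod ℓ) = (p : ZMod ℓ) := by push_cast; rw [hx3]; ring
          have s2 : swapMap ℓ (p+1) (m+1) (i-1) = i - 1 := by
            unfold swapMap
            rw [if_neg (by rw [c1, hp1]; exact fun h => hne1 h.symm),
              if_neg (by rw [c1, hp1]; intro h; exact hm2 (by push_cast at h ⊢; linear_combination -h))]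
          have s3 : tauZ ℓ (p : ZMod ℓ) (i - 1) = i := by
            unfold tauZ; rw [if_pos c1]; ring
          rw [s1, s2, s3]
          unfold swapMap
          rw [if_neg hx, if_neg hx2]
        · have s1 : tauZ ℓ (p : ZMod ℓ) i = i := by
            unfold tauZ; rw [if_neg hx, if_neg hx3]
          have s2 : swapMap ℓ (p+1) (m+1) i = i := by
            unfold swapMap
            rw [if_neg (by rw [hp1]; exact hx3),
              if_neg (by rw [hp1]; intro h; exact hx2 (by push_cast at h ⊢; linear_combination h))]
          have s3 : tauZ ℓ (p : ZMod ℓ) i = i := s1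
          rw [s1, s2, s3]
          unfold swapMap
          rw [if_neg hx, if_neg hx2]
end Aux4


section Aux5
variable (ℓ : ℕ)

def Uw (x : ℤ) (k : ℕ) : List (ZMod ℓ) := T ℓ k x ++ T ℓ (ℓ - k) (x + k)

def TransMap (x : ℤ) (k : ℕ) (i : ℤ) : ℤ :=
  if (i : ZMod ℓ) = (x : ZMod ℓ) then i + ℓ
  else if (i : ZMod ℓ) = (x : ZMod ℓ) + (k : ZMod ℓ) then i - ℓ
  else i

lemma tw_U (hℓ : 2 ≤ ℓ) (x : ℤ) (k : ℕ) (h1 : 0 < k) (h2 : k < ℓ) (i : ℤ) :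
    tw ℓ (Uw ℓ x k) i = TransMap ℓ x k i := by
  obtain ⟨k', rfl⟩ : ∃ k', k = k' + 1 := ⟨k - 1, by omega⟩
  obtain ⟨j', hj'⟩ : ∃ j', ℓ - (k'+1) = j' + 1 := ⟨ℓ - (k'+1) - 1, by omega⟩
  have hK : ((k'+1 : ℕ) : ZMod ℓ) ≠ 0 := natCast_ne ℓ _ h1 h2
  have hL : ((ℓ - (k'+1) : ℕ) : ZMod ℓ) = - ((k'+1 : ℕ) : ZMod ℓ) := by
    have h := ZMod.natCast_self ℓ
    have : ((k'+1 : ℕ) : ZMod ℓ) + ((ℓ - (k'+1) : ℕ) : ZMod ℓ) = ((ℓ:ℕ) : ZMod ℓ) := by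
      rw [← Nat.cast_add]; congr 1; omega
    rw [h] at this
    linear_combination this
  have hxk : ((x + (k'+1:ℕ) : ℤ) : ZMod ℓ) = (x : ZMod ℓ) + ((k'+1:ℕ) : ZMod ℓ) := by
    push_cast; ring
  unfold Uw
  rw [tw_append, tw_T ℓ hℓ k' x i (by omega) (by omega), hj',
    tw_T ℓ hℓ j' (x + (k'+1:ℕ)) _ (by omega) (by omega), ← hj']
  unfold swapMap TransMap
  by_cases hx : (i : ZMod ℓ) = (x : ZMod ℓ)
  · rw [if_pos hx, if_pos hx]
    have c1 : ((i + (k'+1:ℕ) : ℤ) : ZMod ℓ) = ((x + (k'+1:ℕ) : ℤ) : ZMod ℓ) := by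
      push_cast; rw [hx]
    rw [if_pos c1]
    push_cast
    omega
  · by_cases hx2 : (i : ZMod ℓ) = (x : ZMod ℓ) + ((k'+1:ℕ) : ZMod ℓ)
    · rw [if_neg hx, if_pos hx2, if_neg hx, if_pos hx2]
      have c1 : ((i - (k'+1:ℕ) : ℤ) : ZMod ℓ) = (x : ZMod ℓ) := by
        push_cast; push_cast at hx2; rw [hx2]; ring
      rw [if_neg (by rw [c1, hxk]; intro h; exact hK (by linear_combination -h)),
        if_pos (by rw [c1, hxk, hL]; ring)]
      push_cast
      omega
    · rw [if_neg hx, if_neg hx2, if_neg hx, if_neg hx2]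
      rw [if_neg (by rw [hxk]; exact hx2),
        if_neg (by rw [hxk, hL]; intro h; exact hx (by linear_combination h))]

def rep : ℕ → List (ZMod ℓ) → List (ZMod ℓ)
  | 0, _ => []
  | (m+1), w => w ++ rep m w

lemma tw_repU (hℓ : 2 ≤ ℓ) (x : ℤ) (k : ℕ) (h1 : 0 < k) (h2 : k < ℓ) (m : ℕ) (i : ℤ) :
    tw ℓ (rep ℓ m (Uw ℓ x k)) i =
      if (i : ZMod ℓ) = (x : ZMod ℓ) then i + m * ℓ
      else if (i : ZMod ℓ) = (x : ZMod ℓ) + (k : ZMod ℓ) then i - m * ℓ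
      else i := by
  have hK : ((k : ℕ) : ZMod ℓ) ≠ 0 := natCast_ne ℓ _ h1 h2
  induction m generalizing i with
  | zero =>
    show i = _
    by_cases hx : (i : ZMod ℓ) = (x : ZMod ℓ)
    · rw [if_pos hx]; push_cast; ring
    · by_cases hx2 : (i : ZMod ℓ) = (x : ZMod ℓ) + (k : ZMod ℓ)
      · rw [if_neg hx, if_pos hx2]; push_cast; ring
      · rw [if_neg hx, if_neg hx2]
  | succ m ih =>
    show tw ℓ (Uw ℓ x k ++ rep ℓ m (Uw ℓ x k)) i = _
    rw [tw_append, tw_U ℓ hℓ x k h1 h2]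
    unfold TransMap
    by_cases hx : (i : ZMod ℓ) = (x : ZMod ℓ)
    · rw [if_pos hx, ih]
      have c1 : ((i + ℓ : ℤ) : ZMod ℓ) = (x : ZMod ℓ) := by push_cast; simp [hx]
      rw [if_pos c1, if_pos hx]
      push_cast; ring
    · by_cases hx2 : (i : ZMod ℓ) = (x : ZMod ℓ) + (k : ZMod ℓ)
      · rw [if_neg hx, if_pos hx2, ih]
        have c1 : ((i - ℓ : ℤ) : ZMod ℓ) = (x : ZMod ℓ) + (k : ZMod ℓ) := by
          push_cast; simp [hx2]
        rw [if_neg (by rw [c1]; intro h; exact hK (by linear_combination h)), if_pos c1,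
          if_neg hx, if_pos hx2]
        push_cast; ring
      · rw [if_neg hx, if_neg hx2, ih, if_neg hx, if_neg hx2, if_neg hx, if_neg hx2]

lemma eq_of_F (hℓ0 : ℓ ≠ 0) (c₁ c₂ : ZMod ℓ → ℂ) (h : ∀ i, F ℓ c₁ i = F ℓ c₂ i) : c₁ = c₂ := by
  haveI : NeZero ℓ := ⟨hℓ0⟩
  funext r
  have hr : (((r.val : ℕ) : ℤ) : ZMod ℓ) = r := by
    push_cast
    exact ZMod.natCast_rightInverse r
  have h1 := F_succ ℓ c₁ (r.val : ℤ)
  have h2 := F_succ ℓ c₂ (r.val : ℤ)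
  rw [hr] at h1 h2
  have := h ((r.val : ℤ) + 1)
  rw [h1, h2, h (r.val : ℤ)] at this
  linear_combination this

end Aux5

section Aux6
variable (ℓ : ℕ)

lemma tw_big (hℓ : 2 ≤ ℓ) (p q : ℤ) (hpq : p < q) (hnd : ¬ ((ℓ:ℤ) ∣ (q - p))) :
    ∃ w : List (ZMod ℓ), ∀ i : ℤ, tw ℓ w i =
      if (i : ZMod ℓ) = (p : ZMod ℓ) then i + (q - p)
      else if (i : ZMod ℓ) = (q : ZMod ℓ) then i - (q - p)
      else i := by
  have hl0 : (0:ℤ) < (ℓ:ℤ) := by omega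
  set n := q - p with hn
  have hr0 : 0 < n % ℓ := by
    have h1 : n % ℓ ≠ 0 := fun h => hnd (Int.dvd_of_emod_eq_zero h)
    have h2 : 0 ≤ n % ℓ := Int.emod_nonneg n (by omega)
    omega
  have hrl : n % ℓ < ℓ := Int.emod_lt_of_pos n hl0
  have hm0 : 0 ≤ n / ℓ := Int.ediv_nonneg (by omega) (by omega)
  set r : ℕ := (n % ℓ).toNat with hrdef
  set m : ℕ := (n / ℓ).toNat with hmdef
  have hrZ : ((r:ℕ):ℤ) = n % ℓ := Int.toNat_of_nonneg (by omega)
  have hmZ : ((m:ℕ):ℤ) = n / ℓ := Int.toNat_of_nonneg hm0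
  have hrepr : n = (m:ℤ) * ℓ + r := by
    rw [hrZ, hmZ]
    have := Int.mul_ediv_add_emod n ℓ
    linarith
  have hrpos : 0 < r := by omega
  have hrlt : r < ℓ := by omega
  have hrne : ((r:ℕ) : ZMod ℓ) ≠ 0 := natCast_ne ℓ r hrpos hrlt
  have hqbar : ((q:ℤ) : ZMod ℓ) = (p : ZMod ℓ) + ((r:ℕ) : ZMod ℓ) := by
    have : q = p + ((m:ℤ) * ℓ + r) := by omega
    rw [this]
    push_cast
    rw [ZMod.natCast_self]
    ring
  have hLsub : ((ℓ - r : ℕ) : ZMod ℓ) = - ((r:ℕ) : ZMod ℓ) := by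
    have h := ZMod.natCast_self ℓ
    have h2 : ((r : ℕ) : ZMod ℓ) + ((ℓ - r : ℕ) : ZMod ℓ) = ((ℓ:ℕ) : ZMod ℓ) := by
      rw [← Nat.cast_add]; congr 1; omega
    rw [h] at h2
    linear_combination h2
  have hxbar : ((p + (r:ℕ) : ℤ) : ZMod ℓ) = (p : ZMod ℓ) + ((r:ℕ) : ZMod ℓ) := by push_cast; ring
  refine ⟨T ℓ r p ++ rep ℓ m (Uw ℓ (p + r) (ℓ - r)), ?_⟩
  intro i
  obtain ⟨r', hr'⟩ : ∃ r', r = r' + 1 := ⟨r - 1, by omega⟩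
  rw [tw_append]
  rw [hr', tw_T ℓ hℓ r' p i (by omega) (by omega), ← hr']
  rw [tw_repU ℓ hℓ (p + r) (ℓ - r) (by omega) (by omega)]
  by_cases hx : (i : ZMod ℓ) = (p : ZMod ℓ)
  · have hs : swapMap ℓ p r i = i + r := by unfold swapMap; rw [if_pos hx]
    rw [hs]
    have c1 : ((i + (r:ℕ) : ℤ) : ZMod ℓ) = ((p + (r:ℕ) : ℤ) : ZMod ℓ) := by
      push_cast; rw [hx]
    rw [if_pos c1, if_pos hx]
    linear_combination -hrepr
  · by_cases hx2 : (i : ZMod ℓ) = ((q:ℤ) : ZMod ℓ)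
    · have hx2' : (i : ZMod ℓ) = (p : ZMod ℓ) + ((r:ℕ) : ZMod ℓ) := hx2.trans hqbar
      have hs : swapMap ℓ p r i = i - r := by unfold swapMap; rw [if_neg hx, if_pos hx2']
      rw [hs]
      have c1 : ((i - (r:ℕ) : ℤ) : ZMod ℓ) = (p : ZMod ℓ) := by
        push_cast; rw [hx2']; push_cast; ring
      have cn1 : ¬ ((i - (r:ℕ) : ℤ) : ZMod ℓ) = ((p + (r:ℕ) : ℤ) : ZMod ℓ) := by
        rw [c1, hxbar]; intro h; exact hrne (by linear_combination -h)
      have cp2 : ((i - (r:ℕ) : ℤ) : ZMod ℓ) = ((p + (r:ℕ) : ℤ) : ZMod ℓ) + ((ℓ - r : ℕ) : ZMod ℓ) := by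
        rw [c1, hxbar, hLsub]; ring
      rw [if_neg cn1, if_pos cp2, if_neg hx, if_pos hx2]
      linear_combination hrepr
    · have hx2' : ¬ (i : ZMod ℓ) = (p : ZMod ℓ) + ((r:ℕ) : ZMod ℓ) := by
        rw [← hqbar]; exact hx2
      have hs : swapMap ℓ p r i = i := by unfold swapMap; rw [if_neg hx, if_neg hx2']
      rw [hs]
      have cn1 : ¬ (i : ZMod ℓ) = ((p + (r:ℕ) : ℤ) : ZMod ℓ) := by rw [hxbar]; exact hx2'
      have cn2 : ¬ (i : ZMod ℓ) = ((p + (r:ℕ) : ℤ) : ZMod ℓ) + ((ℓ - r : ℕ) : ZMod ℓ) := by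
        rw [hxbar, hLsub]; intro h; exact hx (by linear_combination h)
      rw [if_neg cn1, if_neg cn2, if_neg hx, if_neg hx2]

lemma WJ_fix (J : Set (ZMod ℓ)) (d : ZMod ℓ → ℂ) (hd : ∀ j ∈ J, d j = 0)
    (σ : Equiv.Perm (ZMod ℓ → ℂ)) (hσ : σ ∈ WStarJ ℓ J) : σ d = d := by
  let S : Subgroup (Equiv.Perm (ZMod ℓ → ℂ)) :=
    { carrier := {σ | σ d = d}
      mul_mem' := by
        intro x y hx hy
        simp only [Set.mem_setOf_eq] at *
        rw [Equiv.Perm.mul_apply, hy, hx]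
      one_mem' := rfl
      inv_mem' := by
        intro x hx
        simp only [Set.mem_setOf_eq] at *
        nth_rewrite 1 [← hx]
        exact x.symm_apply_apply d }
  have hle : WStarJ ℓ J ≤ S := by
    apply (Subgroup.closure_le _).2
    rintro τ ⟨j, hj, hs⟩
    show τ d = d
    rw [hs]
    funext i
    simp [sStar, hd j hj]
  exact hle hσ

lemma sum_ite_zero {α : Type*} (s : Finset α) (P : α → Prop) [DecidablePred P]
    (h : (∑ x ∈ s, if P x then (0:ℂ) else 1) = 0) : ∀ x ∈ s, P x := by
  classical
  have h2 : (∑ x ∈ s, if ¬ P x then (1:ℂ) else 0) = 0 := by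
    have h2 : (∑ x ∈ s, if ¬ P x then (1:ℂ) else 0) = (∑ x ∈ s, if P x then (0:ℂ) else 1) := by
      apply Finset.sum_congr rfl
      intro x _
      by_cases hx : P x <;> simp [hx]
    rw [h2, h]
  rw [Finset.sum_boole] at h2
  have hcard : (s.filter (fun x => ¬ P x)).card = 0 := by exact_mod_cast h2
  intro x hx
  by_contra hPx
  have hmem : x ∈ s.filter (fun x => ¬ P x) := Finset.mem_filter.2 ⟨hx, hPx⟩
  rw [Finset.card_eq_zero] at hcard
  rw [hcard] at hmem
  exact absurd hmem (Finset.notMem_empty x)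

end Aux6

/-- Assume `ℓ ≥ 2`, let `c ∈ ℂ^{ℤ/ℓℤ}`, set `J = {i ∈ ℤ/ℓℤ : c_i = 0}`, and suppose `c`
is `J`-standard, i.e., the stabilizer of `c` in `W` equals `W_J`.  Then for all integers
`a ≤ b`, if `Σ_{i=a}^{b} c_{i mod ℓ} = 0` then `c_{i mod ℓ} = 0` for every integer `i`
with `a ≤ i ≤ b`. -/
theorem JStandard_consecutive_sum_zero (ℓ : ℕ) (hℓ : 2 ≤ ℓ) (c : ZMod ℓ → ℂ)
    (hstd : ∀ σ : Equiv.Perm (ZMod ℓ → ℂ), σ ∈ WStar ℓ →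
      (σ c = c ↔ σ ∈ WStarJ ℓ {i : ZMod ℓ | c i = 0})) :
    ∀ a b : ℤ, a ≤ b → (∑ i ∈ Finset.Icc a b, c (i : ZMod ℓ)) = 0 →
      ∀ i ∈ Finset.Icc a b, c (i : ZMod ℓ) = 0 := by
  classical
  haveI : NeZero ℓ := ⟨by omega⟩
  haveI : Fact (1 < ℓ) := ⟨hℓ⟩
  intro a b hab hsum i hi
  set d : ZMod ℓ → ℂ := fun r => if c r = 0 then 0 else 1 with hd_def
  have hd0 : ∀ j ∈ {i : ZMod ℓ | c i = 0}, d j = 0 := by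
    intro j hj
    simp only [Set.mem_setOf_eq] at hj
    simp [hd_def, hj]
  have hIcc : Finset.Icc a b = Finset.Ico a (b+1) := by ext x; simp
  have hFq : F ℓ c (b+1) = F ℓ c a := by
    have h := F_diff ℓ c a (b+1) (by omega)
    rw [← hIcc, hsum] at h
    linear_combination h
  have keyd : ∀ w : List (ZMod ℓ), wp ℓ w c = c →
      ∀ x : ℤ, F ℓ d x = F ℓ d (tw ℓ w x) - F ℓ d (tw ℓ w 0) := by
    intro w hfix x
    have hmem := wp_mem ℓ w
    have hJ := (hstd (wp ℓ w) hmem).1 hfix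
    have hfixd : wp ℓ w d = d := WJ_fix ℓ _ d hd0 _ hJ
    have h := F_wp ℓ hℓ w d x
    rw [hfixd] at h
    exact h
  by_cases hΔ : Del ℓ c = 0
  · -- all entries of c vanish
    have hall : ∀ r : ZMod ℓ, c r = 0 := by
      have hU := tw_U ℓ hℓ 0 1 (by omega) (by omega)
      have hval : ∀ y : ℤ, F ℓ c (TransMap ℓ 0 1 y) = F ℓ c y := by
        intro y
        unfold TransMap
        by_cases hy : (y : ZMod ℓ) = ((0:ℤ) : ZMod ℓ)
        · rw [if_pos hy]
          have h := F_addMul ℓ c y 1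
          rw [show y + 1 * (ℓ:ℤ) = y + ℓ from by ring] at h
          rw [h, hΔ]; ring
        · rw [if_neg hy]
          by_cases hy2 : (y : ZMod ℓ) = ((0:ℤ) : ZMod ℓ) + ((1:ℕ) : ZMod ℓ)
          · rw [if_pos hy2]
            have h := F_addMul ℓ c y (-1)
            rw [show y + (-1) * (ℓ:ℤ) = y - ℓ from by ring] at h
            rw [h, hΔ]; ring
          · rw [if_neg hy2]
      have hfix : wp ℓ (Uw ℓ 0 1) c = c := by
        apply eq_of_F ℓ (by omega)
        intro x
        rw [F_wp ℓ hℓ, hU, hU, hval, hval, F_zero]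
        ring
      have h1 := keyd (Uw ℓ 0 1) hfix 1
      rw [hU, hU] at h1
      have e0 : TransMap ℓ 0 1 0 = (ℓ:ℤ) := by
        unfold TransMap; rw [if_pos rfl]; ring
      have e1 : TransMap ℓ 0 1 1 = 1 - ℓ := by
        unfold TransMap
        rw [if_neg (by
            intro h
            exact (one_ne_zero : (1:ZMod ℓ) ≠ 0) (by push_cast at h; exact h)),
          if_pos (by push_cast; ring)]
      rw [e0, e1] at h1
      have hF1 : F ℓ d (1 - ℓ) = F ℓ d 1 - Del ℓ d := by
        have h := F_addMul ℓ d 1 (-1)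
        rw [show (1:ℤ) + (-1) * (ℓ:ℤ) = 1 - ℓ from by ring] at h
        rw [h]; push_cast; ring
      have hFl : F ℓ d ((ℓ:ℕ):ℤ) = Del ℓ d := by
        have h := F_addMul ℓ d 0 1
        rw [show (0:ℤ) + 1 * (ℓ:ℤ) = ((ℓ:ℕ):ℤ) from by ring] at h
        rw [h, F_zero]; ring
      rw [hF1, hFl] at h1
      have hDd : Del ℓ d = 0 := by
        have h2 : (2:ℂ) * Del ℓ d = 0 := by linear_combination h1
        have := mul_eq_zero.mp h2
        rcases this with h | h
        · exact absurd h two_ne_zero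
        · exact h
      have hsum0 : (∑ r : ZMod ℓ, if c r = 0 then (0:ℂ) else 1) = 0 := hDd
      exact fun r => sum_ite_zero Finset.univ (fun r => c r = 0) hsum0 r (Finset.mem_univ r)
    exact hall _
  · by_cases hdvd : ((ℓ:ℤ) ∣ (b + 1 - a))
    · exfalso
      obtain ⟨m', hm'⟩ := hdvd
      have hl0 : (0:ℤ) < (ℓ:ℤ) := by omega
      have hm'pos : 0 < m' := by
        by_contra hc
        push_neg at hc
        nlinarith
      have h := F_addMul ℓ c a m'
      rw [show a + m' * (ℓ:ℤ) = b + 1 from by rw [mul_comm]; omega] at h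
      rw [hFq] at h
      have : (m' : ℂ) * Del ℓ c = 0 := by linear_combination -h
      rcases mul_eq_zero.mp this with h2 | h2
      · have : m' = 0 := by exact_mod_cast h2
        omega
      · exact hΔ h2
    · obtain ⟨w, hw⟩ := tw_big ℓ hℓ a (b+1) (by omega) (by
        intro h; exact hdvd (by convert h using 1))
      have hpne : ((b+1:ℤ) : ZMod ℓ) ≠ ((a:ℤ) : ZMod ℓ) := by
        intro h
        apply hdvd
        have : (((b+1-a : ℤ)) : ZMod ℓ) = 0 := by push_cast at h ⊢; rw [h]; ring
        exact (ZMod.intCast_zmod_eq_zero_iff_dvd _ _).mp this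
      have hval : ∀ y : ℤ, F ℓ c (tw ℓ w y) = F ℓ c y := by
        intro y
        rw [hw]
        by_cases hy : (y : ZMod ℓ) = ((a:ℤ) : ZMod ℓ)
        · rw [if_pos hy]
          have hdy : (ℓ:ℤ) ∣ (y - a) := by
            apply (ZMod.intCast_zmod_eq_zero_iff_dvd _ _).mp
            push_cast
            rw [hy]; ring
          obtain ⟨k, hk⟩ := hdy
          have h1 : y + (b + 1 - a) = (b+1) + k * ℓ := by linarith [hk]
          have h2 : y = a + k * ℓ := by linarith [hk]
          rw [h1, F_addMul, hFq, ← F_addMul, ← h2]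
        · rw [if_neg hy]
          by_cases hy2 : (y : ZMod ℓ) = ((b+1:ℤ) : ZMod ℓ)
          · rw [if_pos hy2]
            have hdy : (ℓ:ℤ) ∣ (y - (b+1)) := by
              apply (ZMod.intCast_zmod_eq_zero_iff_dvd _ _).mp
              push_cast
              push_cast at hy2
              rw [hy2]; ring
            obtain ⟨k, hk⟩ := hdy
            have h1 : y - (b + 1 - a) = a + k * ℓ := by linarith [hk]
            have h2 : y = (b+1) + k * ℓ := by linarith [hk]
            rw [h1, F_addMul, ← hFq, ← F_addMul, ← h2]
          · rw [if_neg hy2]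
      have hfix : wp ℓ w c = c := by
        apply eq_of_F ℓ (by omega)
        intro x
        rw [F_wp ℓ hℓ, hval, hval, F_zero]
        ring
      have hk := keyd w hfix
      have ea : tw ℓ w a = b + 1 := by rw [hw, if_pos rfl]; ring
      have eb : tw ℓ w (b+1) = a := by
        rw [hw, if_neg hpne, if_pos rfl]; ring
      have h1 := hk a
      have h2 := hk (b+1)
      rw [ea] at h1
      rw [eb] at h2
      have hFd : F ℓ d (b+1) = F ℓ d a := by linear_combination (h1 + h2) / 2 - h1
      have hsum0 : (∑ k ∈ Finset.Ico a (b+1), if c (k : ZMod ℓ) = 0 then (0:ℂ) else 1) = 0 := by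
        have h := F_diff ℓ d a (b+1) (by omega)
        rw [hFd] at h
        have : (∑ k ∈ Finset.Ico a (b+1), d (k : ZMod ℓ))
            = ∑ k ∈ Finset.Ico a (b+1), if c (k : ZMod ℓ) = 0 then (0:ℂ) else 1 := rfl
        rw [this] at h
        linear_combination -h
      have := sum_ite_zero (Finset.Ico a (b+1)) (fun k => c (k : ZMod ℓ) = 0) hsum0
      exact this i (by rw [← hIcc]; exact hi)
end
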